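/- arXiv:1901.09949 — 5 statements merged into one kernel-verified Lean document; each statement's English description precedes it below -/
import Mathlib

section
/- There exists an absolute constant c > 0 such that for every n ≥ 2 and every orthogonal system φ_1, …, φ_n in L²(0,1) one has ‖ max_{1 ≤ m ≤ n} | ∑_{k=1}^m φ_k | ‖_{L²(0,1)} ≤ c · (log n) · ‖ ∑_{k=1}^n φ_k ‖_{L²(0,1)}. -/
open MeasureTheory Filter Set
open scoped ENNReal NNReal

namespace MRaux

variable {α : Type*} [MeasurableSpace α] {ν : Measure α}

lemma integrable_mul2 {f g : α → ℝ} (hf : MemLp f 2 ν) (hg : MemLp g 2 ν) :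
    Integrable (fun x => f x * g x) ν := by
  rw [← memLp_one_iff_integrable]
  have h := MemLp.smul (f := g) (φ := f) (p := 2) (q := 2) (r := (1 : ℝ≥0∞)) hg hf
  exact h

lemma sq_lintegral_eq (f : α → ℝ) :
    eLpNorm f 2 ν ^ 2 = ∫⁻ x, (‖f x‖₊ : ℝ≥0∞) ^ 2 ∂ν := by
  have h := eLpNorm_nnreal_pow_eq_lintegral (μ := ν) (f := f) (p := 2) (by norm_num)
  rw [show (((2 : ℝ≥0) : ℝ)) = ((2 : ℕ) : ℝ) by norm_num] at h
  simp only [ENNReal.rpow_natCast] at h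
  simpa [enorm_eq_nnnorm] using h

lemma lintegral_sq_eq_ofReal {f : α → ℝ} (hf : MemLp f 2 ν) :
    ∫⁻ x, (‖f x‖₊ : ℝ≥0∞) ^ 2 ∂ν = ENNReal.ofReal (∫ x, f x ^ 2 ∂ν) := by
  rw [ofReal_integral_eq_lintegral_ofReal hf.integrable_sq
    (Eventually.of_forall fun x => sq_nonneg _)]
  congr 1
  funext x
  rw [← enorm_eq_nnnorm, Real.enorm_eq_ofReal_abs, ← ENNReal.ofReal_pow (abs_nonneg _), sq_abs]

lemma integral_add_sq {u v : α → ℝ} (hu : MemLp u 2 ν) (hv : MemLp v 2 ν)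
    (h : ∫ x, u x * v x ∂ν = 0) :
    ∫ x, (u x + v x) ^ 2 ∂ν = ∫ x, u x ^ 2 ∂ν + ∫ x, v x ^ 2 ∂ν := by
  have huv : Integrable (fun x => u x * v x) ν := integrable_mul2 hu hv
  have h1 : ∀ x, (u x + v x) ^ 2 = u x ^ 2 + (2 * (u x * v x) + v x ^ 2) := fun x => by ring
  simp_rw [h1]
  have h2 : Integrable (fun x => 2 * (u x * v x) + v x ^ 2) ν := by
    exact (huv.const_mul 2).add hv.integrable_sq
  rw [integral_add hu.integrable_sq h2,
    integral_add (huv.const_mul 2) hv.integrable_sq, integral_const_mul, h]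
  ring

lemma aesm_ciSup {n : ℕ} (hn : n ≠ 0) {f : Fin n → α → ℝ}
    (hf : ∀ i, AEStronglyMeasurable (f i) ν) :
    AEStronglyMeasurable (fun x => ⨆ i, f i x) ν := by
  haveI : Nonempty (Fin n) := ⟨⟨0, Nat.pos_of_ne_zero hn⟩⟩
  have h : (fun x => ⨆ i, f i x) = Finset.univ.sup' Finset.univ_nonempty f := by
    funext x
    rw [Finset.sup'_apply, Finset.sup'_univ_eq_ciSup]
  rw [h]
  exact Finset.sup'_induction (p := fun g : α → ℝ => AEStronglyMeasurable g ν)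
    Finset.univ_nonempty f (fun g hg g' hg' => hg.sup hg') fun i _ => hf i

lemma integral_sum_mul_sum {ψ : ℕ → α → ℝ} (hL2 : ∀ k, MemLp (ψ k) 2 ν)
    (horth : ∀ i j, i ≠ j → ∫ x, ψ i x * ψ j x ∂ν = 0) (s t : Finset ℕ)
    (hst : Disjoint s t) :
    ∫ x, (∑ i ∈ s, ψ i x) * (∑ j ∈ t, ψ j x) ∂ν = 0 := by
  have h1 : ∀ x, (∑ i ∈ s, ψ i x) * (∑ j ∈ t, ψ j x)
      = ∑ i ∈ s, ∑ j ∈ t, ψ i x * ψ j x := fun x => by rw [Finset.sum_mul_sum]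
  simp_rw [h1]
  rw [integral_finset_sum s (fun i _ =>
    integrable_finset_sum t (fun j _ => integrable_mul2 (hL2 i) (hL2 j)))]
  refine Finset.sum_eq_zero fun i hi => ?_
  rw [integral_finset_sum t (fun j _ => integrable_mul2 (hL2 i) (hL2 j))]
  exact Finset.sum_eq_zero fun j hj =>
    horth i j (fun h => Finset.disjoint_left.mp hst hi (h ▸ hj))

lemma le_of_sq_le_sq {X Y : ℝ≥0∞} (h : X ^ 2 ≤ Y ^ 2) : X ≤ Y := by
  have h2 : (X ^ 2) ^ ((2 : ℝ)⁻¹) ≤ (Y ^ 2) ^ ((2 : ℝ)⁻¹) :=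
    ENNReal.rpow_le_rpow h (by norm_num)
  rwa [← ENNReal.rpow_natCast X 2, ← ENNReal.rpow_natCast Y 2,
    ← ENNReal.rpow_mul, ← ENNReal.rpow_mul,
    show ((2 : ℕ) : ℝ) * (2 : ℝ)⁻¹ = 1 by norm_num,
    ENNReal.rpow_one, ENNReal.rpow_one] at h2

lemma arithNN (p : ℕ) (a b : ℝ≥0) :
    (((p : ℝ≥0) + 1) * a) ^ 2 + (a + ((p : ℝ≥0) + 1) * b) ^ 2
      ≤ ((p : ℝ≥0) + 2) ^ 2 * (a ^ 2 + b ^ 2) := by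
  rw [← NNReal.coe_le_coe]
  push_cast
  nlinarith [sq_nonneg ((a : ℝ) - (b : ℝ)), a.coe_nonneg, b.coe_nonneg,
    Nat.cast_nonneg (α := ℝ) p]

lemma arith (p : ℕ) {a b : ℝ≥0∞} (ha : a ≠ ⊤) (hb : b ≠ ⊤) :
    (((p : ℝ≥0∞) + 1) * a) ^ 2 + (a + ((p : ℝ≥0∞) + 1) * b) ^ 2
      ≤ ((p : ℝ≥0∞) + 2) ^ 2 * (a ^ 2 + b ^ 2) := by
  lift a to ℝ≥0 using ha
  lift b to ℝ≥0 using hb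
  exact_mod_cast arithNN p a b

lemma aesm_abs {f : α → ℝ} (hf : AEStronglyMeasurable f ν) :
    AEStronglyMeasurable (fun x => |f x|) ν := by
  simpa [Real.norm_eq_abs] using hf.norm

lemma sup_sq_le (u v : ℝ≥0∞) : (u ⊔ v) ^ 2 ≤ u ^ 2 + v ^ 2 := by
  rcases le_total u v with h | h
  · rw [sup_eq_right.mpr h]; exact le_add_self
  · rw [sup_eq_left.mpr h]; exact le_self_add

lemma sum_Icc_split (f : ℕ → ℝ) (a b : ℕ) (h : a ≤ b) :
    ∑ k ∈ Finset.Icc 1 b, f k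
      = (∑ k ∈ Finset.Icc 1 a, f k) + ∑ k ∈ Finset.Icc (a + 1) b, f k := by
  rw [show Finset.Icc 1 a = Finset.Ioc 0 a from Finset.Icc_add_one_left_eq_Ioc 0 a,
    show Finset.Icc 1 b = Finset.Ioc 0 b from Finset.Icc_add_one_left_eq_Ioc 0 b,
    show Finset.Icc (a + 1) b = Finset.Ioc a b from Finset.Icc_add_one_left_eq_Ioc a b]
  exact (Finset.sum_Ioc_consecutive f (Nat.zero_le a) h).symm

lemma MR_aux (p : ℕ) (ψ : ℕ → α → ℝ)
    (hL2 : ∀ k, MemLp (ψ k) 2 ν)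
    (horth : ∀ i j, i ≠ j → ∫ x, ψ i x * ψ j x ∂ν = 0) :
    eLpNorm (fun x => ⨆ m : Fin (2 ^ p), |∑ k ∈ Finset.Icc 1 (m.1 + 1), ψ k x|) 2 ν ≤
      ((p : ℝ≥0∞) + 1) * eLpNorm (fun x => ∑ k ∈ Finset.Icc 1 (2 ^ p), ψ k x) 2 ν := by
  induction p generalizing ψ with
  | zero =>
      have h0 : 0 < 2 ^ 0 := by norm_num
      have hfun : (fun x => ⨆ m : Fin (2 ^ 0), |∑ k ∈ Finset.Icc 1 (m.1 + 1), ψ k x|)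
          = fun x => ‖∑ k ∈ Finset.Icc 1 (2 ^ 0), ψ k x‖ := by
        funext x
        rw [Real.norm_eq_abs]
        haveI : Nonempty (Fin (2 ^ 0)) := ⟨⟨0, h0⟩⟩
        apply le_antisymm
        · refine ciSup_le fun m => ?_
          have hm : m.1 = 0 := by have := m.2; simpa using this
          rw [hm]
          simp
        · have := le_ciSup (Set.Finite.bddAbove (Set.finite_range
            (fun m : Fin (2 ^ 0) => |∑ k ∈ Finset.Icc 1 (m.1 + 1), ψ k x|)))
            (⟨0, h0⟩ : Fin (2 ^ 0))
          simpa using this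
      rw [hfun, eLpNorm_norm]
      simp
  | succ p ih =>
      have hNpos : 0 < 2 ^ p := pow_pos two_pos p
      have hNN : 2 ^ (p + 1) = 2 ^ p + 2 ^ p := by ring
      have hmem : ∀ s : Finset ℕ, MemLp (fun x => ∑ k ∈ s, ψ k x) 2 ν :=
        fun s => memLp_finset_sum s fun i _ => hL2 i
      have hmem' : ∀ s : Finset ℕ, MemLp (fun x => ∑ k ∈ s, ψ (2 ^ p + k) x) 2 ν :=
        fun s => memLp_finset_sum s fun i _ => hL2 _
      -- abbreviations
      have hu2 : MemLp (fun x => ∑ k ∈ Finset.Icc 1 (2 ^ p), ψ k x) 2 ν := hmem _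
      have hv2 : MemLp (fun x => ∑ k ∈ Finset.Icc (2 ^ p + 1) (2 ^ p + 2 ^ p), ψ k x) 2 ν :=
        hmem _
      have hw2 : MemLp (fun x => ∑ k ∈ Finset.Icc 1 (2 ^ (p + 1)), ψ k x) 2 ν := hmem _
      have hBdd : ∀ (n : ℕ) (g : Fin n → ℝ), BddAbove (Set.range g) :=
        fun n g => Set.Finite.bddAbove (Set.finite_range g)
      -- measurability
      have hAe : AEStronglyMeasurable
          (fun x => ⨆ m : Fin (2 ^ p), |∑ k ∈ Finset.Icc 1 (m.1 + 1), ψ k x|) ν :=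
        aesm_ciSup hNpos.ne' fun i => aesm_abs (hmem (Finset.Icc 1 (i.1 + 1))).aestronglyMeasurable
      have hBe : AEStronglyMeasurable
          (fun x => ⨆ m : Fin (2 ^ p), |∑ k ∈ Finset.Icc 1 (m.1 + 1), ψ (2 ^ p + k) x|) ν :=
        aesm_ciSup hNpos.ne' fun i => aesm_abs (hmem' (Finset.Icc 1 (i.1 + 1))).aestronglyMeasurable
      have hCe : AEStronglyMeasurable
          (fun x => |∑ k ∈ Finset.Icc 1 (2 ^ p), ψ k x|
            + ⨆ m : Fin (2 ^ p), |∑ k ∈ Finset.Icc 1 (m.1 + 1), ψ (2 ^ p + k) x|) ν := by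
        exact (aesm_abs hu2.aestronglyMeasurable).add hBe
      -- induction hypotheses
      have ihA := ih ψ hL2 horth
      have ihB := ih (fun k => ψ (2 ^ p + k)) (fun k => hL2 _)
        (fun i j hij => horth _ _ (by omega))
      have hvv : (fun x => ∑ k ∈ Finset.Icc 1 (2 ^ p), ψ (2 ^ p + k) x)
          = fun x => ∑ k ∈ Finset.Icc (2 ^ p + 1) (2 ^ p + 2 ^ p), ψ k x := by
        funext x
        rw [show Finset.Icc (2 ^ p + 1) (2 ^ p + 2 ^ p)
            = (Finset.Icc 1 (2 ^ p)).map (addLeftEmbedding (2 ^ p)) from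
          (Finset.map_add_left_Icc 1 (2 ^ p) (2 ^ p)).symm, Finset.sum_map]
        simp [addLeftEmbedding_apply]
      rw [hvv] at ihB
      -- orthogonality of the two halves
      have huv0 : ∫ x, (∑ k ∈ Finset.Icc 1 (2 ^ p), ψ k x)
          * (∑ k ∈ Finset.Icc (2 ^ p + 1) (2 ^ p + 2 ^ p), ψ k x) ∂ν = 0 := by
        refine integral_sum_mul_sum hL2 horth _ _ (Finset.disjoint_left.mpr ?_)
        intro a ha hb
        simp only [Finset.mem_Icc] at ha hb
        omega
      have hw_eq : (fun x => ∑ k ∈ Finset.Icc 1 (2 ^ (p + 1)), ψ k x)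
          = fun x => (∑ k ∈ Finset.Icc 1 (2 ^ p), ψ k x)
            + ∑ k ∈ Finset.Icc (2 ^ p + 1) (2 ^ p + 2 ^ p), ψ k x := by
        funext x
        rw [hNN]
        exact sum_Icc_split (fun k => ψ k x) (2 ^ p) (2 ^ p + 2 ^ p) (by omega)
      have hw2' : MemLp (fun x => (∑ k ∈ Finset.Icc 1 (2 ^ p), ψ k x)
          + ∑ k ∈ Finset.Icc (2 ^ p + 1) (2 ^ p + 2 ^ p), ψ k x) 2 ν := by
        exact hu2.add hv2
      have hpyth : eLpNorm (fun x => ∑ k ∈ Finset.Icc 1 (2 ^ p), ψ k x) 2 ν ^ 2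
            + eLpNorm (fun x => ∑ k ∈ Finset.Icc (2 ^ p + 1) (2 ^ p + 2 ^ p), ψ k x) 2 ν ^ 2
          = eLpNorm (fun x => ∑ k ∈ Finset.Icc 1 (2 ^ (p + 1)), ψ k x) 2 ν ^ 2 := by
        rw [hw_eq, sq_lintegral_eq, sq_lintegral_eq, sq_lintegral_eq,
          lintegral_sq_eq_ofReal hu2, lintegral_sq_eq_ofReal hv2,
          lintegral_sq_eq_ofReal hw2',
          ← ENNReal.ofReal_add (integral_nonneg fun x => sq_nonneg _)
            (integral_nonneg fun x => sq_nonneg _),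
          integral_add_sq hu2 hv2 huv0]
      have key : ∀ x, (⨆ m : Fin (2 ^ (p + 1)), |∑ k ∈ Finset.Icc 1 (m.1 + 1), ψ k x|)
          ≤ (⨆ m : Fin (2 ^ p), |∑ k ∈ Finset.Icc 1 (m.1 + 1), ψ k x|)
            ⊔ (|∑ k ∈ Finset.Icc 1 (2 ^ p), ψ k x|
              + ⨆ m : Fin (2 ^ p), |∑ k ∈ Finset.Icc 1 (m.1 + 1), ψ (2 ^ p + k) x|) := by
        intro x
        haveI : Nonempty (Fin (2 ^ (p + 1))) := ⟨⟨0, pow_pos two_pos _⟩⟩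
        refine ciSup_le fun m => ?_
        have hm2 : m.1 < 2 ^ p + 2 ^ p := by rw [← hNN]; exact m.2
        rcases le_or_gt (m.1 + 1) (2 ^ p) with hm | hm
        · exact le_sup_of_le_left (le_ciSup (hBdd (2 ^ p)
            (fun m' : Fin (2 ^ p) => |∑ k ∈ Finset.Icc 1 (m'.1 + 1), ψ k x|))
            (⟨m.1, by omega⟩ : Fin (2 ^ p)))
        · refine le_sup_of_le_right ?_
          have hsplit := sum_Icc_split (fun k => ψ k x) (2 ^ p) (m.1 + 1) (by omega)
          have hblock : ∑ k ∈ Finset.Icc (2 ^ p + 1) (m.1 + 1), ψ k x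
              = ∑ k ∈ Finset.Icc 1 (m.1 + 1 - 2 ^ p), ψ (2 ^ p + k) x := by
            rw [show Finset.Icc (2 ^ p + 1) (m.1 + 1)
                = (Finset.Icc 1 (m.1 + 1 - 2 ^ p)).map (addLeftEmbedding (2 ^ p)) by
              rw [Finset.map_add_left_Icc]
              congr 1
              omega, Finset.sum_map]
            simp [addLeftEmbedding_apply]
          have hBle : |∑ k ∈ Finset.Icc 1 (m.1 + 1 - 2 ^ p), ψ (2 ^ p + k) x|
              ≤ ⨆ m' : Fin (2 ^ p), |∑ k ∈ Finset.Icc 1 (m'.1 + 1), ψ (2 ^ p + k) x| := by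
            have h := le_ciSup (hBdd (2 ^ p)
              (fun m' : Fin (2 ^ p) => |∑ k ∈ Finset.Icc 1 (m'.1 + 1), ψ (2 ^ p + k) x|))
              (⟨m.1 - 2 ^ p, by omega⟩ : Fin (2 ^ p))
            have hr : m.1 - 2 ^ p + 1 = m.1 + 1 - 2 ^ p := by omega
            rw [hr] at h
            exact h
          calc |∑ k ∈ Finset.Icc 1 (m.1 + 1), ψ k x|
              = |(∑ k ∈ Finset.Icc 1 (2 ^ p), ψ k x)
                  + ∑ k ∈ Finset.Icc (2 ^ p + 1) (m.1 + 1), ψ k x| := by rw [hsplit]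
            _ ≤ |∑ k ∈ Finset.Icc 1 (2 ^ p), ψ k x|
                  + |∑ k ∈ Finset.Icc (2 ^ p + 1) (m.1 + 1), ψ k x| := abs_add_le _ _
            _ ≤ _ := add_le_add_right (by rw [hblock]; exact hBle) _
      have hnn : ∀ x, 0 ≤ ⨆ m : Fin (2 ^ (p + 1)), |∑ k ∈ Finset.Icc 1 (m.1 + 1), ψ k x| := by
        intro x
        have h := le_ciSup (hBdd (2 ^ (p + 1))
          (fun m : Fin (2 ^ (p + 1)) => |∑ k ∈ Finset.Icc 1 (m.1 + 1), ψ k x|))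
          (⟨0, pow_pos two_pos _⟩ : Fin (2 ^ (p + 1)))
        exact le_trans (abs_nonneg _) h
      have step1 : eLpNorm (fun x => ⨆ m : Fin (2 ^ (p + 1)), |∑ k ∈ Finset.Icc 1 (m.1 + 1), ψ k x|) 2 ν
          ≤ eLpNorm (fun x => (⨆ m : Fin (2 ^ p), |∑ k ∈ Finset.Icc 1 (m.1 + 1), ψ k x|)
            ⊔ (|∑ k ∈ Finset.Icc 1 (2 ^ p), ψ k x|
              + ⨆ m : Fin (2 ^ p), |∑ k ∈ Finset.Icc 1 (m.1 + 1), ψ (2 ^ p + k) x|)) 2 ν := by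
        refine eLpNorm_mono_real fun x => ?_
        rw [Real.norm_eq_abs, abs_of_nonneg (hnn x)]
        exact key x
      have step2 : eLpNorm (fun x => (⨆ m : Fin (2 ^ p), |∑ k ∈ Finset.Icc 1 (m.1 + 1), ψ k x|)
            ⊔ (|∑ k ∈ Finset.Icc 1 (2 ^ p), ψ k x|
              + ⨆ m : Fin (2 ^ p), |∑ k ∈ Finset.Icc 1 (m.1 + 1), ψ (2 ^ p + k) x|)) 2 ν ^ 2
          ≤ eLpNorm (fun x => ⨆ m : Fin (2 ^ p), |∑ k ∈ Finset.Icc 1 (m.1 + 1), ψ k x|) 2 ν ^ 2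
            + eLpNorm (fun x => |∑ k ∈ Finset.Icc 1 (2 ^ p), ψ k x|
            + ⨆ m : Fin (2 ^ p), |∑ k ∈ Finset.Icc 1 (m.1 + 1), ψ (2 ^ p + k) x|) 2 ν ^ 2 := by
        rw [sq_lintegral_eq, sq_lintegral_eq, sq_lintegral_eq,
          ← lintegral_add_left' (hAe.nnnorm.aemeasurable.coe_nnreal_ennreal.pow_const 2)]
        refine lintegral_mono fun x => ?_
        have h1 : ‖((fun x => ⨆ m : Fin (2 ^ p), |∑ k ∈ Finset.Icc 1 (m.1 + 1), ψ k x|) x) ⊔ ((fun x => |∑ k ∈ Finset.Icc 1 (2 ^ p), ψ k x|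
            + ⨆ m : Fin (2 ^ p), |∑ k ∈ Finset.Icc 1 (m.1 + 1), ψ (2 ^ p + k) x|) x)‖₊
            ≤ ‖(fun x => ⨆ m : Fin (2 ^ p), |∑ k ∈ Finset.Icc 1 (m.1 + 1), ψ k x|) x‖₊ ⊔ ‖(fun x => |∑ k ∈ Finset.Icc 1 (2 ^ p), ψ k x|
            + ⨆ m : Fin (2 ^ p), |∑ k ∈ Finset.Icc 1 (m.1 + 1), ψ (2 ^ p + k) x|) x‖₊ := by
          rw [← NNReal.coe_le_coe, NNReal.coe_max, coe_nnnorm, coe_nnnorm, coe_nnnorm,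
            Real.norm_eq_abs, Real.norm_eq_abs, Real.norm_eq_abs]
          exact abs_max_le_max_abs_abs
        calc (‖((fun x => ⨆ m : Fin (2 ^ p), |∑ k ∈ Finset.Icc 1 (m.1 + 1), ψ k x|) x) ⊔ ((fun x => |∑ k ∈ Finset.Icc 1 (2 ^ p), ψ k x|
            + ⨆ m : Fin (2 ^ p), |∑ k ∈ Finset.Icc 1 (m.1 + 1), ψ (2 ^ p + k) x|) x)‖₊ : ℝ≥0∞) ^ 2
            ≤ ((‖(fun x => ⨆ m : Fin (2 ^ p), |∑ k ∈ Finset.Icc 1 (m.1 + 1), ψ k x|) x‖₊ ⊔ ‖(fun x => |∑ k ∈ Finset.Icc 1 (2 ^ p), ψ k x|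
            + ⨆ m : Fin (2 ^ p), |∑ k ∈ Finset.Icc 1 (m.1 + 1), ψ (2 ^ p + k) x|) x‖₊ : ℝ≥0) : ℝ≥0∞) ^ 2 := by
              exact pow_le_pow_left₀ zero_le (ENNReal.coe_le_coe.mpr h1) 2
          _ = ((‖(fun x => ⨆ m : Fin (2 ^ p), |∑ k ∈ Finset.Icc 1 (m.1 + 1), ψ k x|) x‖₊ : ℝ≥0∞) ⊔ (‖(fun x => |∑ k ∈ Finset.Icc 1 (2 ^ p), ψ k x|
            + ⨆ m : Fin (2 ^ p), |∑ k ∈ Finset.Icc 1 (m.1 + 1), ψ (2 ^ p + k) x|) x‖₊ : ℝ≥0∞)) ^ 2 := by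
              norm_cast
          _ ≤ _ := sup_sq_le _ _
      have step3 : eLpNorm (fun x => |∑ k ∈ Finset.Icc 1 (2 ^ p), ψ k x|
            + ⨆ m : Fin (2 ^ p), |∑ k ∈ Finset.Icc 1 (m.1 + 1), ψ (2 ^ p + k) x|) 2 ν
          ≤ eLpNorm (fun x => ∑ k ∈ Finset.Icc 1 (2 ^ p), ψ k x) 2 ν + eLpNorm (fun x => ⨆ m : Fin (2 ^ p), |∑ k ∈ Finset.Icc 1 (m.1 + 1), ψ (2 ^ p + k) x|) 2 ν := by
        have habs : eLpNorm (fun x => |∑ k ∈ Finset.Icc 1 (2 ^ p), ψ k x|) 2 ν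
            = eLpNorm (fun x => ∑ k ∈ Finset.Icc 1 (2 ^ p), ψ k x) 2 ν := by
          have hre : (fun x => |∑ k ∈ Finset.Icc 1 (2 ^ p), ψ k x|)
              = fun x => ‖∑ k ∈ Finset.Icc 1 (2 ^ p), ψ k x‖ := rfl
          rw [hre]
          exact eLpNorm_norm (fun x => ∑ k ∈ Finset.Icc 1 (2 ^ p), ψ k x)
        have h := eLpNorm_add_le (aesm_abs hu2.aestronglyMeasurable) hBe one_le_two
        rw [habs] at h
        exact h
      have hsq : eLpNorm (fun x => ⨆ m : Fin (2 ^ (p + 1)), |∑ k ∈ Finset.Icc 1 (m.1 + 1), ψ k x|) 2 ν ^ 2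
          ≤ (((p : ℝ≥0∞) + 2) * eLpNorm (fun x => ∑ k ∈ Finset.Icc 1 (2 ^ (p + 1)), ψ k x) 2 ν) ^ 2 := by
        calc eLpNorm (fun x => ⨆ m : Fin (2 ^ (p + 1)), |∑ k ∈ Finset.Icc 1 (m.1 + 1), ψ k x|) 2 ν ^ 2
            ≤ eLpNorm (fun x => (⨆ m : Fin (2 ^ p), |∑ k ∈ Finset.Icc 1 (m.1 + 1), ψ k x|)
            ⊔ (|∑ k ∈ Finset.Icc 1 (2 ^ p), ψ k x|
              + ⨆ m : Fin (2 ^ p), |∑ k ∈ Finset.Icc 1 (m.1 + 1), ψ (2 ^ p + k) x|)) 2 ν ^ 2 := pow_le_pow_left₀ zero_le step1 2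
          _ ≤ eLpNorm (fun x => ⨆ m : Fin (2 ^ p), |∑ k ∈ Finset.Icc 1 (m.1 + 1), ψ k x|) 2 ν ^ 2
              + eLpNorm (fun x => |∑ k ∈ Finset.Icc 1 (2 ^ p), ψ k x|
            + ⨆ m : Fin (2 ^ p), |∑ k ∈ Finset.Icc 1 (m.1 + 1), ψ (2 ^ p + k) x|) 2 ν ^ 2 := step2
          _ ≤ (((p : ℝ≥0∞) + 1) * eLpNorm (fun x => ∑ k ∈ Finset.Icc 1 (2 ^ p), ψ k x) 2 ν) ^ 2
              + (eLpNorm (fun x => ∑ k ∈ Finset.Icc 1 (2 ^ p), ψ k x) 2 ν + ((p : ℝ≥0∞) + 1) * eLpNorm (fun x => ∑ k ∈ Finset.Icc (2 ^ p + 1) (2 ^ p + 2 ^ p), ψ k x) 2 ν) ^ 2 := by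
              refine add_le_add (pow_le_pow_left₀ zero_le ihA 2)
                (pow_le_pow_left₀ zero_le (step3.trans ?_) 2)
              exact add_le_add_right ihB _
          _ ≤ ((p : ℝ≥0∞) + 2) ^ 2
              * (eLpNorm (fun x => ∑ k ∈ Finset.Icc 1 (2 ^ p), ψ k x) 2 ν ^ 2 + eLpNorm (fun x => ∑ k ∈ Finset.Icc (2 ^ p + 1) (2 ^ p + 2 ^ p), ψ k x) 2 ν ^ 2) :=
              arith p hu2.eLpNorm_ne_top hv2.eLpNorm_ne_top
          _ = ((p : ℝ≥0∞) + 2) ^ 2 * eLpNorm (fun x => ∑ k ∈ Finset.Icc 1 (2 ^ (p + 1)), ψ k x) 2 ν ^ 2 := by rw [hpyth]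
          _ = (((p : ℝ≥0∞) + 2) * eLpNorm (fun x => ∑ k ∈ Finset.Icc 1 (2 ^ (p + 1)), ψ k x) 2 ν) ^ 2 := (mul_pow _ _ 2).symm
      have hco : ((p + 1 : ℕ) : ℝ≥0∞) + 1 = (p : ℝ≥0∞) + 2 := by push_cast; ring
      rw [hco]
      exact le_of_sq_le_sq hsq

end MRaux

/-- **Menshov–Rademacher inequality.** There is an absolute constant `c > 0` such that for
every `n ≥ 2` and every orthogonal system `φ_1, …, φ_n` in `L²(0,1)`,
`‖max_{1 ≤ m ≤ n} |∑_{k=1}^m φ_k|‖₂ ≤ c ⬝ log₂ n ⬝ ‖∑_{k=1}^n φ_k‖₂`. -/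
theorem menshov_rademacher_inequality :
    ∃ c : ℝ, 0 < c ∧ ∀ n : ℕ, 2 ≤ n → ∀ φ : ℕ → ℝ → ℝ,
      (∀ k, 1 ≤ k → k ≤ n → MemLp (φ k) 2 (volume.restrict (Set.Ioo (0:ℝ) 1))) →
      (∀ i j, 1 ≤ i → i ≤ n → 1 ≤ j → j ≤ n → i ≠ j →
        ∫ x in Set.Ioo (0:ℝ) 1, φ i x * φ j x = 0) →
      eLpNorm (fun x => ⨆ m : Fin n, |∑ k ∈ Finset.Icc 1 (m.1 + 1), φ k x|) 2
          (volume.restrict (Set.Ioo (0:ℝ) 1)) ≤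
        ENNReal.ofReal (c * Real.logb 2 n) *
          eLpNorm (fun x => ∑ k ∈ Finset.Icc 1 n, φ k x) 2
            (volume.restrict (Set.Ioo (0:ℝ) 1)) := by
  refine ⟨3, by norm_num, ?_⟩
  intro n hn φ hL2 horth
  set ν := volume.restrict (Set.Ioo (0:ℝ) 1) with hν
  set ψ : ℕ → ℝ → ℝ := fun k x => if 1 ≤ k ∧ k ≤ n then φ k x else 0 with hψ
  have hψL2 : ∀ k, MemLp (ψ k) 2 ν := by
    intro k
    by_cases h : 1 ≤ k ∧ k ≤ n
    · have : ψ k = φ k := by funext x; simp [hψ, h]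
      rw [this]; exact hL2 k h.1 h.2
    · have : ψ k = 0 := by funext x; simp [hψ, h]
      rw [this]; exact MemLp.zero
  have hψorth : ∀ i j, i ≠ j → ∫ x, ψ i x * ψ j x ∂ν = 0 := by
    intro i j hij
    by_cases hi : 1 ≤ i ∧ i ≤ n
    · by_cases hj : 1 ≤ j ∧ j ≤ n
      · simpa [hψ, hi, hj] using horth i j hi.1 hi.2 hj.1 hj.2 hij
      · simp [hψ, hj]
    · simp [hψ, hi]
  set p := Nat.clog 2 n with hp
  have hnp : n ≤ 2 ^ p := Nat.le_pow_clog one_lt_two n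
  have hppos : 0 < p := Nat.clog_pos one_lt_two hn
  have hLHS : ∀ x, (⨆ m : Fin n, |∑ k ∈ Finset.Icc 1 (m.1 + 1), φ k x|)
      ≤ ⨆ m : Fin (2 ^ p), |∑ k ∈ Finset.Icc 1 (m.1 + 1), ψ k x| := by
    intro x
    haveI : Nonempty (Fin n) := ⟨⟨0, by omega⟩⟩
    refine ciSup_le fun m => ?_
    have hm := m.2
    have hsum : ∑ k ∈ Finset.Icc 1 (m.1 + 1), φ k x
        = ∑ k ∈ Finset.Icc 1 (m.1 + 1), ψ k x := by
      refine Finset.sum_congr rfl fun k hk => ?_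
      simp only [Finset.mem_Icc] at hk
      simp only [hψ]
      rw [if_pos ⟨hk.1, by omega⟩]
    rw [hsum]
    exact le_ciSup (Set.Finite.bddAbove (Set.finite_range
      (fun m' : Fin (2 ^ p) => |∑ k ∈ Finset.Icc 1 (m'.1 + 1), ψ k x|)))
      (⟨m.1, by omega⟩ : Fin (2 ^ p))
  have hRHS : (fun x => ∑ k ∈ Finset.Icc 1 (2 ^ p), ψ k x)
      = fun x => ∑ k ∈ Finset.Icc 1 n, φ k x := by
    funext x
    have h1 : ∑ k ∈ Finset.Icc 1 (2 ^ p), ψ k x = ∑ k ∈ Finset.Icc 1 n, ψ k x :=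
      (Finset.sum_subset (Finset.Icc_subset_Icc_right hnp) (fun k hk hk' => by
        simp only [Finset.mem_Icc] at hk hk'
        simp only [hψ]
        rw [if_neg (by omega)])).symm
    have h2 : ∑ k ∈ Finset.Icc 1 n, ψ k x = ∑ k ∈ Finset.Icc 1 n, φ k x :=
      Finset.sum_congr rfl fun k hk => by
        simp only [Finset.mem_Icc] at hk
        simp [hψ, hk.1, hk.2]
    rw [h1, h2]
  have hmain := MRaux.MR_aux (ν := ν) p ψ hψL2 hψorth
  rw [hRHS] at hmain
  have hstep : eLpNorm (fun x => ⨆ m : Fin n, |∑ k ∈ Finset.Icc 1 (m.1 + 1), φ k x|) 2 ν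
      ≤ eLpNorm (fun x => ⨆ m : Fin (2 ^ p), |∑ k ∈ Finset.Icc 1 (m.1 + 1), ψ k x|) 2 ν := by
    refine eLpNorm_mono_real fun x => ?_
    rw [Real.norm_eq_abs]
    have h0 : 0 ≤ ⨆ m : Fin n, |∑ k ∈ Finset.Icc 1 (m.1 + 1), φ k x| := by
      haveI : Nonempty (Fin n) := ⟨⟨0, by omega⟩⟩
      exact le_trans (abs_nonneg _) (le_ciSup (Set.Finite.bddAbove (Set.finite_range
        (fun m' : Fin n => |∑ k ∈ Finset.Icc 1 (m'.1 + 1), φ k x|)))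
        (⟨0, by omega⟩ : Fin n))
    rw [abs_of_nonneg h0]
    exact hLHS x
  have hcoef : ((p : ℝ≥0∞) + 1) ≤ ENNReal.ofReal (3 * Real.logb 2 n) := by
    have hn0 : (0 : ℝ) < n := by positivity
    have hlog1 : (1 : ℝ) ≤ Real.logb 2 n := by
      rw [Real.le_logb_iff_rpow_le one_lt_two hn0]
      rw [Real.rpow_one]
      exact_mod_cast hn
    have hplog : (p : ℝ) ≤ Real.logb 2 n + 1 := by
      have h2 : 2 ^ (p - 1) < n := Nat.pow_pred_clog_lt_self one_lt_two hn
      have h3 : ((p : ℝ) - 1) < Real.logb 2 n := by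
        have h4 : Real.logb 2 ((2 : ℝ) ^ (p - 1 : ℕ)) < Real.logb 2 n := by
          refine Real.logb_lt_logb one_lt_two (by positivity) ?_
          exact_mod_cast h2
        rw [Real.logb_pow, Real.logb_self_eq_one (b := 2) (by norm_num)] at h4
        have h5 : ((p - 1 : ℕ) : ℝ) = (p : ℝ) - 1 := by
          rw [Nat.cast_sub hppos]; norm_num
        rw [h5] at h4
        linarith [h4]
      linarith
    have h31 : (p : ℝ) + 1 ≤ 3 * Real.logb 2 n := by linarith
    calc ((p : ℝ≥0∞) + 1) = ENNReal.ofReal ((p : ℝ) + 1) := by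
          rw [ENNReal.ofReal_add (by positivity) zero_le_one]
          simp [ENNReal.ofReal_natCast]
      _ ≤ ENNReal.ofReal (3 * Real.logb 2 n) := ENNReal.ofReal_le_ofReal h31
  exact hstep.trans (hmain.trans (mul_le_mul_left hcoef _))
end

section
/- Let {φ_n} ⊂ L²(0,1) be an orthonormal system, let ω(n) be a sequence of positive numbers increasing to ∞, and let n_1 < n_2 < … be an increasing sequence of indices with ω(n_k) ≥ k for all k. If a sequence of real coefficients {a_j} satisfies ∑_{j=1}^∞ a_j² ω(j) < ∞, then the partial sums ∑_{j=1}^{n_k} a_j φ_j(x) converge for almost every x ∈ (0,1) as k → ∞. -/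
open MeasureTheory Filter Set

private lemma ks_abs_le (t u : ℝ) (ht : 0 < t) : |u| ≤ (t * u^2 + t⁻¹)/2 := by
  have h4 : (t * u ^ 2 + t⁻¹) / 2 = (t^2 * u^2 + 1)/(2*t) := by
    field_simp
  rw [h4, le_div_iff₀ (by positivity)]
  have h5 : t^2 * |u|^2 = t^2 * u^2 := by rw [sq_abs]
  nlinarith [sq_nonneg (t*|u| - 1), h5, abs_nonneg u]

private lemma ks_int_mul (φ : ℕ → ℝ → ℝ)
    (hmem : ∀ n, MemLp (φ n) 2 (volume.restrict (Set.Ioo (0:ℝ) 1)))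
    (i j : ℕ) :
    Integrable (fun x => φ i x * φ j x) (volume.restrict (Set.Ioo (0:ℝ) 1)) := by
  have h := (hmem j).smul (hmem i) (r := 1)
  rw [memLp_one_iff_integrable] at h
  exact h

private lemma ks_integral_sq (φ : ℕ → ℝ → ℝ)
    (hmem : ∀ n, MemLp (φ n) 2 (volume.restrict (Set.Ioo (0:ℝ) 1)))
    (horth : ∀ i j, ∫ x in Set.Ioo (0:ℝ) 1, φ i x * φ j x = if i = j then 1 else 0)
    (a : ℕ → ℝ) (s : Finset ℕ) :
    ∫ x in Set.Ioo (0:ℝ) 1, (∑ j ∈ s, a j * φ j x)^2 = ∑ j ∈ s, (a j)^2 := by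
  have expand : ∀ x : ℝ, (∑ j ∈ s, a j * φ j x)^2
      = ∑ i ∈ s, ∑ j ∈ s, (a i * a j) * (φ i x * φ j x) := by
    intro x
    rw [sq, Finset.sum_mul_sum]
    exact Finset.sum_congr rfl fun i _ => Finset.sum_congr rfl fun j _ => by ring
  simp_rw [expand]
  rw [integral_finset_sum _ (fun i _ => integrable_finset_sum _
    (fun j _ => ((ks_int_mul φ hmem i j).const_mul _)))]
  have step : ∀ i ∈ s, ∫ x in Set.Ioo (0:ℝ) 1, ∑ j ∈ s, (a i * a j) * (φ i x * φ j x)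
      = (a i)^2 := by
    intro i hi
    rw [integral_finset_sum _ (fun j _ => ((ks_int_mul φ hmem i j).const_mul _))]
    have : ∀ j ∈ s, ∫ x in Set.Ioo (0:ℝ) 1, (a i * a j) * (φ i x * φ j x)
        = (a i * a j) * (if i = j then 1 else 0) := by
      intro j _
      rw [integral_const_mul, horth]
    rw [Finset.sum_congr rfl this]
    simp only [mul_ite, mul_one, mul_zero]
    rw [Finset.sum_ite_eq s i (fun j => a i * a j)]
    simp [hi, sq]
  exact Finset.sum_congr rfl step

/-- If nonnegative functions have uniformly bounded partial sums of integrals,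
then a.e. the pointwise series is summable. -/
private lemma ks_ae_summable (μ : Measure ℝ) (f : ℕ → ℝ → ℝ)
    (hmeas : ∀ k, AEMeasurable (f k) μ) (hnn : ∀ k x, 0 ≤ f k x)
    (hint : ∀ k, Integrable (f k) μ)
    (B : ℝ) (hB : ∀ K, ∑ k ∈ Finset.range K, ∫ x, f k x ∂μ ≤ B) :
    ∀ᵐ x ∂μ, Summable (fun k => f k x) := by
  have h0 : ∀ k, 0 ≤ ∫ x, f k x ∂μ := fun k => integral_nonneg (hnn k)
  have hs : Summable (fun k => ∫ x, f k x ∂μ) := summable_of_sum_range_le h0 hB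
  have key : ∫⁻ x, ∑' k, ENNReal.ofReal (f k x) ∂μ < ⊤ := by
    rw [lintegral_tsum (fun k => (hmeas k).ennreal_ofReal)]
    have heq : ∀ k, ∫⁻ x, ENNReal.ofReal (f k x) ∂μ = ENNReal.ofReal (∫ x, f k x ∂μ) :=
      fun k => (ofReal_integral_eq_lintegral_ofReal (hint k)
        (Eventually.of_forall (hnn k))).symm
    simp_rw [heq]
    rw [← ENNReal.ofReal_tsum_of_nonneg h0 hs]
    exact ENNReal.ofReal_lt_top
  have hae := ae_lt_top' (AEMeasurable.ennreal_tsum fun k => (hmeas k).ennreal_ofReal) key.ne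
  filter_upwards [hae] with x hx
  have hsum := ENNReal.summable_toReal hx.ne
  refine hsum.congr fun k => ?_
  rw [ENNReal.toReal_ofReal (hnn k x)]

set_option maxHeartbeats 1000000 in
/-- **Kaczmarz–Steinhaus lemma.** Let `{φ_n}` be an orthonormal system in `L²(0,1)`,
`ω(n) ↗ ∞` positive, and let `n_0 < n_1 < …` be an increasing sequence of indices with
`ω(n_k) ≥ k`. If `∑ a_j² ω(j) < ∞`, then the partial sums `∑_{j < n_k} a_j φ_j(x)` converge
for a.e. `x ∈ (0,1)` as `k → ∞`. -/
theorem kaczmarz_steinhaus_subsequence_convergence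
    (φ : ℕ → ℝ → ℝ)
    (hmem : ∀ n, MemLp (φ n) 2 (volume.restrict (Set.Ioo (0:ℝ) 1)))
    (horth : ∀ i j, ∫ x in Set.Ioo (0:ℝ) 1, φ i x * φ j x = if i = j then 1 else 0)
    (ω : ℕ → ℝ) (hωpos : ∀ n, 0 < ω n) (hωmono : Monotone ω)
    (hωtop : Tendsto ω atTop atTop)
    (nk : ℕ → ℕ) (hnk : StrictMono nk) (hωnk : ∀ k : ℕ, (k : ℝ) ≤ ω (nk k))
    (a : ℕ → ℝ) (ha : Summable (fun j => a j ^ 2 * ω j)) :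
    ∀ᵐ x ∂(volume.restrict (Set.Ioo (0:ℝ) 1)),
      ∃ L : ℝ, Tendsto (fun k => ∑ j ∈ Finset.range (nk k), a j * φ j x)
        atTop (nhds L) := by
  classical
  set μ := volume.restrict (Set.Ioo (0:ℝ) 1) with hμdef
  haveI : IsProbabilityMeasure μ := ⟨by
    rw [hμdef, Measure.restrict_apply_univ, Real.volume_Ioo]; norm_num⟩
  -- notation
  set P : ℕ → ℕ → ℝ → ℝ := fun M N x => ∑ j ∈ Finset.Ico M N, a j * φ j x with hPdef
  set C := ∑' j, a j ^ 2 * ω j with hCdef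
  have haj_nonneg : ∀ j, 0 ≤ a j ^ 2 * ω j := fun j => mul_nonneg (sq_nonneg _) (hωpos j).le
  have hC_nonneg : 0 ≤ C := tsum_nonneg haj_nonneg
  -- basic properties of P
  have hP2 : ∀ M N : ℕ, MemLp (P M N) 2 μ := fun M N =>
    memLp_finset_sum _ (fun j _ => (hmem j).const_mul (a j))
  have hPsq_int : ∀ M N : ℕ, Integrable (fun x => P M N x ^ 2) μ := fun M N =>
    (hP2 M N).integrable_sq
  have hP_int : ∀ M N : ℕ, Integrable (P M N) μ := fun M N =>
    (hP2 M N).integrable (by norm_num)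
  have hPmeas : ∀ M N : ℕ, AEMeasurable (P M N) μ := fun M N =>
    (hP2 M N).aestronglyMeasurable.aemeasurable
  have hPsq : ∀ M N : ℕ, ∫ x, P M N x ^ 2 ∂μ = ∑ j ∈ Finset.Ico M N, a j ^ 2 :=
    fun M N => ks_integral_sq φ hmem horth a _
  -- the block sums c m
  set c : ℕ → ℝ := fun m => ∑ j ∈ Finset.Ico (nk (m^2)) (nk ((m+1)^2)), a j ^ 2 * ω j
    with hcdef
  have hc_nonneg : ∀ m, 0 ≤ c m := fun m => Finset.sum_nonneg fun j _ => haj_nonneg j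
  have hc_partial : ∀ M : ℕ, ∑ m ∈ Finset.range M, c m ≤ C := by
    intro M
    have hrw : ∑ m ∈ Finset.range M, c m
        = ∑ j ∈ Finset.Ico (nk 0) (nk (M^2)), a j ^ 2 * ω j := by
      induction M with
      | zero => simp
      | succ M ih =>
        rw [Finset.sum_range_succ, ih,
          Finset.sum_Ico_consecutive _ (hnk.monotone (Nat.zero_le _))
            (hnk.monotone (Nat.pow_le_pow_left (Nat.le_succ M) 2))]
    rw [hrw]
    exact Summable.sum_le_tsum _ (fun j _ => haj_nonneg j) ha
  -- key L² bound on blocks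
  have hblock : ∀ m : ℕ, 1 ≤ m → ∀ N : ℕ, N ≤ nk ((m+1)^2) →
      ∫ x, P (nk (m^2)) N x ^ 2 ∂μ ≤ ((m:ℝ)^2)⁻¹ * c m := by
    intro m hm N hN
    have hm' : (1:ℝ) ≤ (m:ℝ) := by exact_mod_cast hm
    have hm2 : (0:ℝ) < (m:ℝ)^2 := by nlinarith
    rw [hPsq]
    have h1 : ∀ j ∈ Finset.Ico (nk (m^2)) N, a j ^ 2 ≤ ((m:ℝ)^2)⁻¹ * (a j ^ 2 * ω j) := by
      intro j hj
      rw [Finset.mem_Ico] at hj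
      have hωj : ((m:ℝ)^2) ≤ ω j := by
        have h2 : ((m^2 : ℕ) : ℝ) ≤ ω (nk (m^2)) := hωnk (m^2)
        have h3 : ω (nk (m^2)) ≤ ω j := hωmono hj.1
        push_cast at h2
        linarith
      have h4 : a j ^ 2 * (m:ℝ)^2 ≤ a j ^ 2 * ω j :=
        mul_le_mul_of_nonneg_left hωj (sq_nonneg _)
      calc a j ^ 2 = ((m:ℝ)^2)⁻¹ * (a j ^ 2 * (m:ℝ)^2) := by field_simp
        _ ≤ ((m:ℝ)^2)⁻¹ * (a j ^ 2 * ω j) :=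
          mul_le_mul_of_nonneg_left h4 (by positivity)
    calc ∑ j ∈ Finset.Ico (nk (m^2)) N, a j ^ 2
        ≤ ∑ j ∈ Finset.Ico (nk (m^2)) N, ((m:ℝ)^2)⁻¹ * (a j ^ 2 * ω j) :=
          Finset.sum_le_sum h1
      _ = ((m:ℝ)^2)⁻¹ * ∑ j ∈ Finset.Ico (nk (m^2)) N, a j ^ 2 * ω j :=
          (Finset.mul_sum _ _ _).symm
      _ ≤ ((m:ℝ)^2)⁻¹ * c m := by
          refine mul_le_mul_of_nonneg_left ?_ (by positivity)
          refine Finset.sum_le_sum_of_subset_of_nonneg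
            (Finset.Ico_subset_Ico le_rfl hN) (fun j _ _ => haj_nonneg j)
  ---------------------------------------------------------------
  -- Part 1 : the "error" terms E k = P (nk (sqrt k ^2)) (nk k)
  ---------------------------------------------------------------
  set g : ℕ → ℝ := fun m => if m = 0 then 0 else ((m:ℝ)^2)⁻¹ * c m with hgdef
  have hg_nonneg : ∀ m, 0 ≤ g m := by
    intro m
    by_cases h : m = 0 <;> simp [hgdef, h]
    exact mul_nonneg (by positivity) (hc_nonneg m)
  have hEint : ∀ k : ℕ, ∫ x, P (nk (Nat.sqrt k ^ 2)) (nk k) x ^ 2 ∂μ ≤ g (Nat.sqrt k) := by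
    intro k
    rcases Nat.eq_zero_or_pos k with rfl | hk
    · simp only [Nat.sqrt_zero, hgdef]
      rw [hPsq]
      simp
    · have hs1 : 1 ≤ Nat.sqrt k := Nat.one_le_iff_ne_zero.2 (by
        simp [Nat.sqrt_eq_zero]; omega)
      have hupper : nk k ≤ nk ((Nat.sqrt k + 1)^2) :=
        hnk.monotone (Nat.lt_succ_sqrt' k).le
      have := hblock (Nat.sqrt k) hs1 (nk k) hupper
      simpa [hgdef, Nat.one_le_iff_ne_zero.1 hs1] using this
  -- partial sums of g ∘ sqrt are bounded by 3C
  have hgsum : ∀ K : ℕ, ∑ k ∈ Finset.range K, g (Nat.sqrt k) ≤ 3 * C := by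
    have hsq : ∀ S : ℕ, ∑ k ∈ Finset.range (S^2), g (Nat.sqrt k)
        = ∑ s ∈ Finset.range S, (2*(s:ℝ)+1) * g s := by
      intro S
      induction S with
      | zero => simp
      | succ S ih =>
        rw [Finset.range_eq_Ico, ← Finset.sum_Ico_consecutive _ (Nat.zero_le (S^2))
          (Nat.pow_le_pow_left (Nat.le_succ S) 2), ← Finset.range_eq_Ico, ih,
          Finset.sum_range_succ]
        congr 1
        have hsqrt : ∀ k ∈ Finset.Ico (S^2) ((S+1)^2), Nat.sqrt k = S := by
          intro k hk
          rw [Finset.mem_Ico] at hk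
          exact le_antisymm (Nat.lt_succ_iff.1 (Nat.sqrt_lt'.2 hk.2)) (Nat.le_sqrt'.2 hk.1)
        rw [Finset.sum_congr rfl (fun k hk => by rw [hsqrt k hk])]
        rw [Finset.sum_const, Nat.card_Ico]
        have hcard : (S+1)^2 - S^2 = 2*S+1 := by
          have : (S+1)^2 = S^2 + 2*S + 1 := by ring
          omega
        rw [hcard, nsmul_eq_mul]
        push_cast
        ring
    intro K
    have hmono : ∑ k ∈ Finset.range K, g (Nat.sqrt k)
        ≤ ∑ k ∈ Finset.range (K^2), g (Nat.sqrt k) := by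
      refine Finset.sum_le_sum_of_subset_of_nonneg
        (Finset.range_subset_range.2 (Nat.le_self_pow two_ne_zero K))
        (fun k _ _ => hg_nonneg _)
    refine hmono.trans ?_
    rw [hsq K]
    have hterm : ∀ s ∈ Finset.range K, (2*(s:ℝ)+1) * g s ≤ 3 * c s := by
      intro s _
      rcases Nat.eq_zero_or_pos s with rfl | hs
      · have hg0 : g 0 = 0 := by simp [hgdef]
        rw [hg0, mul_zero]
        nlinarith [hc_nonneg 0]
      · have hs' : (1:ℝ) ≤ (s:ℝ) := by exact_mod_cast hs
        have hs2 : (0:ℝ) < (s:ℝ)^2 := by nlinarith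
        have hgs : g s = ((s:ℝ)^2)⁻¹ * c s := by
          simp [hgdef, Nat.one_le_iff_ne_zero.1 hs]
        rw [hgs, ← mul_assoc]
        refine mul_le_mul_of_nonneg_right ?_ (hc_nonneg s)
        rw [mul_inv_le_iff₀ hs2]
        nlinarith
    calc ∑ s ∈ Finset.range K, (2*(s:ℝ)+1) * g s ≤ ∑ s ∈ Finset.range K, 3 * c s :=
        Finset.sum_le_sum hterm
      _ = 3 * ∑ s ∈ Finset.range K, c s := by rw [Finset.mul_sum]
      _ ≤ 3 * C := by linarith [hc_partial K]
  -- a.e. summability of the squared errors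
  have hae1 : ∀ᵐ x ∂μ, Summable (fun k => P (nk (Nat.sqrt k ^ 2)) (nk k) x ^ 2) := by
    refine ks_ae_summable μ _ (fun k => ((hPmeas _ _).pow_const 2)) (fun k x => sq_nonneg _)
      (fun k => hPsq_int _ _) (3*C) ?_
    intro K
    calc ∑ k ∈ Finset.range K, ∫ x, P (nk (Nat.sqrt k ^ 2)) (nk k) x ^ 2 ∂μ
        ≤ ∑ k ∈ Finset.range K, g (Nat.sqrt k) := Finset.sum_le_sum (fun k _ => hEint k)
      _ ≤ 3 * C := hgsum K
  ---------------------------------------------------------------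
  -- Part 2 : the telescoping terms Δ m = P (nk (m^2)) (nk ((m+1)^2))
  ---------------------------------------------------------------
  set S2 : ℝ := ∑' m : ℕ, ((m:ℝ)^2)⁻¹ with hS2def
  have hS2sum : Summable (fun m : ℕ => ((m:ℝ)^2)⁻¹) := by
    exact_mod_cast Real.summable_nat_pow_inv.2 one_lt_two
  have hΔbound : ∀ m : ℕ, 1 ≤ m →
      ∫ x, |P (nk (m^2)) (nk ((m+1)^2)) x| ∂μ ≤ (c m + ((m:ℝ)^2)⁻¹)/2 := by
    intro m hm
    have hm' : (1:ℝ) ≤ (m:ℝ) := by exact_mod_cast hm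
    have hm2 : (0:ℝ) < (m:ℝ)^2 := by nlinarith
    have hpt : ∀ x, |P (nk (m^2)) (nk ((m+1)^2)) x|
        ≤ ((m:ℝ)^2 * P (nk (m^2)) (nk ((m+1)^2)) x ^ 2 + ((m:ℝ)^2)⁻¹)/2 :=
      fun x => ks_abs_le _ _ hm2
    have hrhs_int : Integrable
        (fun x => ((m:ℝ)^2 * P (nk (m^2)) (nk ((m+1)^2)) x ^ 2 + ((m:ℝ)^2)⁻¹)/2) μ :=
      (((hPsq_int _ _).const_mul _).add (integrable_const _)).div_const _
    have h1 : ∫ x, |P (nk (m^2)) (nk ((m+1)^2)) x| ∂μ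
        ≤ ∫ x, ((m:ℝ)^2 * P (nk (m^2)) (nk ((m+1)^2)) x ^ 2 + ((m:ℝ)^2)⁻¹)/2 ∂μ :=
      integral_mono ((hP_int _ _).abs) hrhs_int hpt
    have h2 : ∫ x, ((m:ℝ)^2 * P (nk (m^2)) (nk ((m+1)^2)) x ^ 2 + ((m:ℝ)^2)⁻¹)/2 ∂μ
        = ((m:ℝ)^2 * ∫ x, P (nk (m^2)) (nk ((m+1)^2)) x ^ 2 ∂μ + ((m:ℝ)^2)⁻¹)/2 := by
      rw [integral_div, integral_add ((hPsq_int _ _).const_mul _) (integrable_const _),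
        integral_const_mul, integral_const]
      simp
    have h3 : (m:ℝ)^2 * ∫ x, P (nk (m^2)) (nk ((m+1)^2)) x ^ 2 ∂μ ≤ c m := by
      have := hblock m hm (nk ((m+1)^2)) le_rfl
      calc (m:ℝ)^2 * ∫ x, P (nk (m^2)) (nk ((m+1)^2)) x ^ 2 ∂μ
          ≤ (m:ℝ)^2 * (((m:ℝ)^2)⁻¹ * c m) := mul_le_mul_of_nonneg_left this hm2.le
        _ = c m := by field_simp
    rw [h2] at h1
    linarith
  -- bound the partial sums of ∫ |Δ m|
  set B : ℝ := (∫ x, |P (nk 0) (nk 1) x| ∂μ) + C/2 + S2/2 with hBdef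
  have habs_nonneg : ∀ M N : ℕ, 0 ≤ ∫ x, |P M N x| ∂μ :=
    fun M N => integral_nonneg (fun x => abs_nonneg _)
  have hS2_nonneg : 0 ≤ S2 := tsum_nonneg (fun m => by positivity)
  have hΔpartial : ∀ M : ℕ,
      ∑ m ∈ Finset.range M, ∫ x, |P (nk (m^2)) (nk ((m+1)^2)) x| ∂μ ≤ B := by
    intro M
    rcases Nat.eq_zero_or_pos M with rfl | hM
    · simp [hBdef]
      positivity
    · obtain ⟨M', rfl⟩ := Nat.exists_eq_succ_of_ne_zero hM.ne'
      rw [Finset.sum_range_succ']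
      have hshift : ∀ m : ℕ, ∫ x, |P (nk ((m+1)^2)) (nk ((m+2)^2)) x| ∂μ
          ≤ (c (m+1) + (((m+1):ℝ)^2)⁻¹)/2 := by
        intro m
        have := hΔbound (m+1) (Nat.le_add_left 1 m)
        convert this using 4 <;> push_cast <;> ring
      have hsum1 : ∑ m ∈ Finset.range M', ∫ x, |P (nk ((m+1)^2)) (nk ((m+1+1)^2)) x| ∂μ
          ≤ ∑ m ∈ Finset.range M', (c (m+1) + (((m+1):ℝ)^2)⁻¹)/2 := by
        refine Finset.sum_le_sum (fun m _ => ?_)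
        have := hshift m
        convert this using 4 <;> push_cast <;> ring
      have hsum2 : ∑ m ∈ Finset.range M', (c (m+1) + (((m+1):ℝ)^2)⁻¹)/2
          ≤ C/2 + S2/2 := by
        have hcshift : ∑ m ∈ Finset.range M', c (m+1) ≤ C := by
          have := hc_partial (M'+1)
          rw [Finset.sum_range_succ'] at this
          linarith [hc_nonneg 0]
        have hS2shift : ∑ m ∈ Finset.range M', (((m+1):ℝ)^2)⁻¹ ≤ S2 := by
          have h1 : ∑ m ∈ Finset.range M', ((((m+1):ℕ):ℝ)^2)⁻¹
              ≤ ∑ m ∈ Finset.range (M'+1), (((m:ℕ):ℝ)^2)⁻¹ := by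
            rw [Finset.sum_range_succ']
            simp
          have h2 : ∑ m ∈ Finset.range (M'+1), (((m:ℕ):ℝ)^2)⁻¹ ≤ S2 :=
            Summable.sum_le_tsum _ (fun m _ => by positivity) hS2sum
          calc ∑ m ∈ Finset.range M', (((m+1):ℝ)^2)⁻¹
              = ∑ m ∈ Finset.range M', ((((m+1):ℕ):ℝ)^2)⁻¹ := by push_cast; rfl
            _ ≤ S2 := h1.trans h2
        have : ∑ m ∈ Finset.range M', (c (m+1) + (((m+1):ℝ)^2)⁻¹)/2
            = (∑ m ∈ Finset.range M', c (m+1))/2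
              + (∑ m ∈ Finset.range M', (((m+1):ℝ)^2)⁻¹)/2 := by
          rw [← Finset.sum_div, Finset.sum_add_distrib, add_div]
        rw [this]
        linarith
      rw [hBdef]
      have h00 : ∫ x, |P (nk (0^2)) (nk ((0+1)^2)) x| ∂μ = ∫ x, |P (nk 0) (nk 1) x| ∂μ := by
        norm_num
      rw [h00]
      linarith [hsum1.trans hsum2]
  have hae2 : ∀ᵐ x ∂μ, Summable (fun m => |P (nk (m^2)) (nk ((m+1)^2)) x|) := by
    refine ks_ae_summable μ _ (fun m => by simpa [Real.norm_eq_abs] using (hP2 (nk (m^2)) (nk ((m+1)^2))).aestronglyMeasurable.norm.aemeasurable) (fun m x => abs_nonneg _)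
      (fun m => (hP_int _ _).abs) B hΔpartial
  ---------------------------------------------------------------
  -- Combine
  ---------------------------------------------------------------
  have hsqrt_tendsto : Tendsto Nat.sqrt atTop atTop := by
    refine tendsto_atTop_atTop.2 (fun b => ⟨b*b, fun k hk => Nat.le_sqrt.2 hk⟩)
  filter_upwards [hae1, hae2] with x h1 h2
  have hΔsum : Summable (fun m => P (nk (m^2)) (nk ((m+1)^2)) x) := h2.of_abs
  set L0 := ∑' m, P (nk (m^2)) (nk ((m+1)^2)) x with hL0
  refine ⟨L0 + ∑ j ∈ Finset.range (nk 0), a j * φ j x, ?_⟩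
  -- telescoping : partial sums of Δ
  have hTel : ∀ M : ℕ, ∑ m ∈ Finset.range M, P (nk (m^2)) (nk ((m+1)^2)) x
      = (∑ j ∈ Finset.range (nk (M^2)), a j * φ j x)
        - ∑ j ∈ Finset.range (nk 0), a j * φ j x := by
    intro M
    have heach : ∀ m : ℕ, P (nk (m^2)) (nk ((m+1)^2)) x
        = (∑ j ∈ Finset.range (nk ((m+1)^2)), a j * φ j x)
          - ∑ j ∈ Finset.range (nk (m^2)), a j * φ j x := by
      intro m
      exact Finset.sum_Ico_eq_sub _ (hnk.monotone (Nat.pow_le_pow_left (Nat.le_succ m) 2))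
    calc ∑ m ∈ Finset.range M, P (nk (m^2)) (nk ((m+1)^2)) x
        = ∑ m ∈ Finset.range M, ((∑ j ∈ Finset.range (nk ((m+1)^2)), a j * φ j x)
          - ∑ j ∈ Finset.range (nk (m^2)), a j * φ j x) :=
          Finset.sum_congr rfl (fun m _ => heach m)
      _ = _ := by
          rw [Finset.sum_range_sub (fun m => ∑ j ∈ Finset.range (nk (m^2)), a j * φ j x)]
          norm_num
  have hT : Tendsto (fun M => ∑ j ∈ Finset.range (nk (M^2)), a j * φ j x) atTop
      (nhds (L0 + ∑ j ∈ Finset.range (nk 0), a j * φ j x)) := by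
    have h := hΔsum.hasSum.tendsto_sum_nat
    have h' := h.add (tendsto_const_nhds
      (x := ∑ j ∈ Finset.range (nk 0), a j * φ j x) (f := atTop))
    refine h'.congr (fun M => ?_)
    rw [hTel M]
    ring
  -- error goes to zero
  have hE0 : Tendsto (fun k => P (nk (Nat.sqrt k ^ 2)) (nk k) x) atTop (nhds 0) := by
    have hsq0 : Tendsto (fun k => P (nk (Nat.sqrt k ^ 2)) (nk k) x ^ 2) atTop (nhds 0) :=
      h1.tendsto_atTop_zero
    have habs : Tendsto (fun k => |P (nk (Nat.sqrt k ^ 2)) (nk k) x|) atTop (nhds 0) := by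
      have hc := (Real.continuous_sqrt.tendsto 0).comp hsq0
      simpa [Function.comp_def, Real.sqrt_sq_eq_abs] using hc
    exact (tendsto_zero_iff_abs_tendsto_zero _).2 habs
  have hST : Tendsto (fun k => ∑ j ∈ Finset.range (nk (Nat.sqrt k ^ 2)), a j * φ j x)
      atTop (nhds (L0 + ∑ j ∈ Finset.range (nk 0), a j * φ j x)) := hT.comp hsqrt_tendsto
  have hfinal := hST.add hE0
  rw [add_zero] at hfinal
  refine hfinal.congr (fun k => ?_)
  have : P (nk (Nat.sqrt k ^ 2)) (nk k) x
      = (∑ j ∈ Finset.range (nk k), a j * φ j x)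
        - ∑ j ∈ Finset.range (nk (Nat.sqrt k ^ 2)), a j * φ j x :=
    Finset.sum_Ico_eq_sub _ (hnk.monotone (Nat.sqrt_le' k))
  rw [this]
  ring
end

section
/- There exist absolute constants C, c > 0 such that for every f ∈ L²(0,1) with Fourier–Haar expansion f = ∑_k a_k χ_k in the L²-normalized classical Haar system, defining the maximal function ℳf(x) = sup_{n ≥ 1} |∑_{k=1}^n a_k χ_k(x)| and the square function Sf(x) = (∑_{k=1}^∞ a_k² χ_k(x)²)^{1/2}, one has for all λ > 0 and 0 < ε < 1: |{x ∈ [0,1) : ℳf(x) > λ and Sf(x) < ε λ}| ≤ C · exp(−c/ε²) · |{x ∈ [0,1) : ℳf(x) > λ/2}|. -/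
open MeasureTheory Filter Set

/-- The Haar function of dyadic generation `k ≥ 0` and position `1 ≤ i ≤ 2^k`. -/
noncomputable def haarFun (k i : ℕ) (x : ℝ) : ℝ :=
  if (2 * (i : ℝ) - 2) / 2 ^ (k + 1) ≤ x ∧ x < (2 * (i : ℝ) - 1) / 2 ^ (k + 1) then
    Real.sqrt (2 ^ k)
  else if (2 * (i : ℝ) - 1) / 2 ^ (k + 1) ≤ x ∧ x < (2 * (i : ℝ)) / 2 ^ (k + 1) then
    -Real.sqrt (2 ^ k)
  else 0

/-- The `L²`-normalized classical Haar system `{χ_n}` on `[0,1)`, indexed from `1`: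
`χ_1 ≡ 1` and `χ_n = haarFun k i` for `n = 2^k + i`, `1 ≤ i ≤ 2^k`. -/
noncomputable def haarSystem : ℕ → ℝ → ℝ
  | 0 => fun _ => 0
  | 1 => fun _ => 1
  | (n + 2) => haarFun (Nat.log 2 (n + 1)) ((n + 2) - 2 ^ Nat.log 2 (n + 1))

/-- The Fourier–Haar coefficients of `f`. -/
noncomputable def haarCoeff (f : ℝ → ℝ) (k : ℕ) : ℝ :=
  ∫ x in Set.Ico (0:ℝ) 1, f x * haarSystem k x

/-- The Haar maximal function `ℳf(x) = sup_{n ≥ 1} |∑_{k=1}^n a_k χ_k(x)|`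
(with values in `ℝ≥0∞`). -/
noncomputable def haarMaximal (f : ℝ → ℝ) (x : ℝ) : ENNReal :=
  ⨆ n : ℕ, ENNReal.ofReal |∑ k ∈ Finset.Icc 1 (n + 1), haarCoeff f k * haarSystem k x|

/-- The Haar square function `Sf(x) = (∑_{k=1}^∞ a_k² χ_k(x)²)^{1/2}`
(with values in `ℝ≥0∞`). -/
noncomputable def haarSquare (f : ℝ → ℝ) (x : ℝ) : ENNReal :=
  (∑' k : ℕ, ENNReal.ofReal ((haarCoeff f (k + 1) * haarSystem (k + 1) x) ^ 2)) ^ (1/2 : ℝ)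

-- basic floor facts
lemma floor_double (y : ℝ) (hy : 0 ≤ y) :
    ⌊2 * y⌋₊ = 2 * ⌊y⌋₊ ∨ ⌊2 * y⌋₊ = 2 * ⌊y⌋₊ + 1 := by
  have h1 : (⌊y⌋₊ : ℝ) ≤ y := Nat.floor_le hy
  have h2 : y < ⌊y⌋₊ + 1 := Nat.lt_floor_add_one y
  have hl : 2 * ⌊y⌋₊ ≤ ⌊2 * y⌋₊ := by
    apply Nat.le_floor; push_cast; linarith
  have hu : ⌊2 * y⌋₊ < 2 * ⌊y⌋₊ + 2 := by
    have := Nat.floor_le (by linarith : (0:ℝ) ≤ 2 * y)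
    by_contra h
    push_neg at h
    have : ((2 * ⌊y⌋₊ + 2 : ℕ) : ℝ) ≤ 2 * y := le_trans (by exact_mod_cast Nat.cast_le.2 h) this
    push_cast at this; linarith
  omega

lemma floor_anc (x : ℝ) (hx : 0 ≤ x) {g k : ℕ} (h : g ≤ k) :
    ⌊2 ^ g * x⌋₊ = ⌊2 ^ k * x⌋₊ / 2 ^ (k - g) := by
  have : (2:ℝ) ^ g * x = (2 ^ k * x) / ((2 ^ (k - g) : ℕ) : ℝ) := by
    push_cast
    rw [eq_div_iff (by positivity)]
    rw [mul_right_comm, ← pow_add]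
    congr 2
    omega
  rw [this, Nat.floor_div_natCast]

lemma floor_succ (x : ℝ) (k : ℕ) :
    ⌊2 ^ (k+1) * x⌋₊ / 2 = ⌊2 ^ k * x⌋₊ ∧
      (⌊2 ^ (k+1) * x⌋₊ = 2 * ⌊2 ^ k * x⌋₊ ∨ ⌊2 ^ (k+1) * x⌋₊ = 2 * ⌊2 ^ k * x⌋₊ + 1) := by
  rcases le_or_gt 0 x with hx | hx
  · have h2 : (2:ℝ) ^ (k+1) * x = 2 * (2 ^ k * x) := by ring
    rw [h2]
    have := floor_double (2 ^ k * x) (by positivity)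
    constructor
    · omega
    · exact this
  · have h0 : ∀ m : ℕ, ⌊2 ^ m * x⌋₊ = 0 := fun m => by
      apply Nat.floor_eq_zero.2
      have : (2:ℝ) ^ m * x < 0 := by
        apply mul_neg_of_pos_of_neg (by positivity) hx
      linarith
    rw [h0, h0]; simp


lemma haarFun_eq_zero (k i : ℕ) (x : ℝ) (hx : 0 ≤ x) (hne : i ≠ ⌊2 ^ k * x⌋₊ + 1) :
    haarFun k i x = 0 := by
  have hp : (0:ℝ) < 2 ^ (k + 1) := by positivity
  have hkx : (0:ℝ) ≤ 2 ^ k * x := by positivity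
  have key : ∀ (_ : 2 * (i:ℝ) - 2 ≤ x * 2 ^ (k+1)) (_ : x * 2 ^ (k+1) < 2 * i), False := by
    intro ha hb
    have hx2 : (0:ℝ) ≤ x * 2 ^ (k+1) := by positivity
    have hi1 : 1 ≤ i := by
      by_contra hc
      push_neg at hc
      have : i = 0 := by omega
      subst this
      push_cast at hb
      linarith
    have hxe : x * 2 ^ (k+1) = 2 * (2 ^ k * x) := by ring
    have hfl : ⌊2 ^ k * x⌋₊ = i - 1 := by
      rw [Nat.floor_eq_iff hkx]
      have hc : ((i - 1 : ℕ) : ℝ) = (i : ℝ) - 1 := by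
        push_cast [hi1]; ring
      rw [hc]
      constructor
      · nlinarith
      · nlinarith
    omega
  unfold haarFun
  split_ifs with h1 h2
  · exfalso
    obtain ⟨ha, hb⟩ := h1
    rw [div_le_iff₀ hp] at ha
    rw [lt_div_iff₀ hp] at hb
    exact key ha (by linarith)
  · exfalso
    obtain ⟨ha, hb⟩ := h2
    rw [div_le_iff₀ hp] at ha
    rw [lt_div_iff₀ hp] at hb
    exact key (by linarith) hb
  · rfl

lemma haarFun_self (k : ℕ) (x : ℝ) (hx : 0 ≤ x) :
    haarFun k (⌊2 ^ k * x⌋₊ + 1) x =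
      if ⌊2 ^ (k+1) * x⌋₊ % 2 = 0 then Real.sqrt (2 ^ k) else -Real.sqrt (2 ^ k) := by
  have hp : (0:ℝ) < 2 ^ (k + 1) := by positivity
  have hkx : (0:ℝ) ≤ 2 ^ k * x := by positivity
  have h1x : (0:ℝ) ≤ 2 ^ (k+1) * x := by positivity
  set j := ⌊2 ^ k * x⌋₊ with hj
  have hjl : (j : ℝ) ≤ 2 ^ k * x := Nat.floor_le hkx
  have hju : 2 ^ k * x < (j : ℝ) + 1 := Nat.lt_floor_add_one _
  have hds : ⌊2 ^ (k+1) * x⌋₊ = 2 * j ∨ ⌊2 ^ (k+1) * x⌋₊ = 2 * j + 1 := by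
    have h2 : (2:ℝ) ^ (k+1) * x = 2 * (2 ^ k * x) := by ring
    rw [h2]
    exact floor_double _ hkx
  have hcast : (2 * (((j:ℕ)+1) : ℝ) - 2) = 2 * (j:ℝ) ∧ (2 * (((j:ℕ)+1) : ℝ) - 1) = 2 * (j:ℝ) + 1
      ∧ (2 * (((j:ℕ)+1) : ℝ)) = 2 * (j:ℝ) + 2 := by
    refine ⟨by ring, by ring, by ring⟩
  rcases hds with hE | hO
  · have hparity : ⌊2 ^ (k+1) * x⌋₊ % 2 = 0 := by omega
    rw [if_pos hparity]
    have hbnd : ((2*j : ℕ) : ℝ) ≤ 2 ^ (k+1) * x ∧ 2 ^ (k+1) * x < ((2*j : ℕ) : ℝ) + 1 := by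
      constructor
      · rw [← hE]; exact Nat.floor_le h1x
      · rw [← hE]; exact Nat.lt_floor_add_one _
    unfold haarFun
    rw [if_pos]
    push_cast
    push_cast at hbnd
    constructor
    · rw [div_le_iff₀ hp]; nlinarith [hbnd.1]
    · rw [lt_div_iff₀ hp]; nlinarith [hbnd.2]
  · have hparity : ¬ (⌊2 ^ (k+1) * x⌋₊ % 2 = 0) := by omega
    rw [if_neg hparity]
    have hbnd : ((2*j+1 : ℕ) : ℝ) ≤ 2 ^ (k+1) * x ∧ 2 ^ (k+1) * x < ((2*j+1 : ℕ) : ℝ) + 1 := by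
      constructor
      · rw [← hO]; exact Nat.floor_le h1x
      · rw [← hO]; exact Nat.lt_floor_add_one _
    unfold haarFun
    rw [if_neg, if_pos]
    · push_cast
      push_cast at hbnd
      constructor
      · rw [div_le_iff₀ hp]; nlinarith [hbnd.1]
      · rw [lt_div_iff₀ hp]; nlinarith [hbnd.2]
    · push_cast
      push_cast at hbnd
      intro ⟨hc1, hc2⟩
      rw [lt_div_iff₀ hp] at hc2
      nlinarith [hbnd.1]

lemma haarSystem_gen (k i : ℕ) (h1 : 1 ≤ i) (h2 : i ≤ 2 ^ k) :
    haarSystem (2 ^ k + i) = haarFun k i := by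
  have h2k : 1 ≤ 2 ^ k := Nat.one_le_two_pow
  have h2k1 : 2 ^ (k+1) = 2 * 2 ^ k := by rw [pow_succ]; ring
  obtain ⟨n, hn⟩ : ∃ n, 2 ^ k + i = n + 2 := ⟨2 ^ k + i - 2, by omega⟩
  rw [hn]
  show haarFun (Nat.log 2 (n + 1)) ((n + 2) - 2 ^ Nat.log 2 (n + 1)) = haarFun k i
  have hlog : Nat.log 2 (n + 1) = k :=
    Nat.log_eq_of_pow_le_of_lt_pow (by omega) (by omega)
  rw [hlog]
  have : n + 2 - 2 ^ k = i := by omega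
  rw [this]

-- the discrete martingale
noncomputable def ww (f : ℝ → ℝ) (k j : ℕ) : ℝ := haarCoeff f (2 ^ k + j + 1) * Real.sqrt (2 ^ k)

noncomputable def Vv (f : ℝ → ℝ) : ℕ → ℕ → ℝ
  | 0, _ => haarCoeff f 1
  | (k+1), j => Vv f k (j / 2) + (if j % 2 = 0 then 1 else -1) * ww f k (j / 2)

lemma Vv_even (f : ℝ → ℝ) (k j : ℕ) : Vv f (k+1) (2 * j) = Vv f k j + ww f k j := by
  show Vv f k (2 * j / 2) + _ = _
  rw [Nat.mul_div_cancel_left j (by norm_num)]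
  rw [if_pos (by omega)]
  ring

lemma Vv_odd (f : ℝ → ℝ) (k j : ℕ) : Vv f (k+1) (2 * j + 1) = Vv f k j - ww f k j := by
  show Vv f k ((2 * j + 1) / 2) + _ = _
  have : (2 * j + 1) / 2 = j := by omega
  rw [this, if_neg (by omega)]
  ring

---- new part
lemma floor_lt_pow (k : ℕ) {x : ℝ} (hx : x ∈ Ico (0:ℝ) 1) : ⌊2 ^ k * x⌋₊ < 2 ^ k := by
  have : (2:ℝ) ^ k * x < 2 ^ k := by
    nlinarith [hx.1, hx.2, (by positivity : (0:ℝ) < (2:ℝ)^k)]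
  rw [Nat.floor_lt (mul_nonneg (by positivity) hx.1)]
  push_cast
  exact this

lemma genTerm (f : ℝ → ℝ) (k : ℕ) {x : ℝ} (hx : x ∈ Ico (0:ℝ) 1) {j : ℕ}
    (hj : j ∈ Finset.Ioc (2 ^ k) (2 ^ (k+1))) :
    haarCoeff f j * haarSystem j x =
      if j = 2 ^ k + ⌊2 ^ k * x⌋₊ + 1 then
        (if ⌊2 ^ (k+1) * x⌋₊ % 2 = 0 then ww f k ⌊2 ^ k * x⌋₊ else - ww f k ⌊2 ^ k * x⌋₊)
      else 0 := by
  obtain ⟨hj1, hj2⟩ := Finset.mem_Ioc.1 hj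
  have h2k1 : (2:ℕ) ^ (k+1) = 2 * 2 ^ k := by rw [pow_succ]; ring
  obtain ⟨i, hi, hi1, hi2⟩ : ∃ i, j = 2 ^ k + i ∧ 1 ≤ i ∧ i ≤ 2 ^ k := ⟨j - 2 ^ k, by omega, by omega, by omega⟩
  subst hi
  rw [haarSystem_gen k i hi1 hi2]
  by_cases hcase : 2 ^ k + i = 2 ^ k + ⌊2 ^ k * x⌋₊ + 1
  · have : i = ⌊2 ^ k * x⌋₊ + 1 := by omega
    subst this
    rw [if_pos hcase, haarFun_self k x hx.1]
    unfold ww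
    split_ifs
    · ring_nf
    · ring_nf
  · rw [if_neg hcase, haarFun_eq_zero k i x hx.1 (by omega), mul_zero]

lemma genSum (f : ℝ → ℝ) (k : ℕ) {x : ℝ} (hx : x ∈ Ico (0:ℝ) 1) :
    ∑ j ∈ Finset.Ioc (2 ^ k) (2 ^ (k+1)), haarCoeff f j * haarSystem j x =
      (if ⌊2 ^ (k+1) * x⌋₊ % 2 = 0 then ww f k ⌊2 ^ k * x⌋₊ else - ww f k ⌊2 ^ k * x⌋₊) := by
  rw [Finset.sum_congr rfl (fun j hj => genTerm f k hx hj)]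
  rw [Finset.sum_ite_eq' (Finset.Ioc (2 ^ k) (2 ^ (k+1))) _
    (fun _ => (if ⌊2 ^ (k+1) * x⌋₊ % 2 = 0 then ww f k ⌊2 ^ k * x⌋₊ else - ww f k ⌊2 ^ k * x⌋₊))]
  rw [if_pos]
  have := floor_lt_pow k hx
  rw [Finset.mem_Ioc]
  have h2k1 : (2:ℕ) ^ (k+1) = 2 * 2 ^ k := by rw [pow_succ]; ring
  omega

lemma genSumSq (f : ℝ → ℝ) (k : ℕ) {x : ℝ} (hx : x ∈ Ico (0:ℝ) 1) :
    ∑ j ∈ Finset.Ioc (2 ^ k) (2 ^ (k+1)), (haarCoeff f j * haarSystem j x) ^ 2 =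
      (ww f k ⌊2 ^ k * x⌋₊) ^ 2 := by
  have : ∀ j ∈ Finset.Ioc (2 ^ k) (2 ^ (k+1)), (haarCoeff f j * haarSystem j x) ^ 2 =
      if j = 2 ^ k + ⌊2 ^ k * x⌋₊ + 1 then (ww f k ⌊2 ^ k * x⌋₊) ^ 2 else 0 := by
    intro j hj
    rw [genTerm f k hx hj]
    split_ifs with h1 h2
    · rfl
    · ring
    · ring
  rw [Finset.sum_congr rfl this, Finset.sum_ite_eq' _ _ (fun _ => (ww f k ⌊2 ^ k * x⌋₊) ^ 2)]
  rw [if_pos]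
  have := floor_lt_pow k hx
  rw [Finset.mem_Ioc]
  have h2k1 : (2:ℕ) ^ (k+1) = 2 * 2 ^ k := by rw [pow_succ]; ring
  omega

noncomputable def TT (f : ℝ → ℝ) (M : ℕ) (x : ℝ) : ℝ :=
  ∑ j ∈ Finset.Icc 1 M, haarCoeff f j * haarSystem j x

lemma TT_split (f : ℝ → ℝ) (x : ℝ) {A M : ℕ} (h : A ≤ M) :
    TT f M x = TT f A x + ∑ j ∈ Finset.Ioc A M, haarCoeff f j * haarSystem j x := by
  unfold TT
  rw [show Finset.Icc 1 M = Finset.Ioc 0 M by rfl, show Finset.Icc 1 A = Finset.Ioc 0 A by rfl]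
  rw [← Finset.sum_Ioc_consecutive _ (Nat.zero_le A) h]

lemma TT_eq_Vv (f : ℝ → ℝ) {x : ℝ} (hx : x ∈ Ico (0:ℝ) 1) :
    ∀ k, TT f (2 ^ k) x = Vv f k ⌊2 ^ k * x⌋₊ := by
  intro k
  induction k with
  | zero =>
    unfold TT
    simp only [pow_zero, Finset.Icc_self, Finset.sum_singleton]
    show haarCoeff f 1 * haarSystem 1 x = Vv f 0 ⌊2 ^ 0 * x⌋₊
    show haarCoeff f 1 * 1 = haarCoeff f 1
    ring
  | succ k ih =>
    rw [TT_split f x (Nat.pow_le_pow_right (by norm_num) (Nat.le_succ k)), ih, genSum f k hx]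
    obtain ⟨hdiv, hcases⟩ := floor_succ x k
    rcases hcases with hE | hO
    · rw [if_pos (by omega), hE, Vv_even]
    · rw [if_neg (by omega), hO, Vv_odd]
      ring

lemma TT_mem (f : ℝ → ℝ) {x : ℝ} (hx : x ∈ Ico (0:ℝ) 1) {k M : ℕ}
    (h1 : 2 ^ k ≤ M) (h2 : M ≤ 2 ^ (k+1)) :
    TT f M x = TT f (2 ^ k) x ∨ TT f M x = TT f (2 ^ (k+1)) x := by
  rw [TT_split f x h1, TT_split f x (h1.trans h2)]
  have hsub : ∀ j ∈ Finset.Ioc (2 ^ k) M, j ∈ Finset.Ioc (2 ^ k) (2 ^ (k+1)) := by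
    intro j hj
    rw [Finset.mem_Ioc] at hj ⊢
    omega
  have hterm : ∀ j ∈ Finset.Ioc (2 ^ k) M, haarCoeff f j * haarSystem j x =
      if j = 2 ^ k + ⌊2 ^ k * x⌋₊ + 1 then
        (if ⌊2 ^ (k+1) * x⌋₊ % 2 = 0 then ww f k ⌊2 ^ k * x⌋₊ else - ww f k ⌊2 ^ k * x⌋₊)
      else 0 := fun j hj => genTerm f k hx (hsub j hj)
  rw [Finset.sum_congr rfl hterm, Finset.sum_ite_eq' _ _
    (fun _ => (if ⌊2 ^ (k+1) * x⌋₊ % 2 = 0 then ww f k ⌊2 ^ k * x⌋₊ else - ww f k ⌊2 ^ k * x⌋₊))]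
  by_cases hin : 2 ^ k + ⌊2 ^ k * x⌋₊ + 1 ∈ Finset.Ioc (2 ^ k) M
  · right
    rw [if_pos hin, genSum f k hx]
  · left
    rw [if_neg hin, add_zero]

lemma haarMaximal_eq (f : ℝ → ℝ) {x : ℝ} (hx : x ∈ Ico (0:ℝ) 1) :
    haarMaximal f x = ⨆ k : ℕ, ENNReal.ofReal |Vv f k ⌊2 ^ k * x⌋₊| := by
  apply le_antisymm
  · apply iSup_le
    intro n
    set k := Nat.log 2 (n+1) with hk
    have h1 : 2 ^ k ≤ n + 1 := Nat.pow_log_le_self 2 (by omega)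
    have h2 : n + 1 < 2 ^ (k+1) := Nat.lt_pow_succ_log_self (by norm_num) (n+1)
    have := TT_mem f hx h1 (le_of_lt h2)
    show ENNReal.ofReal |TT f (n+1) x| ≤ _
    rcases this with h | h
    · rw [h, TT_eq_Vv f hx k]
      exact le_iSup (fun k => ENNReal.ofReal |Vv f k ⌊2 ^ k * x⌋₊|) k
    · rw [h, TT_eq_Vv f hx (k+1)]
      exact le_iSup (fun k => ENNReal.ofReal |Vv f k ⌊2 ^ k * x⌋₊|) (k+1)
  · apply iSup_le
    intro k
    rw [← TT_eq_Vv f hx k]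
    have h2k : 1 ≤ 2 ^ k := Nat.one_le_two_pow
    have : TT f (2 ^ k) x = TT f ((2 ^ k - 1) + 1) x := by congr 1; omega
    rw [this]
    exact le_iSup (fun n => ENNReal.ofReal |∑ j ∈ Finset.Icc 1 (n+1), haarCoeff f j * haarSystem j x|) (2 ^ k - 1)

lemma square_master (f : ℝ → ℝ) {x : ℝ} (hx : x ∈ Ico (0:ℝ) 1) {r : ℝ} (hr : 0 < r)
    (hS : haarSquare f x < ENNReal.ofReal r) (N : ℕ) :
    (haarCoeff f 1) ^ 2 + ∑ g ∈ Finset.range N, (ww f g ⌊2 ^ g * x⌋₊) ^ 2 ≤ r ^ 2 := by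
  set T := ∑' k : ℕ, ENNReal.ofReal ((haarCoeff f (k + 1) * haarSystem (k + 1) x) ^ 2) with hT
  have hTr : T < ENNReal.ofReal (r ^ 2) := by
    have h2 : (T ^ (1/2:ℝ)) ^ (2:ℝ) < (ENNReal.ofReal r) ^ (2:ℝ) :=
      ENNReal.rpow_lt_rpow hS (by norm_num)
    rw [← ENNReal.rpow_mul] at h2
    norm_num at h2
    rwa [ENNReal.ofReal_pow hr.le]
  -- finite subset of the tsum
  set s : Finset ℕ :=
    insert 0 ((Finset.range N).biUnion (fun g => Finset.Ico (2 ^ g) (2 ^ (g+1)))) with hs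
  have hsum_le : ∑ k ∈ s, ENNReal.ofReal ((haarCoeff f (k + 1) * haarSystem (k + 1) x) ^ 2) ≤ T :=
    ENNReal.sum_le_tsum s
  have h0notin : 0 ∉ (Finset.range N).biUnion (fun g => Finset.Ico (2 ^ g) (2 ^ (g+1))) := by
    simp only [Finset.mem_biUnion, Finset.mem_Ico, Finset.mem_range]
    rintro ⟨g, -, h, -⟩
    have : 1 ≤ 2 ^ g := Nat.one_le_two_pow
    omega
  have hdisj : ∀ g1 ∈ Finset.range N, ∀ g2 ∈ Finset.range N, g1 ≠ g2 →
      Disjoint (Finset.Ico (2 ^ g1) (2 ^ (g1+1))) (Finset.Ico (2 ^ g2) (2 ^ (g2+1))) := by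
    intro g1 _ g2 _ hne
    rw [Finset.disjoint_left]
    intro k hk1 hk2
    rw [Finset.mem_Ico] at hk1 hk2
    rcases Nat.lt_or_ge g1 g2 with h | h
    · have : 2 ^ (g1+1) ≤ 2 ^ g2 := Nat.pow_le_pow_right (by norm_num) h
      omega
    · have hlt : g2 < g1 := by omega
      have : 2 ^ (g2+1) ≤ 2 ^ g1 := Nat.pow_le_pow_right (by norm_num) hlt
      omega
  have hblock : ∀ g, ∑ k ∈ Finset.Ico (2 ^ g) (2 ^ (g+1)),
      ENNReal.ofReal ((haarCoeff f (k + 1) * haarSystem (k + 1) x) ^ 2) =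
      ENNReal.ofReal ((ww f g ⌊2 ^ g * x⌋₊) ^ 2) := by
    intro g
    rw [← ENNReal.ofReal_sum_of_nonneg (fun j _ => sq_nonneg _)]
    congr 1
    rw [← genSumSq f g hx]
    rw [show Finset.Ioc (2 ^ g) (2 ^ (g+1)) = Finset.Ico (2 ^ g + 1) (2 ^ (g+1) + 1) by
      rw [Finset.Ico_add_one_add_one_eq_Ioc]]
    rw [← Finset.sum_Ico_add' (fun j => (haarCoeff f j * haarSystem j x) ^ 2) (2^g) (2^(g+1)) 1]
  have hsum_eq : ∑ k ∈ s, ENNReal.ofReal ((haarCoeff f (k + 1) * haarSystem (k + 1) x) ^ 2) =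
      ENNReal.ofReal ((haarCoeff f 1) ^ 2 + ∑ g ∈ Finset.range N, (ww f g ⌊2 ^ g * x⌋₊) ^ 2) := by
    rw [hs, Finset.sum_insert h0notin, Finset.sum_biUnion hdisj]
    have h01 : ENNReal.ofReal ((haarCoeff f (0 + 1) * haarSystem (0 + 1) x) ^ 2) =
        ENNReal.ofReal ((haarCoeff f 1) ^ 2) := by
      norm_num
      congr 1
      show (haarCoeff f 1 * 1) ^ 2 = _
      ring
    rw [h01, Finset.sum_congr rfl (fun g _ => hblock g)]
    rw [← ENNReal.ofReal_sum_of_nonneg (fun g _ => sq_nonneg _),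
      ← ENNReal.ofReal_add (sq_nonneg _) (Finset.sum_nonneg (fun g _ => sq_nonneg _))]
  rw [hsum_eq] at hsum_le
  have := lt_of_le_of_lt hsum_le hTr
  have hX : (0:ℝ) ≤ (haarCoeff f 1) ^ 2 + ∑ g ∈ Finset.range N, (ww f g ⌊2 ^ g * x⌋₊) ^ 2 :=
    add_nonneg (sq_nonneg _) (Finset.sum_nonneg (fun g _ => sq_nonneg _))
  exact le_of_lt ((ENNReal.ofReal_lt_ofReal_iff_of_nonneg hX).1 this)

lemma anc_div {g l N j : ℕ} (hgl : g ≤ l) (hlN : l ≤ N) :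
    (j / 2 ^ (N - l)) / 2 ^ (l - g) = j / 2 ^ (N - g) := by
  rw [Nat.div_div_eq_div_mul, ← pow_add]
  congr 2
  omega

lemma anc_child {l n j r : ℕ} (hl : l ≤ n) (hr : r < 2) :
    (2 * j + r) / 2 ^ (n + 1 - l) = j / 2 ^ (n - l) := by
  have h1 : n + 1 - l = (n - l) + 1 := by omega
  rw [h1, pow_succ, mul_comm (2 ^ (n-l)) 2, ← Nat.div_div_eq_div_mul]
  congr 1
  omega

namespace CWW
variable (V w : ℕ → ℕ → ℝ) (m : ℕ) (a t : ℝ)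

noncomputable def dQ (n j : ℕ) : ℝ := ∑ g ∈ Finset.Ico m n, (w g (j / 2 ^ (n - g))) ^ 2

def stopSet (n j : ℕ) : Set ℕ :=
  {l | m ≤ l ∧ l ≤ n ∧ a < V l (j / 2 ^ (n - l)) - V m (j / 2 ^ (n - m))}

def dStop (n j : ℕ) : Prop := (stopSet V m a n j).Nonempty

open Classical in
noncomputable def dRho (n j : ℕ) : ℕ :=
  if dStop V m a n j then sInf (stopSet V m a n j) else n

noncomputable def dG (n j : ℕ) : ENNReal :=
  ENNReal.ofReal (Real.exp (t * (V (dRho V m a n j) (j / 2 ^ (n - dRho V m a n j))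
      - V m (j / 2 ^ (n - m)))
    - t ^ 2 / 2 * dQ w m (dRho V m a n j) (j / 2 ^ (n - dRho V m a n j))))

lemma dRho_le {n j : ℕ} (hmn : m ≤ n) : m ≤ dRho V m a n j ∧ dRho V m a n j ≤ n := by
  unfold dRho
  split_ifs with h
  · have hmem := Nat.sInf_mem h
    exact ⟨hmem.1, hmem.2.1⟩
  · exact ⟨hmn, le_refl n⟩

lemma dQ_anc {l N j : ℕ} (hlN : l ≤ N) :
    dQ w m l (j / 2 ^ (N - l)) = ∑ g ∈ Finset.Ico m l, (w g (j / 2 ^ (N - g))) ^ 2 := by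
  unfold dQ
  apply Finset.sum_congr rfl
  intro g hg
  rw [Finset.mem_Ico] at hg
  rw [anc_div (le_of_lt hg.2) hlN]

lemma stopSet_child {n j r : ℕ} (hmn : m ≤ n) (hr : r < 2) :
    ∀ l ≤ n, (l ∈ stopSet V m a (n+1) (2*j+r) ↔ l ∈ stopSet V m a n j) := by
  intro l hl
  unfold stopSet
  simp only [Set.mem_setOf_eq]
  rw [anc_child hl hr, anc_child hmn hr]
  constructor
  · rintro ⟨h1, h2, h3⟩; exact ⟨h1, hl, h3⟩
  · rintro ⟨h1, h2, h3⟩; exact ⟨h1, by omega, h3⟩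

lemma child_stopped {n j : ℕ} (hmn : m ≤ n) (h : dStop V m a n j) {r : ℕ} (hr : r < 2) :
    dG V w m a t (n+1) (2*j+r) = dG V w m a t n j := by
  have hSS := stopSet_child V m a hmn hr (j := j)
  have htau := Nat.sInf_mem h
  set τ := sInf (stopSet V m a n j) with hτ
  have hτn : τ ≤ n := htau.2.1
  have hchild_stop : dStop V m a (n+1) (2*j+r) := ⟨τ, (hSS τ hτn).2 htau⟩
  have hτ' : sInf (stopSet V m a (n+1) (2*j+r)) = τ := by
    apply le_antisymm
    · exact Nat.sInf_le ((hSS τ hτn).2 htau)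
    · by_contra hc
      push_neg at hc
      have hmem' := Nat.sInf_mem hchild_stop
      set τ' := sInf (stopSet V m a (n+1) (2*j+r)) with hτ'd
      have hτ'n : τ' ≤ n := by omega
      have h2 : τ' ∈ stopSet V m a n j := (hSS τ' hτ'n).1 hmem'
      have := Nat.sInf_le h2
      omega
  unfold dG dRho
  rw [if_pos hchild_stop, if_pos h, hτ', ← hτ]
  rw [anc_child hτn hr, anc_child hmn hr]

lemma child_unstopped {n j : ℕ} (hmn : m ≤ n) (h : ¬ dStop V m a n j) {r : ℕ} (hr : r < 2) :
    dRho V m a (n+1) (2*j+r) = n + 1 := by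
  have hSS := stopSet_child V m a hmn hr (j := j)
  unfold dRho
  split_ifs with h'
  · have hmem := Nat.sInf_mem h'
    set τ' := sInf (stopSet V m a (n+1) (2*j+r)) with hd
    rcases Nat.lt_or_ge τ' (n+1) with hlt | hge
    · exact absurd ⟨τ', (hSS τ' (by omega)).1 hmem⟩ h
    · have := hmem.2.1
      omega
  · rfl

lemma dQ_child {n j : ℕ} (hmn : m ≤ n) {r : ℕ} (hr : r < 2) :
    dQ w m (n+1) (2*j+r) = dQ w m n j + (w n j) ^ 2 := by
  unfold dQ
  rw [Finset.sum_Ico_succ_top hmn]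
  congr 1
  · apply Finset.sum_congr rfl
    intro g hg
    rw [Finset.mem_Ico] at hg
    rw [anc_child (by omega) hr]
  · congr 2
    have h1 : n + 1 - n = 1 := by omega
    rw [h1, pow_one]
    omega

lemma step_ineq (hV : ∀ k j, V (k+1) (2*j) = V k j + w k j ∧ V (k+1) (2*j+1) = V k j - w k j)
    {n j : ℕ} (hmn : m ≤ n) :
    dG V w m a t (n+1) (2*j) + dG V w m a t (n+1) (2*j+1) ≤ 2 * dG V w m a t n j := by
  by_cases h : dStop V m a n j
  · have h0 := child_stopped V w m a t hmn h (r := 0) (by norm_num)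
    have h1 := child_stopped V w m a t hmn h (r := 1) (by norm_num)
    norm_num at h0
    rw [h0, h1, two_mul]
  · have hρ0 := child_unstopped V m a hmn h (r := 0) (by norm_num)
    have hρ1 := child_unstopped V m a hmn h (r := 1) (by norm_num)
    norm_num at hρ0
    have hρn : dRho V m a n j = n := by unfold dRho; rw [if_neg h]
    unfold dG
    rw [hρ0, hρ1, hρn]
    simp only [Nat.sub_self, pow_zero, Nat.div_one]
    have hq0 := dQ_child w m hmn (r := 0) (j := j) (by norm_num)
    have hq1 := dQ_child w m hmn (r := 1) (j := j) (by norm_num)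
    norm_num at hq0
    rw [hq0, hq1]
    rw [(hV n j).1, (hV n j).2]
    have ha0 := anc_child (j := j) (r := 0) hmn (by norm_num)
    have ha1 := anc_child (j := j) (r := 1) hmn (by norm_num)
    norm_num at ha0
    rw [show n + 1 - m = n + 1 - m from rfl]
    rw [ha0, ha1]
    set g0 := V n j - V m (j / 2 ^ (n - m)) with hg0
    set Q := dQ w m n j with hQ
    set u := w n j with hu
    have key : Real.exp (t * (V n j + u - V m (j / 2 ^ (n - m))) - t^2/2 * (Q + u^2))
        + Real.exp (t * (V n j - u - V m (j / 2 ^ (n - m))) - t^2/2 * (Q + u^2))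
        ≤ 2 * Real.exp (t * g0 - t^2/2 * Q) := by
      have hch := Real.cosh_le_exp_half_sq (t * u)
      have h2 : Real.cosh (t*u) ≤ Real.exp ((t*u)^2/2) := hch
      rw [Real.cosh_eq] at h2
      have e1 : Real.exp (t * (V n j + u - V m (j / 2 ^ (n - m))) - t^2/2 * (Q + u^2))
          = Real.exp (t * g0 - t^2/2 * Q) * Real.exp (t * u) * Real.exp (-(t^2 * u^2/2)) := by
        rw [← Real.exp_add, ← Real.exp_add]
        congr 1
        rw [hg0]
        ring
      have e2 : Real.exp (t * (V n j - u - V m (j / 2 ^ (n - m))) - t^2/2 * (Q + u^2))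
          = Real.exp (t * g0 - t^2/2 * Q) * Real.exp (-(t * u)) * Real.exp (-(t^2 * u^2/2)) := by
        rw [← Real.exp_add, ← Real.exp_add]
        congr 1
        rw [hg0]
        ring
      rw [e1, e2]
      have hee : Real.exp ((t*u)^2/2) * Real.exp (-(t^2 * u^2/2)) = 1 := by
        rw [← Real.exp_add]
        ring_nf
        exact Real.exp_zero
      have hP := Real.exp_pos (t * g0 - t^2/2 * Q)
      have hE := Real.exp_nonneg (-(t^2 * u^2/2))
      have h3 := mul_le_mul_of_nonneg_right h2 hE
      rw [hee] at h3
      have h4 : (Real.exp (t*u) + Real.exp (-(t*u))) * Real.exp (-(t^2 * u^2/2)) ≤ 2 := by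
        nlinarith [h3]
      calc Real.exp (t * g0 - t^2/2 * Q) * Real.exp (t*u) * Real.exp (-(t^2 * u^2/2))
          + Real.exp (t * g0 - t^2/2 * Q) * Real.exp (-(t*u)) * Real.exp (-(t^2 * u^2/2))
          = Real.exp (t * g0 - t^2/2 * Q)
            * ((Real.exp (t*u) + Real.exp (-(t*u))) * Real.exp (-(t^2 * u^2/2))) := by ring
        _ ≤ Real.exp (t * g0 - t^2/2 * Q) * 2 := mul_le_mul_of_nonneg_left h4 hP.le
        _ = 2 * Real.exp (t * g0 - t^2/2 * Q) := by ring
    calc ENNReal.ofReal (Real.exp (t * (V n j + u - V m (j / 2 ^ (n - m))) - t^2/2 * (Q + u^2)))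
        + ENNReal.ofReal (Real.exp (t * (V n j - u - V m (j / 2 ^ (n - m))) - t^2/2 * (Q + u^2)))
        = ENNReal.ofReal (Real.exp (t * (V n j + u - V m (j / 2 ^ (n - m))) - t^2/2 * (Q + u^2))
            + Real.exp (t * (V n j - u - V m (j / 2 ^ (n - m))) - t^2/2 * (Q + u^2))) := by
          rw [ENNReal.ofReal_add (Real.exp_nonneg _) (Real.exp_nonneg _)]
      _ ≤ ENNReal.ofReal (2 * Real.exp (t * g0 - t^2/2 * Q)) := ENNReal.ofReal_le_ofReal key
      _ = 2 * ENNReal.ofReal (Real.exp (t * g0 - t^2/2 * Q)) := by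
          rw [ENNReal.ofReal_mul (by norm_num)]
          norm_num

end CWW

namespace CWW2
open CWW
variable (V w : ℕ → ℕ → ℝ) (m : ℕ) (a t : ℝ)

lemma pair_sum (h : ℕ → ENNReal) (A B : ℕ) :
    ∑ j ∈ Finset.Ico (2*A) (2*B), h j = ∑ j ∈ Finset.Ico A B, (h (2*j) + h (2*j+1)) := by
  have hset : Finset.Ico (2*A) (2*B) = (Finset.Ico A B).biUnion (fun j => {2*j, 2*j+1}) := by
    ext k
    simp only [Finset.mem_Ico, Finset.mem_biUnion, Finset.mem_insert, Finset.mem_singleton]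
    constructor
    · intro hk
      exact ⟨k / 2, by omega, by omega⟩
    · rintro ⟨j, hj, rfl | rfl⟩ <;> omega
  rw [hset, Finset.sum_biUnion]
  · apply Finset.sum_congr rfl
    intro j _
    rw [Finset.sum_pair (by omega : 2*j ≠ 2*j+1)]
  · intro j1 _ j2 _ hne
    show Disjoint ({2*j1, 2*j1+1} : Finset ℕ) {2*j2, 2*j2+1}
    rw [Finset.disjoint_left]
    intro k hk1 hk2
    simp only [Finset.mem_insert, Finset.mem_singleton] at hk1 hk2
    rcases hk1 with rfl | rfl <;> rcases hk2 with h | h <;> omega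

lemma Ssum_le (hV : ∀ k j, V (k+1) (2*j) = V k j + w k j ∧ V (k+1) (2*j+1) = V k j - w k j)
    (ha : 0 < a) (i : ℕ) :
    ∀ N, m ≤ N →
      ∑ j ∈ Finset.Ico (i * 2^(N-m)) ((i+1) * 2^(N-m)), dG V w m a t N j ≤ 2^(N-m) := by
  refine Nat.le_induction ?_ ?_
  · simp only [Nat.sub_self, pow_zero, mul_one]
    rw [show Finset.Ico i (i+1) = {i} by rw [Finset.Ico_add_one_right_eq_Icc, Finset.Icc_self]]
    rw [Finset.sum_singleton]
    have hnostop : ¬ dStop V m a m i := by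
      rintro ⟨l, hl1, hl2, hl3⟩
      have : l = m := le_antisymm hl2 hl1
      subst this
      simp at hl3
      linarith
    unfold dG dRho
    rw [if_neg hnostop]
    simp only [Nat.sub_self, pow_zero, Nat.div_one, sub_self, mul_zero]
    unfold dQ
    simp only [Finset.Ico_self, Finset.sum_empty, mul_zero, sub_zero, Real.exp_zero]
    simp
  · intro N hmN ih
    have hpow : N + 1 - m = (N - m) + 1 := by omega
    rw [hpow, pow_succ]
    have h1 : i * (2 ^ (N - m) * 2) = 2 * (i * 2 ^ (N-m)) := by ring
    have h2 : (i+1) * (2 ^ (N - m) * 2) = 2 * ((i+1) * 2 ^ (N-m)) := by ring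
    rw [h1, h2, pair_sum]
    calc ∑ j ∈ Finset.Ico (i * 2^(N-m)) ((i+1) * 2^(N-m)),
          (dG V w m a t (N+1) (2*j) + dG V w m a t (N+1) (2*j+1))
        ≤ ∑ j ∈ Finset.Ico (i * 2^(N-m)) ((i+1) * 2^(N-m)), 2 * dG V w m a t N j :=
          Finset.sum_le_sum (fun j _ => step_ineq V w m a t hV hmN)
      _ = 2 * ∑ j ∈ Finset.Ico (i * 2^(N-m)) ((i+1) * 2^(N-m)), dG V w m a t N j := by
          rw [Finset.mul_sum]
      _ ≤ 2 * 2^(N-m) := by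
          exact mul_le_mul_right ih 2
      _ = 2^(N-m) * 2 := by ring

open Classical in
lemma markov (hV : ∀ k j, V (k+1) (2*j) = V k j + w k j ∧ V (k+1) (2*j+1) = V k j - w k j)
    {b : ℝ} (ha : 0 < a) (hb : 0 < b) (i N : ℕ) (hmN : m ≤ N) :
    (((Finset.Ico (i * 2^(N-m)) ((i+1) * 2^(N-m))).filter
        (fun j => ∃ l, m ≤ l ∧ l ≤ N ∧ a < V l (j / 2^(N-l)) - V m (j / 2^(N-m)) ∧
          ∑ g ∈ Finset.Ico m l, (w g (j / 2^(N-g)))^2 ≤ b^2)).card : ENNReal)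
      ≤ ENNReal.ofReal (Real.exp (-(a^2/(2*b^2)))) * 2^(N-m) := by
  set t := a / b^2 with htdef
  have ht : 0 < t := div_pos ha (by positivity)
  set E := Real.exp (a^2/(2*b^2)) with hE
  set F := (Finset.Ico (i * 2^(N-m)) ((i+1) * 2^(N-m))).filter
      (fun j => ∃ l, m ≤ l ∧ l ≤ N ∧ a < V l (j / 2^(N-l)) - V m (j / 2^(N-m)) ∧
        ∑ g ∈ Finset.Ico m l, (w g (j / 2^(N-g)))^2 ≤ b^2) with hF
  have hkey : ∀ j ∈ F, ENNReal.ofReal E ≤ dG V w m a t N j := by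
    intro j hj
    rw [hF, Finset.mem_filter] at hj
    obtain ⟨-, l, hl1, hl2, hl3, hl4⟩ := hj
    have hstop : dStop V m a N j := ⟨l, hl1, hl2, hl3⟩
    have hρdef : dRho V m a N j = sInf (stopSet V m a N j) := by
      unfold dRho
      exact if_pos hstop
    set ρ := dRho V m a N j with hρ
    have hρmem : ρ ∈ stopSet V m a N j := by rw [hρdef]; exact Nat.sInf_mem hstop
    have hρle : ρ ≤ l := by rw [hρdef]; exact Nat.sInf_le ⟨hl1, hl2, hl3⟩
    obtain ⟨hρ1, hρ2, hρ3⟩ := hρmem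
    have hQle : dQ w m ρ (j / 2^(N-ρ)) ≤ b^2 := by
      rw [dQ_anc w m hρ2]
      refine le_trans (Finset.sum_le_sum_of_subset_of_nonneg ?_ (fun g _ _ => sq_nonneg _)) hl4
      apply Finset.Ico_subset_Ico le_rfl hρle
    unfold dG
    apply ENNReal.ofReal_le_ofReal
    apply Real.exp_le_exp.2
    rw [← hρ]
    have hstep1 : t * a ≤ t * (V ρ (j / 2 ^ (N - ρ)) - V m (j / 2 ^ (N - m))) :=
      mul_le_mul_of_nonneg_left (le_of_lt hρ3) ht.le
    have hstep2 : t^2/2 * dQ w m ρ (j / 2^(N-ρ)) ≤ t^2/2 * b^2 :=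
      mul_le_mul_of_nonneg_left hQle (by positivity)
    have hval : a^2/(2*b^2) = t * a - t^2/2 * b^2 := by
      rw [htdef]
      field_simp
      ring
    rw [hval]
    linarith
  have hsum1 : (F.card : ENNReal) * ENNReal.ofReal E ≤ ∑ j ∈ F, dG V w m a t N j := by
    have := Finset.card_nsmul_le_sum F (dG V w m a t N) (ENNReal.ofReal E) hkey
    rwa [nsmul_eq_mul] at this
  have hsum2 : ∑ j ∈ F, dG V w m a t N j ≤ 2^(N-m) := by
    refine le_trans (Finset.sum_le_sum_of_subset (Finset.filter_subset _ _)) ?_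
    exact Ssum_le V w m a t hV ha i N hmN
  have hc : (F.card : ENNReal) * ENNReal.ofReal E ≤ 2^(N-m) := le_trans hsum1 hsum2
  have hinv : ENNReal.ofReal E * ENNReal.ofReal (Real.exp (-(a^2/(2*b^2)))) = 1 := by
    rw [← ENNReal.ofReal_mul (Real.exp_nonneg _), ← Real.exp_add, add_neg_cancel,
      Real.exp_zero, ENNReal.ofReal_one]
  calc (F.card : ENNReal) = (F.card : ENNReal) * 1 := by rw [mul_one]
    _ = (F.card : ENNReal) * ENNReal.ofReal E * ENNReal.ofReal (Real.exp (-(a^2/(2*b^2)))) := by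
        rw [mul_assoc, hinv]
    _ ≤ 2^(N-m) * ENNReal.ofReal (Real.exp (-(a^2/(2*b^2)))) :=
        mul_le_mul_left hc _
    _ = ENNReal.ofReal (Real.exp (-(a^2/(2*b^2)))) * 2^(N-m) := by rw [mul_comm]

end CWW2

---------------- new material

lemma anc_child2 {l n j : ℕ} (hl : l ≤ n) :
    (2*j) / 2 ^ (n+1-l) = j / 2 ^ (n-l) ∧ (2*j+1) / 2 ^ (n+1-l) = j / 2 ^ (n-l) := by
  constructor
  · have h := anc_child (j := j) (r := 0) hl (by norm_num)
    simpa using h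
  · exact anc_child (j := j) (r := 1) hl (by norm_num)

lemma pow_inv_cancel_ennreal {m N : ℕ} (hmN : m ≤ N) :
    (2:ENNReal)^(N-m) * ((2:ENNReal)^N)⁻¹ = ((2:ENNReal)^m)⁻¹ := by
  have hsp : (2:ENNReal)^N = 2^(N-m) * 2^m := by
    rw [← pow_add]
    congr 1
    omega
  rw [hsp, ENNReal.mul_inv (by simp) (by simp), ← mul_assoc,
    ENNReal.mul_inv_cancel (pow_ne_zero _ (by norm_num)) (ENNReal.pow_ne_top (by norm_num)),
    one_mul]

def Iik (k j : ℕ) : Set ℝ := Set.Ico ((j:ℝ)/2^k) (((j:ℝ)+1)/2^k)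

lemma Iik_floor {k j : ℕ} {x : ℝ} (hx : x ∈ Iik k j) : ⌊2 ^ k * x⌋₊ = j ∧ 0 ≤ x := by
  obtain ⟨h1, h2⟩ := hx
  have hp : (0:ℝ) < 2 ^ k := by positivity
  have hx0 : 0 ≤ x := le_trans (by positivity) h1
  refine ⟨?_, hx0⟩
  rw [Nat.floor_eq_iff (mul_nonneg (by positivity) hx0)]
  constructor
  · rw [div_le_iff₀ hp] at h1; nlinarith
  · rw [lt_div_iff₀ hp] at h2; nlinarith

lemma mem_Iik_self {k : ℕ} {x : ℝ} (hx : 0 ≤ x) : x ∈ Iik k ⌊2 ^ k * x⌋₊ := by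
  have hp : (0:ℝ) < 2 ^ k := by positivity
  have h1 : (⌊2 ^ k * x⌋₊ : ℝ) ≤ 2 ^ k * x := Nat.floor_le (mul_nonneg (by positivity) hx)
  have h2 : 2 ^ k * x < ⌊2 ^ k * x⌋₊ + 1 := Nat.lt_floor_add_one _
  constructor
  · rw [div_le_iff₀ hp]; nlinarith
  · rw [lt_div_iff₀ hp]; nlinarith

lemma Iik_subset01 {k j : ℕ} (hj : j < 2 ^ k) : Iik k j ⊆ Ico (0:ℝ) 1 := by
  intro x hx
  obtain ⟨h1, h2⟩ := hx
  have hp : (0:ℝ) < 2 ^ k := by positivity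
  constructor
  · exact le_trans (by positivity) h1
  · have : ((j:ℝ)+1)/2^k ≤ 1 := by
      rw [div_le_one hp]
      have : (j:ℝ) + 1 ≤ (2:ℝ)^k := by exact_mod_cast Nat.succ_le_of_lt hj
      linarith
    linarith

lemma vol_Iik (k j : ℕ) : volume (Iik k j) = ENNReal.ofReal ((2:ℝ)^k)⁻¹ := by
  rw [Iik, Real.volume_Ico]
  congr 1
  field_simp
  ring

lemma ofReal_inv_pow (k : ℕ) : ENNReal.ofReal ((2:ℝ)^k)⁻¹ = ((2:ENNReal)^k)⁻¹ := by
  rw [ENNReal.ofReal_inv_of_pos (by positivity)]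
  congr 1
  rw [ENNReal.ofReal_pow (by norm_num)]
  norm_num

-- the per-interval estimate
open Classical in
lemma interval_bound (f : ℝ → ℝ) (lam ε : ℝ) (hlam : 0 < lam) (hε : 0 < ε) (hε4 : ε ≤ 1/4)
    (m i : ℕ) (him : i < 2 ^ m)
    (hmin : ∀ l < m, |Vv f l (i / 2 ^ (m - l))| ≤ lam / 2) :
    volume ({x ∈ Set.Ico (0:ℝ) 1 |
        ENNReal.ofReal lam < haarMaximal f x ∧ haarSquare f x < ENNReal.ofReal (ε * lam)}
        ∩ Iik m i) ≤
      ENNReal.ofReal (2 * Real.exp (-(1/(32 * ε^2)))) * volume (Iik m i) := by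
  set b := ε * lam with hb
  have hbpos : 0 < b := by positivity
  set aa := lam / 2 - ε * lam with haa
  have haapos : 0 < aa := by rw [haa]; nlinarith
  have haa4 : lam / 4 ≤ aa := by rw [haa]; nlinarith
  set Bad := {x ∈ Set.Ico (0:ℝ) 1 |
      ENNReal.ofReal lam < haarMaximal f x ∧ haarSquare f x < ENNReal.ofReal (ε * lam)} with hBad
  -- pointwise facts for bad points
  have badpt : ∀ x ∈ Bad ∩ Iik m i,
      (∃ l, m ≤ l ∧ lam < |Vv f l ⌊2 ^ l * x⌋₊|) ∧
      (∀ N, (haarCoeff f 1) ^ 2 + ∑ g ∈ Finset.range N, (ww f g ⌊2 ^ g * x⌋₊) ^ 2 ≤ b ^ 2) ∧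
      ⌊2 ^ m * x⌋₊ = i ∧ 0 ≤ x := by
    rintro x ⟨⟨hx01, hM, hS⟩, hxI⟩
    obtain ⟨hfl, hx0⟩ := Iik_floor hxI
    have hmaster := fun N => square_master f hx01 (by positivity : (0:ℝ) < ε * lam) hS N
    refine ⟨?_, hmaster, hfl, hx0⟩
    rw [haarMaximal_eq f hx01, lt_iSup_iff] at hM
    obtain ⟨l, hl⟩ := hM
    have hlam_lt : lam < |Vv f l ⌊2 ^ l * x⌋₊| :=
      (ENNReal.ofReal_lt_ofReal_iff_of_nonneg hlam.le).1 hl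
    refine ⟨l, ?_, hlam_lt⟩
    by_contra hc
    push_neg at hc
    have hanc : ⌊2 ^ l * x⌋₊ = i / 2 ^ (m - l) := by
      rw [floor_anc x hx0 (le_of_lt hc), hfl]
    rw [hanc] at hlam_lt
    have := hmin l hc
    linarith [abs_nonneg (Vv f l (i / 2 ^ (m - l)))]
  -- bound |Vv f m i| using one bad point, if it exists
  rcases Set.eq_empty_or_nonempty (Bad ∩ Iik m i) with hemp | ⟨x0, hx0mem⟩
  · rw [hemp, measure_empty]
    exact zero_le
  obtain ⟨hM0, hmaster0, hfl0, hx00⟩ := badpt x0 hx0mem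
  have hwbound : ∀ g, (ww f g ⌊2 ^ g * x0⌋₊) ^ 2 ≤ b ^ 2 := by
    intro g
    have h1 := hmaster0 (g + 1)
    have h2 : (ww f g ⌊2 ^ g * x0⌋₊) ^ 2 ≤ ∑ g' ∈ Finset.range (g+1), (ww f g' ⌊2 ^ g' * x0⌋₊) ^ 2 :=
      Finset.single_le_sum (f := fun g' => (ww f g' ⌊2 ^ g' * x0⌋₊) ^ 2)
        (fun g' _ => sq_nonneg _) (Finset.self_mem_range_succ g)
    nlinarith [sq_nonneg (haarCoeff f 1)]
  have hVmi : |Vv f m i| ≤ lam / 2 + ε * lam := by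
    cases m with
    | zero =>
      show |haarCoeff f 1| ≤ lam / 2 + ε * lam
      have h1 := hmaster0 0
      simp only [Finset.range_zero, Finset.sum_empty, add_zero] at h1
      have : |haarCoeff f 1| ≤ ε * lam := by
        nlinarith [abs_nonneg (haarCoeff f 1), sq_abs (haarCoeff f 1)]
      linarith
    | succ m' =>
      have hanc' : ⌊2 ^ m' * x0⌋₊ = i / 2 := by
        have h := floor_anc x0 hx00 (Nat.le_succ m')
        have he : m' + 1 - m' = 1 := by omega
        rw [hfl0, he, pow_one] at h
        exact h
      have hw' : |ww f m' (i / 2)| ≤ ε * lam := by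
        have := hwbound m'
        rw [hanc'] at this
        nlinarith [abs_nonneg (ww f m' (i/2)), sq_abs (ww f m' (i/2))]
      have hVm' : |Vv f m' (i / 2)| ≤ lam / 2 := by
        have := hmin m' (Nat.lt_succ_self m')
        have he : m' + 1 - m' = 1 := by omega
        rwa [he, pow_one] at this
      show |Vv f m' (i / 2) + (if i % 2 = 0 then 1 else -1) * ww f m' (i / 2)| ≤ lam / 2 + ε * lam
      split_ifs with h
      · rw [one_mul]
        calc |Vv f m' (i / 2) + ww f m' (i / 2)| ≤ |Vv f m' (i / 2)| + |ww f m' (i / 2)| := abs_add_le _ _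
          _ ≤ lam / 2 + ε * lam := add_le_add hVm' hw'
      · calc |Vv f m' (i / 2) + -1 * ww f m' (i / 2)| = |Vv f m' (i / 2) - ww f m' (i / 2)| := by ring_nf
          _ ≤ |Vv f m' (i / 2)| + |ww f m' (i / 2)| := abs_sub _ _
          _ ≤ lam / 2 + ε * lam := add_le_add hVm' hw'
  -- the discrete bad sets and their interval unions
  set P : ℕ → ℕ → Prop := fun N j => ∃ l, m ≤ l ∧ l ≤ N ∧
      aa < |Vv f l (j / 2 ^ (N - l)) - Vv f m (j / 2 ^ (N - m))| ∧
      ∑ g ∈ Finset.Ico m l, (ww f g (j / 2 ^ (N - g))) ^ 2 ≤ b ^ 2 with hP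
  set badF : ℕ → Finset ℕ := fun N =>
    (Finset.Ico (i * 2 ^ (N - m)) ((i+1) * 2 ^ (N - m))).filter (P N) with hbadF
  set T : ℕ → Set ℝ := fun N => if m ≤ N then ⋃ j ∈ badF N, Iik N j else ∅ with hT
  -- inclusion
  have hincl : Bad ∩ Iik m i ⊆ ⋃ N, T N := by
    intro x hx
    obtain ⟨⟨l, hml, hlam_lt⟩, hmaster, hfl, hx0⟩ := badpt x hx
    refine Set.mem_iUnion.2 ⟨l, ?_⟩
    rw [hT]
    simp only [if_pos hml]
    refine Set.mem_iUnion₂.2 ⟨⌊2 ^ l * x⌋₊, ?_, mem_Iik_self hx0⟩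
    show ⌊2 ^ l * x⌋₊ ∈ (Finset.Ico (i * 2 ^ (l - m)) ((i+1) * 2 ^ (l - m))).filter (P l)
    set j := ⌊2 ^ l * x⌋₊ with hj
    have hjdiv : j / 2 ^ (l - m) = i := by
      rw [← hfl, ← floor_anc x hx0 hml]
    refine Finset.mem_filter.2 ⟨?_, ?_⟩
    · rw [Finset.mem_Ico]
      have h1 := Nat.div_add_mod j (2 ^ (l - m))
      have h2 : j % 2 ^ (l - m) < 2 ^ (l - m) := Nat.mod_lt _ (by positivity)
      rw [hjdiv] at h1
      have e1 : i * 2 ^ (l - m) = 2 ^ (l - m) * i := mul_comm _ _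
      have e2 : (i+1) * 2 ^ (l - m) = 2 ^ (l - m) * i + 2 ^ (l - m) := by ring
      omega
    · refine ⟨l, hml, le_refl l, ?_, ?_⟩
      · have he : l - l = 0 := by omega
        rw [he, pow_zero, Nat.div_one, hjdiv]
        have h5 : |Vv f l j| - |Vv f m i| ≤ |Vv f l j - Vv f m i| := by
          exact abs_sub_abs_le_abs_sub _ _
        rw [haa]
        linarith [hVmi, hlam_lt, h5]
      · have hQ : ∀ g ∈ Finset.Ico m l, (ww f g (j / 2 ^ (l - g))) ^ 2 =
            (ww f g ⌊2 ^ g * x⌋₊) ^ 2 := by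
          intro g hg
          rw [Finset.mem_Ico] at hg
          rw [hj, ← floor_anc x hx0 (le_of_lt hg.2)]
        rw [Finset.sum_congr rfl hQ]
        have hsub : ∑ g ∈ Finset.Ico m l, (ww f g ⌊2 ^ g * x⌋₊) ^ 2 ≤
            ∑ g ∈ Finset.range l, (ww f g ⌊2 ^ g * x⌋₊) ^ 2 := by
          apply Finset.sum_le_sum_of_subset_of_nonneg
          · intro g hg
            rw [Finset.mem_Ico] at hg
            rw [Finset.mem_range]
            exact hg.2
          · exact fun g _ _ => sq_nonneg _
        have := hmaster l
        nlinarith [sq_nonneg (haarCoeff f 1)]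
  -- monotonicity of T
  have hmono : ∀ N, T N ⊆ T (N + 1) := by
    intro N
    rw [hT]
    by_cases hmN : m ≤ N
    · simp only [if_pos hmN, if_pos (le_trans hmN (Nat.le_succ N))]
      intro x hx
      rw [Set.mem_iUnion₂] at hx
      obtain ⟨j, hjF, hxI⟩ := hx
      obtain ⟨hflj, hx0⟩ := Iik_floor hxI
      rw [Set.mem_iUnion₂]
      refine ⟨⌊2 ^ (N+1) * x⌋₊, ?_, mem_Iik_self hx0⟩
      obtain ⟨hdiv2, hcases⟩ := floor_succ x N
      rw [hflj] at hdiv2 hcases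
      simp only [hbadF, Finset.mem_filter] at hjF ⊢
      obtain ⟨hjrange, l, hl1, hl2, hl3, hl4⟩ := hjF
      rw [Finset.mem_Ico] at hjrange
      obtain ⟨hr, hrr⟩ := hjrange
      constructor
      · rw [Finset.mem_Ico]
        have hp : N + 1 - m = (N - m) + 1 := by omega
        rw [hp, pow_succ]
        have e1 : i * (2 ^ (N - m) * 2) = 2 * (i * 2 ^ (N - m)) := by ring
        have e2 : (i+1) * (2 ^ (N - m) * 2) = 2 * ((i+1) * 2 ^ (N - m)) := by ring
        rw [e1, e2]
        omega
      · refine ⟨l, hl1, by omega, ?_, ?_⟩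
        · have hancl : ⌊2 ^ (N+1) * x⌋₊ / 2 ^ (N + 1 - l) = j / 2 ^ (N - l) := by
            rcases hcases with hc | hc
            · rw [hc]; exact (anc_child2 hl2).1
            · rw [hc]; exact (anc_child2 hl2).2
          have hancm : ⌊2 ^ (N+1) * x⌋₊ / 2 ^ (N + 1 - m) = j / 2 ^ (N - m) := by
            rcases hcases with hc | hc
            · rw [hc]; exact (anc_child2 hmN).1
            · rw [hc]; exact (anc_child2 hmN).2
          rw [hancl, hancm]
          exact hl3
        · have hancg : ∀ g ∈ Finset.Ico m l, (ww f g (⌊2 ^ (N+1) * x⌋₊ / 2 ^ (N + 1 - g))) ^ 2 =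
              (ww f g (j / 2 ^ (N - g))) ^ 2 := by
            intro g hg
            rw [Finset.mem_Ico] at hg
            have hgN : g ≤ N := by omega
            rcases hcases with hc | hc
            · rw [hc, (anc_child2 hgN).1]
            · rw [hc, (anc_child2 hgN).2]
          rw [Finset.sum_congr rfl hancg]
          exact hl4
    · simp only [if_neg hmN]
      exact fun x hx => absurd hx (Set.notMem_empty x)
  -- measure bound for each T N
  have hTbound : ∀ N, volume (T N) ≤
      ENNReal.ofReal (2 * Real.exp (-(aa^2/(2*b^2)))) * ENNReal.ofReal ((2:ℝ)^m)⁻¹ := by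
    intro N
    rw [hT]
    by_cases hmN : m ≤ N
    · simp only [if_pos hmN]
      have hsub : volume (⋃ j ∈ badF N, Iik N j) ≤ ∑ j ∈ badF N, volume (Iik N j) :=
        measure_biUnion_finset_le _ _
      have hvol : ∑ j ∈ badF N, volume (Iik N j) = (badF N).card * ENNReal.ofReal ((2:ℝ)^N)⁻¹ := by
        rw [Finset.sum_congr rfl (fun j _ => vol_Iik N j), Finset.sum_const, nsmul_eq_mul]
      -- split badF into positive and negative parts
      set FP := (Finset.Ico (i * 2 ^ (N - m)) ((i+1) * 2 ^ (N - m))).filter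
          (fun j => ∃ l, m ≤ l ∧ l ≤ N ∧
            aa < Vv f l (j / 2 ^ (N - l)) - Vv f m (j / 2 ^ (N - m)) ∧
            ∑ g ∈ Finset.Ico m l, (ww f g (j / 2 ^ (N - g))) ^ 2 ≤ b ^ 2) with hFP
      set FM := (Finset.Ico (i * 2 ^ (N - m)) ((i+1) * 2 ^ (N - m))).filter
          (fun j => ∃ l, m ≤ l ∧ l ≤ N ∧
            aa < (fun k j' => -(Vv f k j')) l (j / 2 ^ (N - l))
              - (fun k j' => -(Vv f k j')) m (j / 2 ^ (N - m)) ∧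
            ∑ g ∈ Finset.Ico m l, ((fun k j' => -(ww f k j')) g (j / 2 ^ (N - g))) ^ 2 ≤ b ^ 2)
        with hFM
      have hsplit : badF N ⊆ FP ∪ FM := by
        intro j hj
        rw [hbadF, Finset.mem_filter] at hj
        obtain ⟨hjr, l, hl1, hl2, hl3, hl4⟩ := hj
        rw [lt_abs] at hl3
        rw [Finset.mem_union]
        rcases hl3 with h | h
        · left; rw [hFP, Finset.mem_filter]; exact ⟨hjr, l, hl1, hl2, h, hl4⟩
        · right
          refine Finset.mem_filter.2 ⟨hjr, l, hl1, hl2, ?_, ?_⟩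
          · show aa < -(Vv f l (j / 2 ^ (N - l))) - -(Vv f m (j / 2 ^ (N - m)))
            linarith
          · show ∑ g ∈ Finset.Ico m l, (-(ww f g (j / 2 ^ (N - g)))) ^ 2 ≤ b ^ 2
            simpa [neg_sq] using hl4
      have hcard : ((badF N).card : ENNReal) ≤ (FP.card : ENNReal) + (FM.card : ENNReal) := by
        have h1 : (badF N).card ≤ (FP ∪ FM).card := Finset.card_le_card hsplit
        have h2 := Finset.card_union_le FP FM
        exact_mod_cast le_trans h1 h2
      have hmkP := CWW2.markov (Vv f) (ww f) m aa
        (fun k j => ⟨Vv_even f k j, Vv_odd f k j⟩) haapos hbpos i N hmN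
      have hmkM := CWW2.markov (fun k j' => -(Vv f k j')) (fun k j' => -(ww f k j')) m aa
        (fun k j => by
          constructor
          · show -(Vv f (k+1) (2*j)) = -(Vv f k j) + -(ww f k j)
            rw [Vv_even]; ring
          · show -(Vv f (k+1) (2*j+1)) = -(Vv f k j) - -(ww f k j)
            rw [Vv_odd]; ring) haapos hbpos i N hmN
      have hcard2 : ((badF N).card : ENNReal) ≤
          2 * ENNReal.ofReal (Real.exp (-(aa^2/(2*b^2)))) * 2^(N-m) := by
        calc ((badF N).card : ENNReal) ≤ (FP.card : ENNReal) + (FM.card : ENNReal) := hcard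
          _ ≤ ENNReal.ofReal (Real.exp (-(aa^2/(2*b^2)))) * 2^(N-m)
              + ENNReal.ofReal (Real.exp (-(aa^2/(2*b^2)))) * 2^(N-m) := by
              exact add_le_add hmkP hmkM
          _ = 2 * ENNReal.ofReal (Real.exp (-(aa^2/(2*b^2)))) * 2^(N-m) := by ring
      calc volume (⋃ j ∈ badF N, Iik N j)
          ≤ ∑ j ∈ badF N, volume (Iik N j) := hsub
        _ = (badF N).card * ENNReal.ofReal ((2:ℝ)^N)⁻¹ := hvol
        _ ≤ 2 * ENNReal.ofReal (Real.exp (-(aa^2/(2*b^2)))) * 2^(N-m)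
            * ENNReal.ofReal ((2:ℝ)^N)⁻¹ := mul_le_mul_left hcard2 _
        _ = ENNReal.ofReal (2 * Real.exp (-(aa^2/(2*b^2)))) * ENNReal.ofReal ((2:ℝ)^m)⁻¹ := by
            rw [ofReal_inv_pow, ofReal_inv_pow]
            rw [ENNReal.ofReal_mul (by norm_num), ENNReal.ofReal_ofNat]
            rw [mul_assoc (2 * ENNReal.ofReal (Real.exp (-(aa^2/(2*b^2))))),
              pow_inv_cancel_ennreal hmN]
    · simp only [if_neg hmN, measure_empty]
      exact zero_le
  -- combine
  have hexp_mono : Real.exp (-(aa^2/(2*b^2))) ≤ Real.exp (-(1/(32 * ε^2))) := by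
    apply Real.exp_le_exp.2
    rw [neg_le_neg_iff]
    rw [hb]
    have h1 : lam^2 / 16 ≤ aa^2 := by nlinarith
    have h2 : (0:ℝ) < 2 * (ε*lam)^2 := by positivity
    have h3 := mul_le_mul_of_nonneg_right h1 (by positivity : (0:ℝ) ≤ 32 * ε^2)
    rw [div_le_div_iff₀ (by positivity) h2]
    calc 1 * (2 * (ε * lam)^2) = lam^2/16 * (32 * ε^2) := by ring
      _ ≤ aa^2 * (32 * ε^2) := h3
  calc volume (Bad ∩ Iik m i) ≤ volume (⋃ N, T N) := measure_mono hincl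
    _ = ⨆ N, volume (T N) := by
        apply Directed.measure_iUnion
        intro n1 n2
        rcases le_total n1 n2 with h | h
        · refine ⟨n2, ?_, subset_refl _⟩
          have : ∀ d, T n1 ⊆ T (n1 + d) := by
            intro d
            induction d with
            | zero => exact subset_refl _
            | succ d ih => exact subset_trans ih (hmono (n1 + d))
          have := this (n2 - n1)
          rwa [show n1 + (n2 - n1) = n2 by omega] at this
        · refine ⟨n1, subset_refl _, ?_⟩
          have : ∀ d, T n2 ⊆ T (n2 + d) := by
            intro d
            induction d with
            | zero => exact subset_refl _
            | succ d ih => exact subset_trans ih (hmono (n2 + d))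
          have := this (n1 - n2)
          rwa [show n2 + (n1 - n2) = n1 by omega] at this
    _ ≤ ENNReal.ofReal (2 * Real.exp (-(aa^2/(2*b^2)))) * ENNReal.ofReal ((2:ℝ)^m)⁻¹ :=
        iSup_le hTbound
    _ ≤ ENNReal.ofReal (2 * Real.exp (-(1/(32 * ε^2)))) * volume (Iik m i) := by
        rw [vol_Iik]
        apply mul_le_mul_left
        apply ENNReal.ofReal_le_ofReal
        nlinarith [hexp_mono, Real.exp_nonneg (-(aa^2/(2*b^2)))]

---------------- final assembly
open Classical in
noncomputable def Jset (f : ℝ → ℝ) (lam : ℝ) (p : ℕ × ℕ) : Set ℝ :=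
  if p.2 < 2 ^ p.1 ∧ lam / 2 < |Vv f p.1 p.2| ∧
      (∀ l < p.1, |Vv f l (p.2 / 2 ^ (p.1 - l))| ≤ lam / 2) then Iik p.1 p.2 else ∅

lemma Jset_sel {f : ℝ → ℝ} {lam : ℝ} {p : ℕ × ℕ} {x : ℝ} (hx : x ∈ Jset f lam p) :
    p.2 < 2 ^ p.1 ∧ lam / 2 < |Vv f p.1 p.2| ∧
      (∀ l < p.1, |Vv f l (p.2 / 2 ^ (p.1 - l))| ≤ lam / 2) ∧ x ∈ Iik p.1 p.2 := by
  unfold Jset at hx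
  split_ifs at hx with h
  · exact ⟨h.1, h.2.1, h.2.2, hx⟩
  · exact absurd hx (Set.notMem_empty x)

lemma RHS_eq (f : ℝ → ℝ) (lam : ℝ) (hlam : 0 < lam) :
    {x ∈ Set.Ico (0:ℝ) 1 | ENNReal.ofReal (lam / 2) < haarMaximal f x} =
      ⋃ p : ℕ × ℕ, Jset f lam p := by
  ext x
  simp only [Set.mem_setOf_eq, Set.mem_iUnion]
  constructor
  · rintro ⟨hx01, hM⟩
    rw [haarMaximal_eq f hx01, lt_iSup_iff] at hM
    have hex : ∃ k, lam / 2 < |Vv f k ⌊2 ^ k * x⌋₊| := by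
      obtain ⟨k, hk⟩ := hM
      exact ⟨k, (ENNReal.ofReal_lt_ofReal_iff_of_nonneg (by linarith)).1 hk⟩
    set m := Nat.find hex with hm
    have hspec := Nat.find_spec hex
    have hmin := fun l (hl : l < m) => Nat.find_min hex hl
    refine ⟨(m, ⌊2 ^ m * x⌋₊), ?_⟩
    have hfloor : x ∈ Iik m ⌊2 ^ m * x⌋₊ := mem_Iik_self hx01.1
    unfold Jset
    rw [if_pos]
    · exact hfloor
    refine ⟨floor_lt_pow m ⟨hx01.1, hx01.2⟩, hspec, ?_⟩
    intro l hl
    have h1 := hmin l hl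
    push_neg at h1
    have h2 : ⌊2 ^ l * x⌋₊ = ⌊2 ^ m * x⌋₊ / 2 ^ (m - l) := floor_anc x hx01.1 (le_of_lt hl)
    rwa [h2] at h1
  · rintro ⟨p, hp⟩
    obtain ⟨h1, h2, h3, hxI⟩ := Jset_sel hp
    have hx01 : x ∈ Ico (0:ℝ) 1 := Iik_subset01 h1 hxI
    refine ⟨hx01, ?_⟩
    rw [haarMaximal_eq f hx01, lt_iSup_iff]
    refine ⟨p.1, ?_⟩
    rw [(Iik_floor hxI).1]
    exact (ENNReal.ofReal_lt_ofReal_iff_of_nonneg (by linarith)).2 h2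

lemma Jset_disjoint (f : ℝ → ℝ) (lam : ℝ) : Pairwise (Function.onFun Disjoint (Jset f lam)) := by
  have key : ∀ p q : ℕ × ℕ, p ≠ q → p.1 ≤ q.1 → Disjoint (Jset f lam p) (Jset f lam q) := by
    intro p q hne hle
    rw [Set.disjoint_left]
    intro x hxp hxq
    obtain ⟨hp1, hp2, hp3, hpI⟩ := Jset_sel hxp
    obtain ⟨hq1, hq2, hq3, hqI⟩ := Jset_sel hxq
    have hx0 : 0 ≤ x := (Iik_floor hpI).2
    have hfp : ⌊2 ^ p.1 * x⌋₊ = p.2 := (Iik_floor hpI).1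
    have hfq : ⌊2 ^ q.1 * x⌋₊ = q.2 := (Iik_floor hqI).1
    rcases Nat.lt_or_ge p.1 q.1 with hlt | hge
    · -- p.1 < q.1 : use minimality in q at level p.1
      have h4 := hq3 p.1 hlt
      have h5 : ⌊2 ^ p.1 * x⌋₊ = q.2 / 2 ^ (q.1 - p.1) := by
        rw [floor_anc x hx0 (le_of_lt hlt), hfq]
      rw [← h5, hfp] at h4
      linarith
    · -- p.1 = q.1, so p.2 ≠ q.2 but floors agree
      have heq : p.1 = q.1 := le_antisymm hle hge
      have : p.2 = q.2 := by
        rw [← hfp, ← hfq, heq]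
      exact hne (Prod.ext heq this)
  intro p q hne
  rcases Nat.le_total p.1 q.1 with h | h
  · exact key p q hne h
  · exact (key q p (Ne.symm hne) h).symm

lemma Jset_measurable (f : ℝ → ℝ) (lam : ℝ) (p : ℕ × ℕ) : MeasurableSet (Jset f lam p) := by
  unfold Jset
  split_ifs
  · exact measurableSet_Ico
  · exact MeasurableSet.empty

/-- **Chang–Wilson–Wolff good-λ inequality.** There are absolute constants `C, c > 0` such
that for every `f ∈ L²(0,1)`, all `λ > 0` and `0 < ε < 1`,
`|{ℳf > λ, Sf < ελ}| ≤ C·exp(−c/ε²)·|{ℳf > λ/2}|`. -/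
theorem chang_wilson_wolff_good_lambda :
    ∃ C c : ℝ, 0 < C ∧ 0 < c ∧
      ∀ f : ℝ → ℝ, MemLp f 2 (volume.restrict (Set.Ico (0:ℝ) 1)) →
      ∀ lam ε : ℝ, 0 < lam → 0 < ε → ε < 1 →
      volume {x ∈ Set.Ico (0:ℝ) 1 |
          ENNReal.ofReal lam < haarMaximal f x ∧
          haarSquare f x < ENNReal.ofReal (ε * lam)} ≤
        ENNReal.ofReal (C * Real.exp (-c / ε ^ 2)) *
          volume {x ∈ Set.Ico (0:ℝ) 1 | ENNReal.ofReal (lam / 2) < haarMaximal f x} := by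
  refine ⟨3, 1/32, by norm_num, by norm_num, ?_⟩
  intro f _hf lam ε hlam hε hε1
  set Bad := {x ∈ Set.Ico (0:ℝ) 1 |
      ENNReal.ofReal lam < haarMaximal f x ∧ haarSquare f x < ENNReal.ofReal (ε * lam)} with hBad
  set R := {x ∈ Set.Ico (0:ℝ) 1 | ENNReal.ofReal (lam / 2) < haarMaximal f x} with hR
  have hBadR : Bad ⊆ R := by
    rintro x ⟨hx01, hM, -⟩
    exact ⟨hx01, lt_of_le_of_lt (ENNReal.ofReal_le_ofReal (by linarith)) hM⟩
  have hexp_arg : ∀ u : ℝ, -(1/(32 * ε^2)) = -(1/32)/ε^2 := by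
    intro u
    field_simp
  rcases le_or_gt ε (1/4) with hε4 | hε4
  · -- main case
    have hdecomp : Bad ⊆ ⋃ p : ℕ × ℕ, (Bad ∩ Jset f lam p) := by
      intro x hx
      have hxR : x ∈ R := hBadR hx
      rw [hR] at hxR
      have : x ∈ ⋃ p : ℕ × ℕ, Jset f lam p := by
        rw [← RHS_eq f lam hlam]
        exact hxR
      obtain ⟨p, hp⟩ := Set.mem_iUnion.1 this
      exact Set.mem_iUnion.2 ⟨p, hx, hp⟩
    have hbound : ∀ p : ℕ × ℕ, volume (Bad ∩ Jset f lam p) ≤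
        ENNReal.ofReal (2 * Real.exp (-(1/(32 * ε^2)))) * volume (Jset f lam p) := by
      intro p
      unfold Jset
      split_ifs with hsel
      · exact interval_bound f lam ε hlam hε hε4 p.1 p.2 hsel.1 hsel.2.2
      · rw [Set.inter_empty, measure_empty]
        exact zero_le
    calc volume Bad ≤ volume (⋃ p : ℕ × ℕ, (Bad ∩ Jset f lam p)) := measure_mono hdecomp
      _ ≤ ∑' p : ℕ × ℕ, volume (Bad ∩ Jset f lam p) := measure_iUnion_le _
      _ ≤ ∑' p : ℕ × ℕ, ENNReal.ofReal (2 * Real.exp (-(1/(32 * ε^2)))) * volume (Jset f lam p) :=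
          ENNReal.tsum_le_tsum hbound
      _ = ENNReal.ofReal (2 * Real.exp (-(1/(32 * ε^2)))) * ∑' p : ℕ × ℕ, volume (Jset f lam p) :=
          ENNReal.tsum_mul_left
      _ = ENNReal.ofReal (2 * Real.exp (-(1/(32 * ε^2)))) * volume R := by
          rw [hR, RHS_eq f lam hlam, measure_iUnion (Jset_disjoint f lam) (Jset_measurable f lam)]
      _ ≤ ENNReal.ofReal (3 * Real.exp (-(1/32) / ε^2)) * volume R := by
          apply mul_le_mul_left
          apply ENNReal.ofReal_le_ofReal
          rw [← hexp_arg 0]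
          nlinarith [Real.exp_nonneg (-(1/(32 * ε^2)))]
  · -- easy case : ε > 1/4
    have h12 : Real.exp ((1:ℝ)/2) < 3 := by
      have hsq : Real.exp ((1:ℝ)/2) * Real.exp ((1:ℝ)/2) = Real.exp 1 := by
        rw [← Real.exp_add]; norm_num
      nlinarith [hsq, Real.exp_pos ((1:ℝ)/2), Real.exp_one_lt_d9]
    have hge : (1:ℝ) ≤ 3 * Real.exp (-(1/32) / ε^2) := by
      have h1 : -(1/2 : ℝ) ≤ -(1/32) / ε^2 := by
        rw [neg_div, neg_le_neg_iff]
        rw [div_le_div_iff₀ (by positivity) (by norm_num : (0:ℝ) < 2)]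
        nlinarith
      have h2 : Real.exp (-(1/2:ℝ)) ≤ Real.exp (-(1/32) / ε^2) := Real.exp_le_exp.2 h1
      have h3 : Real.exp (-(1/2:ℝ)) = (Real.exp ((1:ℝ)/2))⁻¹ := by
        rw [← Real.exp_neg]
      have h4 : (1:ℝ)/3 < Real.exp (-(1/2:ℝ)) := by
        rw [h3]
        rw [lt_inv_comm₀ (by norm_num) (Real.exp_pos _)]
        simpa using h12
      linarith
    calc volume Bad ≤ volume R := measure_mono hBadR
      _ = 1 * volume R := (one_mul _).symm
      _ ≤ ENNReal.ofReal (3 * Real.exp (-(1/32) / ε^2)) * volume R := by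
          apply mul_le_mul_left
          rw [show (1:ENNReal) = ENNReal.ofReal 1 by simp]
          exact ENNReal.ofReal_le_ofReal hge
end

section
/- Let a ⊆ [0,1) be a finite union of half-open intervals [α, β) with Lebesgue measure |a| > 0, and define ξ_a(x) = |[0,x) ∩ a| / |a| for x ∈ a. Then ξ_a is a bijection from a onto [0,1), and for every Lebesgue measurable set E ⊆ a one has |ξ_a(E)| = |E| / |a|. -/
open MeasureTheory Filter Set
open scoped ENNReal Pointwise

/-- The map `ξ_a(x) = |[0,x) ∩ a| / |a|`. -/
noncomputable def xiMap (a : Set ℝ) (x : ℝ) : ℝ :=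
  (volume (Set.Ico 0 x ∩ a)).toReal / (volume a).toReal

namespace XiAux

/-- The unnormalized map `F_a(x) = |[0,x) ∩ a|`. -/
noncomputable def F (a : Set ℝ) (x : ℝ) : ℝ := (volume (Set.Ico 0 x ∩ a)).toReal

variable {a : Set ℝ}

lemma inter_fin (x y : ℝ) : volume (Set.Ico x y ∩ a) ≠ ⊤ := by
  refine ne_top_of_le_ne_top ?_ (measure_mono inter_subset_left)
  simp [Real.volume_Ico]

lemma F_add (ha : MeasurableSet a) (hsub : a ⊆ Set.Ico (0:ℝ) 1) {x y : ℝ} (h : x ≤ y) :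
    F a y = F a x + (volume (Set.Ico x y ∩ a)).toReal := by
  have hdecomp : Set.Ico 0 y ∩ a = (Set.Ico 0 x ∩ a) ∪ (Set.Ico x y ∩ a) := by
    ext z
    simp only [Set.mem_inter_iff, Set.mem_Ico, Set.mem_union]
    constructor
    · rintro ⟨⟨hz0, hzy⟩, hza⟩
      rcases lt_or_ge z x with hzx | hzx
      · exact Or.inl ⟨⟨hz0, hzx⟩, hza⟩
      · exact Or.inr ⟨⟨hzx, hzy⟩, hza⟩
    · rintro (⟨⟨hz0, hzx⟩, hza⟩ | ⟨⟨hzx, hzy⟩, hza⟩)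
      · exact ⟨⟨hz0, lt_of_lt_of_le hzx h⟩, hza⟩
      · exact ⟨⟨(hsub hza).1, hzy⟩, hza⟩
  have hdisj : Disjoint (Set.Ico 0 x ∩ a) (Set.Ico x y ∩ a) := by
    refine Set.disjoint_left.2 ?_
    rintro z ⟨⟨_, hzx⟩, _⟩ ⟨⟨hzx', _⟩, _⟩
    exact absurd hzx' (not_le.2 hzx)
  have hmeas : MeasurableSet (Set.Ico x y ∩ a) := (measurableSet_Ico).inter ha
  have hmu := measure_union (μ := volume) hdisj hmeas
  unfold F
  rw [hdecomp, hmu, ENNReal.toReal_add (inter_fin 0 x) (inter_fin x y)]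

lemma F_mono (ha : MeasurableSet a) (hsub : a ⊆ Set.Ico (0:ℝ) 1) : Monotone (F a) := by
  intro x y h
  rw [F_add ha hsub h]
  have : 0 ≤ (volume (Set.Ico x y ∩ a)).toReal := ENNReal.toReal_nonneg
  linarith

lemma F_cont (ha : MeasurableSet a) (hsub : a ⊆ Set.Ico (0:ℝ) 1) : Continuous (F a) := by
  refine (LipschitzWith.of_dist_le_mul (K := 1) fun x y => ?_).continuous
  wlog h : x ≤ y generalizing x y
  · rw [dist_comm, dist_comm x y]; exact this y x (le_of_not_ge h)
  rw [Real.dist_eq, Real.dist_eq, abs_of_nonpos (by linarith [F_mono ha hsub h] : F a x - F a y ≤ 0),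
    abs_of_nonpos (by linarith : x - y ≤ 0)]
  have h1 : F a y = F a x + (volume (Set.Ico x y ∩ a)).toReal := F_add ha hsub h
  have h2 : (volume (Set.Ico x y ∩ a)).toReal ≤ (volume (Set.Ico x y)).toReal := by
    refine ENNReal.toReal_mono (by simp [Real.volume_Ico]) (measure_mono inter_subset_left)
  rw [Real.volume_Ico, ENNReal.toReal_ofReal (by linarith)] at h2
  push_cast
  linarith

lemma F_strict {n : ℕ} {α β : Fin n → ℝ} (ha : MeasurableSet a)
    (hsub : a ⊆ Set.Ico (0:ℝ) 1) (hrep : a = ⋃ i, Set.Ico (α i) (β i))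
    {x y : ℝ} (hx : x ∈ a) (hxy : x < y) : F a x < F a y := by
  obtain ⟨i, hi⟩ : ∃ i, x ∈ Set.Ico (α i) (β i) := by
    rw [hrep] at hx; exact Set.mem_iUnion.1 hx
  have hxb : x < min y (β i) := lt_min hxy hi.2
  have hsub2 : Set.Ico x (min y (β i)) ⊆ Set.Ico x y ∩ a := by
    intro z hz
    refine ⟨⟨hz.1, lt_of_lt_of_le hz.2 (min_le_left _ _)⟩, ?_⟩
    rw [hrep]
    exact Set.mem_iUnion.2 ⟨i, ⟨le_trans hi.1 hz.1, lt_of_lt_of_le hz.2 (min_le_right _ _)⟩⟩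
  have hpos : 0 < volume (Set.Ico x y ∩ a) :=
    lt_of_lt_of_le (by rw [Real.volume_Ico]; exact ENNReal.ofReal_pos.2 (by linarith))
      (measure_mono hsub2)
  have : 0 < (volume (Set.Ico x y ∩ a)).toReal :=
    ENNReal.toReal_pos hpos.ne' (inter_fin x y)
  rw [F_add ha hsub hxy.le]
  linarith

lemma F_zero : F a 0 = 0 := by simp [F]

lemma F_one (hsub : a ⊆ Set.Ico (0:ℝ) 1) : F a 1 = (volume a).toReal := by
  unfold F
  rw [Set.inter_eq_self_of_subset_right hsub]

end XiAux

open XiAux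

/-- For a simple set `a ⊆ [0,1)` (a finite union of half-open intervals) of positive
measure, `ξ_a(x) = |[0,x) ∩ a| / |a|` is a bijection from `a` onto `[0,1)` and for every
Lebesgue measurable `E ⊆ a` one has `|ξ_a(E)| = |E| / |a|`. -/
theorem xiMap_bijOn_and_measure (a : Set ℝ)
    (hsimple : ∃ n : ℕ, ∃ α β : Fin n → ℝ, a = ⋃ i, Set.Ico (α i) (β i))
    (hsub : a ⊆ Set.Ico (0:ℝ) 1) (hpos : 0 < volume a) :
    Set.BijOn (xiMap a) a (Set.Ico (0:ℝ) 1) ∧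
    ∀ E : Set ℝ, E ⊆ a → NullMeasurableSet E volume →
      volume (xiMap a '' E) = volume E / volume a := by
  classical
  obtain ⟨n, α, β, hrep⟩ := hsimple
  have ha : MeasurableSet a := by
    rw [hrep]; exact MeasurableSet.iUnion fun i => measurableSet_Ico
  have hfin : volume a ≠ ⊤ := by
    refine ne_top_of_le_ne_top ?_ (measure_mono hsub)
    simp [Real.volume_Ico]
  set c : ℝ := (volume a).toReal with hc_def
  have hc : 0 < c := ENNReal.toReal_pos hpos.ne' hfin
  have hxi : ∀ x, xiMap a x = F a x / c := fun x => rfl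
  -- injectivity
  have hinj : Set.InjOn (F a) a := by
    intro x hx y hy hxy
    by_contra hne
    rcases lt_or_gt_of_ne hne with h | h
    · exact absurd hxy (ne_of_lt (F_strict ha hsub hrep hx h))
    · exact absurd hxy.symm (ne_of_lt (F_strict ha hsub hrep hy h))
  have hinj' : Set.InjOn (xiMap a) a := by
    intro x hx y hy hxy
    apply hinj hx hy
    rw [hxi, hxi] at hxy
    field_simp at hxy
    exact hxy
  -- maps to
  have hmaps : Set.MapsTo (xiMap a) a (Set.Ico (0:ℝ) 1) := by
    intro x hx
    rw [hxi]
    constructor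
    · exact div_nonneg ENNReal.toReal_nonneg hc.le
    · rw [div_lt_one hc, hc_def, ← F_one hsub]
      exact F_strict ha hsub hrep hx (hsub hx).2
  -- surjectivity
  have hsurj : Set.SurjOn (xiMap a) a (Set.Ico (0:ℝ) 1) := by
    intro t ht
    set s : ℝ := t * c with hs_def
    have hs0 : 0 ≤ s := mul_nonneg ht.1 hc.le
    have hsc : s < c := by
      have := ht.2
      calc s = t * c := rfl
        _ < 1 * c := by exact mul_lt_mul_of_pos_right this hc
        _ = c := one_mul c
    set S : Set ℝ := {x | x ≤ 1 ∧ F a x ≤ s} with hS_def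
    have hS0 : (0:ℝ) ∈ S := ⟨zero_le_one, by rw [F_zero]; exact hs0⟩
    have hSbdd : BddAbove S := ⟨1, fun x hx => hx.1⟩
    set x₁ : ℝ := sSup S with hx1_def
    have hx1le1 : x₁ ≤ 1 := csSup_le ⟨0, hS0⟩ fun x hx => hx.1
    have hx1ge0 : (0:ℝ) ≤ x₁ := le_csSup hSbdd hS0
    have hFle : F a x₁ ≤ s := by
      have hclosed : IsClosed {x : ℝ | F a x ≤ s} :=
        isClosed_le (F_cont ha hsub) continuous_const
      have : x₁ ∈ closure S := csSup_mem_closure ⟨0, hS0⟩ hSbdd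
      have hsubS : S ⊆ {x : ℝ | F a x ≤ s} := fun x hx => hx.2
      exact hclosed.closure_subset ((closure_mono hsubS) this)
    have hgt : ∀ y, x₁ < y → s < F a y := by
      intro y hy
      rcases le_or_gt y 1 with h1 | h1
      · by_contra hcon
        push_neg at hcon
        exact absurd (le_csSup hSbdd ⟨h1, hcon⟩) (not_le.2 hy)
      · calc s < c := hsc
          _ = F a 1 := (F_one hsub).symm
          _ ≤ F a y := F_mono ha hsub h1.le
    have hFge : s ≤ F a x₁ := by
      have htend : Tendsto (F a) (nhdsWithin x₁ (Set.Ioi x₁)) (nhds (F a x₁)) :=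
        ((F_cont ha hsub).continuousAt).continuousWithinAt.tendsto
      refine ge_of_tendsto htend ?_
      filter_upwards [self_mem_nhdsWithin] with y hy
      exact (hgt y hy).le
    have hFeq : F a x₁ = s := le_antisymm hFle hFge
    -- x₁ ∈ a
    have hx1a : x₁ ∈ a := by
      by_contra hx1a
      set T : Finset ℝ :=
        insert (1:ℝ) ((Finset.univ.filter fun i => x₁ < α i).image fun i => α i - x₁) with hT_def
      have hTne : T.Nonempty := ⟨1, Finset.mem_insert_self _ _⟩
      set ε : ℝ := T.min' hTne with hε_def
      have hεpos : 0 < ε := by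
        have hmem : ε ∈ T := T.min'_mem hTne
        rw [hT_def] at hmem
        rcases Finset.mem_insert.1 hmem with h | h
        · rw [h]; exact one_pos
        · obtain ⟨i, hi, hival⟩ := Finset.mem_image.1 h
          have := (Finset.mem_filter.1 hi).2
          rw [← hival]; linarith
      have hempty : Set.Ico x₁ (x₁ + ε) ∩ a = ∅ := by
        rw [Set.eq_empty_iff_forall_notMem]
        rintro z ⟨⟨hz1, hz2⟩, hza⟩
        rw [hrep] at hza
        obtain ⟨i, hzi⟩ := Set.mem_iUnion.1 hza
        rcases le_or_gt (α i) x₁ with hαx | hαx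
        · apply hx1a
          rw [hrep]
          exact Set.mem_iUnion.2 ⟨i, ⟨hαx, lt_of_le_of_lt hz1 hzi.2⟩⟩
        · have hiT : α i - x₁ ∈ T := by
            rw [hT_def]
            exact Finset.mem_insert_of_mem (Finset.mem_image.2
              ⟨i, Finset.mem_filter.2 ⟨Finset.mem_univ _, hαx⟩, rfl⟩)
          have hεle : ε ≤ α i - x₁ := T.min'_le _ hiT
          have : z < α i := by linarith
          exact absurd hzi.1 (not_le.2 this)
      have hFsame : F a (x₁ + ε) = F a x₁ := by
        rw [F_add ha hsub (by linarith : x₁ ≤ x₁ + ε), hempty]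
        simp
      have := hgt (x₁ + ε) (by linarith)
      rw [hFsame, hFeq] at this
      exact absurd this (lt_irrefl s)
    refine ⟨x₁, hx1a, ?_⟩
    rw [hxi, hFeq, hs_def, mul_div_assoc, div_self hc.ne', mul_one]
  refine ⟨⟨hmaps, hinj', hsurj⟩, ?_⟩
  -- measure statement
  intro E hEa hEm
  -- decompose E along the intervals, disjointified
  set g : Fin n → Set ℝ := fun i =>
    E ∩ (Set.Ico (α i) (β i) \ ⋃ j, ⋃ (_ : j < i), Set.Ico (α j) (β j)) with hg_def
  have hgE : (⋃ i, g i) = E := by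
    apply Set.Subset.antisymm
    · exact Set.iUnion_subset fun i => Set.inter_subset_left
    · intro x hx
      have hxa : x ∈ a := hEa hx
      rw [hrep] at hxa
      have hne : (Finset.univ.filter fun i => x ∈ Set.Ico (α i) (β i)).Nonempty := by
        obtain ⟨i, hi⟩ := Set.mem_iUnion.1 hxa
        exact ⟨i, Finset.mem_filter.2 ⟨Finset.mem_univ _, hi⟩⟩
      set i₀ := (Finset.univ.filter fun i => x ∈ Set.Ico (α i) (β i)).min' hne with hi0_def
      have hi0mem : x ∈ Set.Ico (α i₀) (β i₀) :=
        (Finset.mem_filter.1 ((Finset.univ.filter fun i => x ∈ Set.Ico (α i) (β i)).min'_mem hne)).2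
      refine Set.mem_iUnion.2 ⟨i₀, hx, hi0mem, ?_⟩
      intro hmem
      obtain ⟨j, hj⟩ := Set.mem_iUnion.1 hmem
      obtain ⟨hji, hxj⟩ := Set.mem_iUnion.1 hj
      have : i₀ ≤ j := Finset.min'_le (Finset.univ.filter fun i => x ∈ Set.Ico (α i) (β i)) j
        (Finset.mem_filter.2 ⟨Finset.mem_univ _, hxj⟩)
      exact absurd hji (not_lt.2 this)
  have hgsub : ∀ i, g i ⊆ a := by
    intro i x hx
    rw [hrep]
    exact Set.mem_iUnion.2 ⟨i, hx.2.1⟩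
  have hgdisj : Pairwise (Function.onFun Disjoint g) := by
    have key : ∀ i j : Fin n, i < j → Disjoint (g i) (g j) := by
      intro i j hij
      rw [Set.disjoint_left]
      rintro x ⟨_, hxi, _⟩ ⟨_, _, hxnot⟩
      exact hxnot (Set.mem_iUnion.2 ⟨i, Set.mem_iUnion.2 ⟨hij, hxi⟩⟩)
    intro i j hij
    rcases lt_or_gt_of_ne hij with h | h
    · exact key i j h
    · exact (key j i h).symm
  have hgm : ∀ i, NullMeasurableSet (g i) volume := by
    intro i
    refine hEm.inter (MeasurableSet.nullMeasurableSet ?_)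
    exact measurableSet_Ico.diff
      (MeasurableSet.iUnion fun j => MeasurableSet.iUnion fun _ => measurableSet_Ico)
  -- on each interval, F is a translation
  set d : Fin n → ℝ := fun i => F a (α i) - α i with hd_def
  have hFtrans : ∀ i, ∀ x ∈ Set.Ico (α i) (β i), F a x = x + d i := by
    intro i x hx
    have h1 : F a x = F a (α i) + (volume (Set.Ico (α i) x ∩ a)).toReal :=
      F_add ha hsub hx.1
    have h2 : Set.Ico (α i) x ∩ a = Set.Ico (α i) x := by
      refine Set.inter_eq_self_of_subset_left ?_
      intro z hz
      rw [hrep]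
      exact Set.mem_iUnion.2 ⟨i, ⟨hz.1, lt_of_lt_of_le hz.2 hx.2.le⟩⟩
    rw [h2, Real.volume_Ico, ENNReal.toReal_ofReal (by linarith [hx.1])] at h1
    rw [h1, hd_def]; ring
  have hFimg : ∀ i, F a '' g i = (fun x => x + d i) '' g i := by
    intro i
    apply Set.image_congr
    intro x hx
    exact hFtrans i x hx.2.1
  have hvol_img : ∀ i, volume (F a '' g i) = volume (g i) := by
    intro i
    rw [hFimg i]
    rw [Set.image_add_right]
    exact measure_preimage_add_right volume (-(d i)) (g i)
  have himg_nm : ∀ i, NullMeasurableSet (F a '' g i) volume := by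
    intro i
    rw [hFimg i, Set.image_add_right]
    exact (hgm i).preimage (measurePreserving_add_right volume
      (-(d i))).quasiMeasurePreserving
  have himg_disj : Pairwise (Function.onFun Disjoint fun i => F a '' g i) := by
    intro i j hij
    have : F a '' (g i ∩ g j) = F a '' g i ∩ F a '' g j :=
      hinj.image_inter (hgsub i) (hgsub j)
    rw [Function.onFun, Set.disjoint_iff_inter_eq_empty, ← this,
      Set.disjoint_iff_inter_eq_empty.1 (hgdisj hij), Set.image_empty]
  have hvolFE : volume (F a '' E) = volume E := by
    calc volume (F a '' E) = volume (⋃ i, F a '' g i) := by rw [← hgE, Set.image_iUnion]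
      _ = ∑' i, volume (F a '' g i) :=
          measure_iUnion₀ (fun i j hij => (himg_disj hij).aedisjoint) himg_nm
      _ = ∑' i, volume (g i) := tsum_congr hvol_img
      _ = volume (⋃ i, g i) :=
          (measure_iUnion₀ (fun i j hij => (hgdisj hij).aedisjoint) hgm).symm
      _ = volume E := by rw [hgE]
  -- rescale
  have hximg : xiMap a '' E = (c⁻¹ • (F a '' E) : Set ℝ) := by
    rw [← Set.image_smul, ← Set.image_comp]
    apply Set.image_congr
    intro x _
    simp only [Function.comp_apply, smul_eq_mul]
    rw [hxi, div_eq_inv_mul]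
  rw [hximg, Measure.addHaar_smul_of_nonneg volume (inv_nonneg.2 hc.le), hvolFE]
  have hrank : Module.finrank ℝ ℝ = 1 := Module.finrank_self ℝ
  rw [hrank, pow_one, ENNReal.ofReal_inv_of_pos hc, hc_def, ENNReal.ofReal_toReal hfin,
    div_eq_mul_inv, mul_comm]
end

section
/- There exists an absolute constant c > 0 such that for every n ≥ 2 there exist real coefficients a_1, …, a_n, not all zero, and a permutation σ of {1, …, n} with ‖ max_{1 ≤ m ≤ n} | ∑_{k=1}^m a_k χ_{σ(k)} | ‖_{L²(0,1)} ≥ c · √(log n) · (∑_{k=1}^n a_k²)^{1/2}, where {χ_j} is the L²-normalized classical Haar system. -/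
open MeasureTheory Filter Set

namespace NU

def e (j : ℕ) : ℕ := j.factorization 2

def sig (K j : ℕ) : ℕ :=
  if 1 ≤ j ∧ j ≤ 2 ^ K - 1 then 2 ^ (K - 1 - e j) + (j / 2 ^ (e j) + 1) / 2
  else if j = 2 ^ K then 1 else j

def tau (K t : ℕ) : ℕ :=
  if t = 1 then 2 ^ K
  else if t ≤ 2 ^ K then 2 ^ (K - 1 - Nat.log 2 (t - 1)) * (2 * (t - 2 ^ Nat.log 2 (t - 1)) - 1)
  else t

lemma e_pow_mul_odd (a i : ℕ) (hi : 1 ≤ i) : e (2 ^ a * (2 * i - 1)) = a := by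
  unfold e
  have hodd : ¬ (2 ∣ (2 * i - 1)) := by omega
  have hne : (2 * i - 1) ≠ 0 := by omega
  rw [Nat.factorization_mul (by positivity) hne]
  simp [Nat.factorization_pow, Nat.Prime.factorization Nat.prime_two,
    Nat.factorization_eq_zero_of_not_dvd hodd]
lemma phi_mem {K k i : ℕ} (hk : k < K) (hi1 : 1 ≤ i) (hi2 : i ≤ 2 ^ k) :
    1 ≤ 2 ^ (K - 1 - k) * (2 * i - 1) ∧ 2 ^ (K - 1 - k) * (2 * i - 1) ≤ 2 ^ K - 1 := by
  have h2 : 2 ^ (K - 1 - k) * (2 * 2 ^ k) = 2 ^ K := by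
    rw [← pow_succ', ← pow_add]; congr 1; omega
  have h3 : (1:ℕ) ≤ 2 ^ (K - 1 - k) := Nat.one_le_two_pow
  have h4 : (1:ℕ) ≤ 2 ^ k := Nat.one_le_two_pow
  have hmul : 2 ^ (K - 1 - k) * (2 * i - 1) ≤ 2 ^ (K - 1 - k) * (2 * 2 ^ k - 1) :=
    Nat.mul_le_mul_left _ (by omega)
  have hexp : 2 ^ (K - 1 - k) * (2 * 2 ^ k - 1) + 2 ^ (K - 1 - k) = 2 ^ (K - 1 - k) * (2 * 2 ^ k) := by
    have h5 : (2 * 2 ^ k - 1) + 1 = 2 * 2 ^ k := by omega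
    calc 2 ^ (K - 1 - k) * (2 * 2 ^ k - 1) + 2 ^ (K - 1 - k)
        = 2 ^ (K - 1 - k) * ((2 * 2 ^ k - 1) + 1) := by ring
      _ = 2 ^ (K - 1 - k) * (2 * 2 ^ k) := by rw [h5]
  constructor
  · exact Nat.one_le_iff_ne_zero.mpr (Nat.mul_ne_zero (by positivity) (by omega))
  · omega
lemma decomp {K j : ℕ} (h1 : 1 ≤ j) (h2 : j ≤ 2 ^ K - 1) :
    ∃ k i, k < K ∧ 1 ≤ i ∧ i ≤ 2 ^ k ∧ j = 2 ^ (K - 1 - k) * (2 * i - 1) ∧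
      e j = K - 1 - k := by
  have hj0 : j ≠ 0 := by omega
  have hprod : 2 ^ (e j) * (j / 2 ^ (e j)) = j := Nat.ordProj_mul_ordCompl_eq_self j 2
  have hodd : ¬ 2 ∣ (j / 2 ^ (e j)) := Nat.not_dvd_ordCompl Nat.prime_two hj0
  have hle : 2 ^ (e j) ≤ j := Nat.ordProj_le 2 hj0
  have hKpow : j < 2 ^ K := by
    have : (1:ℕ) ≤ 2 ^ K := Nat.one_le_two_pow
    omega
  have heK : e j < K := by
    by_contra h
    push_neg at h
    have : 2 ^ K ≤ 2 ^ (e j) := Nat.pow_le_pow_right (by norm_num) h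
    omega
  have ho1 : 1 ≤ j / 2 ^ (e j) := by
    rcases Nat.eq_zero_or_pos (j / 2 ^ (e j)) with h | h
    · rw [h, Nat.mul_zero] at hprod; omega
    · exact h
  have hsplit : 2 ^ (e j) * (2 * 2 ^ (K - 1 - e j)) = 2 ^ K := by
    rw [← pow_succ', ← pow_add]; congr 1; omega
  have ho : j / 2 ^ (e j) < 2 * 2 ^ (K - 1 - e j) := by
    by_contra h
    push_neg at h
    have := Nat.mul_le_mul_left (2 ^ (e j)) h
    omega
  refine ⟨K - 1 - e j, (j / 2 ^ (e j) + 1) / 2, by omega, by omega, by omega, ?_, by omega⟩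
  have hexpo : K - 1 - (K - 1 - e j) = e j := by omega
  rw [hexpo]
  have h6 : 2 * ((j / 2 ^ (e j) + 1) / 2) - 1 = j / 2 ^ (e j) := by omega
  rw [h6, hprod]
lemma index_decomp {K t : ℕ} (h1 : 2 ≤ t) (h2 : t ≤ 2 ^ K) :
    ∃ k i, k < K ∧ 1 ≤ i ∧ i ≤ 2 ^ k ∧ t = 2 ^ k + i ∧ Nat.log 2 (t - 1) = k := by
  set k := Nat.log 2 (t - 1) with hk
  have ht0 : t - 1 ≠ 0 := by omega
  have hlow : 2 ^ k ≤ t - 1 := Nat.pow_log_le_self 2 ht0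
  have hhigh : t - 1 < 2 ^ (k + 1) := Nat.lt_pow_succ_log_self (by norm_num) (t - 1)
  have hkK : k < K := by
    by_contra h
    push_neg at h
    have : 2 ^ K ≤ 2 ^ k := Nat.pow_le_pow_right (by norm_num) h
    omega
  have h4 : 2 ^ (k+1) = 2 * 2 ^ k := by ring
  exact ⟨k, t - 2 ^ k, hkK, by omega, by omega, by omega, rfl⟩
lemma sig_phi {K k i : ℕ} (hk : k < K) (hi1 : 1 ≤ i) (hi2 : i ≤ 2 ^ k) :
    sig K (2 ^ (K - 1 - k) * (2 * i - 1)) = 2 ^ k + i := by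
  obtain ⟨hm1, hm2⟩ := phi_mem hk hi1 hi2
  rw [sig, if_pos ⟨hm1, hm2⟩, e_pow_mul_odd _ _ hi1]
  have h1 : K - 1 - (K - 1 - k) = k := by omega
  have h2 : 2 ^ (K - 1 - k) * (2 * i - 1) / 2 ^ (K - 1 - k) = 2 * i - 1 :=
    Nat.mul_div_cancel_left _ (by positivity)
  rw [h1, h2]
  congr 1
  omega

lemma pow_succ_le {k K : ℕ} (h : k < K) : 2 ^ k + 2 ^ k ≤ 2 ^ K := by
  have : (2:ℕ) ^ (k+1) ≤ 2 ^ K := Nat.pow_le_pow_right (by norm_num) (by omega)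
  have h2 : (2:ℕ) ^ (k+1) = 2 ^ k + 2 ^ k := by ring
  omega

lemma tau_sig {K n j : ℕ} (hK : 1 ≤ K) (hNn : 2 ^ K ≤ n) (hj : j ∈ Set.Icc 1 n) :
    tau K (sig K j) = j := by
  obtain ⟨hj1, hj2⟩ := hj
  have hone := Nat.one_le_two_pow (n := K)
  rcases lt_trichotomy j (2 ^ K) with h | h | h
  · -- tree part
    obtain ⟨k, i, hk, hi1, hi2, hphi, -⟩ := decomp (K := K) hj1 (by omega)
    rw [hphi, sig_phi hk hi1 hi2]
    have h2 : (2:ℕ) ^ (k+1) = 2 ^ k + 2 ^ k := by ring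
    have hlog : Nat.log 2 (2 ^ k + i - 1) = k :=
      Nat.log_eq_of_pow_le_of_lt_pow (by omega) (by omega)
    have h1 : 2 ^ k + i ≠ 1 := by have := Nat.one_le_two_pow (n := k); omega
    have h2 : 2 ^ k + i ≤ 2 ^ K := pow_succ_le hk |>.trans_eq rfl |> fun hh => by omega
    rw [tau, if_neg h1, if_pos (by have := pow_succ_le hk; omega), hlog]
    congr 1
    omega
  · rw [h, sig, if_neg (by omega), if_pos rfl, tau, if_pos rfl]
  · rw [sig, if_neg (by omega), if_neg (by omega), tau, if_neg (by omega), if_neg (by omega)]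

lemma sig_tau {K n t : ℕ} (hK : 1 ≤ K) (hNn : 2 ^ K ≤ n) (ht : t ∈ Set.Icc 1 n) :
    sig K (tau K t) = t := by
  obtain ⟨ht1, ht2⟩ := ht
  rcases eq_or_lt_of_le ht1 with h1 | h1
  · rw [← h1, tau, if_pos rfl, sig, if_neg (by omega), if_pos rfl]
  · rcases le_or_gt t (2 ^ K) with h2 | h2
    · obtain ⟨k, i, hk, hi1, hi2, hti, hlog⟩ := index_decomp (by omega) h2
      rw [tau, if_neg (by omega), if_pos h2, hlog]
      have h3 : t - 2 ^ k = i := by omega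
      rw [h3, sig_phi hk hi1 hi2, ← hti]
    · rw [tau, if_neg (by omega), if_neg (by omega), sig, if_neg (by omega), if_neg (by omega)]

lemma sig_mapsTo {K n : ℕ} (hK : 1 ≤ K) (hNn : 2 ^ K ≤ n) :
    Set.MapsTo (sig K) (Set.Icc 1 n) (Set.Icc 1 n) := by
  intro j hj
  obtain ⟨hj1, hj2⟩ := hj
  rcases lt_trichotomy j (2 ^ K) with h | h | h
  · obtain ⟨k, i, hk, hi1, hi2, hphi, -⟩ := decomp (K := K) hj1 (by omega)
    rw [hphi, sig_phi hk hi1 hi2]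
    have := pow_succ_le hk
    have := Nat.one_le_two_pow (n := k)
    exact ⟨by omega, by omega⟩
  · rw [h, sig, if_neg (by omega), if_pos rfl]
    have := Nat.one_le_two_pow (n := K)
    exact ⟨le_refl 1, by omega⟩
  · rw [sig, if_neg (by omega), if_neg (by omega)]
    exact ⟨hj1, hj2⟩

lemma tau_mapsTo {K n : ℕ} (hK : 1 ≤ K) (hNn : 2 ^ K ≤ n) :
    Set.MapsTo (tau K) (Set.Icc 1 n) (Set.Icc 1 n) := by
  intro t ht
  obtain ⟨ht1, ht2⟩ := ht
  rcases eq_or_lt_of_le ht1 with h1 | h1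
  · rw [← h1, tau, if_pos rfl]
    exact ⟨Nat.one_le_two_pow, by omega⟩
  · rcases le_or_gt t (2 ^ K) with h2 | h2
    · obtain ⟨k, i, hk, hi1, hi2, hti, hlog⟩ := index_decomp (by omega) h2
      rw [tau, if_neg (by omega), if_pos h2, hlog]
      have h3 : t - 2 ^ k = i := by omega
      rw [h3]
      obtain ⟨hm1, hm2⟩ := phi_mem hk hi1 hi2
      have hN1 : (1:ℕ) ≤ 2 ^ K := Nat.one_le_two_pow
      exact ⟨hm1, by omega⟩
    · rw [tau, if_neg (by omega), if_neg (by omega)]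
      exact ⟨ht1, ht2⟩

lemma sig_bijOn {K n : ℕ} (hK : 1 ≤ K) (hNn : 2 ^ K ≤ n) :
    Set.BijOn (sig K) (Set.Icc 1 n) (Set.Icc 1 n) :=
  Set.InvOn.bijOn ⟨fun j hj => tau_sig hK hNn hj, fun t ht => sig_tau hK hNn ht⟩
    (sig_mapsTo hK hNn) (tau_mapsTo hK hNn)

lemma haarSystem_pow_add {k i : ℕ} (hi1 : 1 ≤ i) (hi2 : i ≤ 2 ^ k) :
    haarSystem (2 ^ k + i) = haarFun k i := by
  have hp : (1:ℕ) ≤ 2 ^ k := Nat.one_le_two_pow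
  obtain ⟨m, hm⟩ : ∃ m, 2 ^ k + i = m + 2 := ⟨2 ^ k + i - 2, by omega⟩
  rw [hm]
  show haarFun (Nat.log 2 (m+1)) ((m + 2) - 2 ^ Nat.log 2 (m+1)) = haarFun k i
  have hlog : Nat.log 2 (m+1) = k := by
    apply Nat.log_eq_of_pow_le_of_lt_pow (by omega)
    have h2 : (2:ℕ) ^ (k+1) = 2 ^ k + 2 ^ k := by ring
    omega
  have h3 : (m + 2) - 2 ^ k = i := by omega
  rw [hlog, h3]

open scoped Classical

noncomputable def coeff (K j : ℕ) : ℝ :=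
  if 1 ≤ j ∧ j ≤ 2 ^ K - 1 then (Real.sqrt (2 ^ (K - 1 - e j)))⁻¹ else 0

def kof (K j : ℕ) : ℕ := K - 1 - e j
def iof (j : ℕ) : ℕ := (j / 2 ^ (e j) + 1) / 2

def pcond (K j : ℕ) (x : ℝ) : Prop :=
  (2 * (iof j : ℝ) - 2) / 2 ^ (kof K j + 1) ≤ x ∧ x < (2 * (iof j : ℝ) - 1) / 2 ^ (kof K j + 1)

def mcond (K j : ℕ) (x : ℝ) : Prop :=
  (2 * (iof j : ℝ) - 1) / 2 ^ (kof K j + 1) ≤ x ∧ x < (2 * (iof j : ℝ)) / 2 ^ (kof K j + 1)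

lemma kof_phi {K k i : ℕ} (hk : k < K) (hi1 : 1 ≤ i) :
    kof K (2 ^ (K - 1 - k) * (2 * i - 1)) = k := by
  unfold kof
  rw [e_pow_mul_odd _ _ hi1]
  omega

lemma iof_phi {K k i : ℕ} (hk : k < K) (hi1 : 1 ≤ i) :
    iof (2 ^ (K - 1 - k) * (2 * i - 1)) = i := by
  unfold iof
  rw [e_pow_mul_odd _ _ hi1, Nat.mul_div_cancel_left _ (by positivity)]
  omega

lemma pow_split {K k : ℕ} (hk : k < K) : (2:ℝ) ^ K = 2 ^ (K - 1 - k) * 2 ^ (k + 1) := by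
  rw [← pow_add]
  congr 1
  omega

lemma phi_cast {K k i : ℕ} (hi1 : 1 ≤ i) :
    ((2 ^ (K - 1 - k) * (2 * i - 1) : ℕ) : ℝ) = 2 ^ (K - 1 - k) * (2 * (i:ℝ) - 1) := by
  rw [Nat.cast_mul, Nat.cast_sub (by omega : 1 ≤ 2 * i)]
  push_cast
  ring

lemma mid_eq {K j : ℕ} (h1 : 1 ≤ j) (h2 : j ≤ 2 ^ K - 1) :
    (2 * (iof j : ℝ) - 1) / 2 ^ (kof K j + 1) = (j : ℝ) / 2 ^ K := by
  obtain ⟨k, i, hk, hi1, hi2, hphi, -⟩ := decomp h1 h2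
  rw [hphi, kof_phi hk hi1, iof_phi hk hi1, phi_cast hi1, pow_split hk]
  have hp1 : (0:ℝ) < 2 ^ (K - 1 - k) := by positivity
  have hp2 : (0:ℝ) < 2 ^ (k + 1) := by positivity
  field_simp

lemma term_eq {K j : ℕ} (h1 : 1 ≤ j) (h2 : j ≤ 2 ^ K - 1) (x : ℝ) :
    coeff K j * haarSystem (sig K j) x =
      if pcond K j x then 1 else if mcond K j x then -1 else 0 := by
  obtain ⟨k, i, hk, hi1, hi2, hphi, -⟩ := decomp h1 h2
  subst hphi
  rw [sig_phi hk hi1 hi2, haarSystem_pow_add hi1 hi2]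
  unfold pcond mcond coeff
  rw [if_pos ⟨h1, h2⟩, kof_phi hk hi1, iof_phi hk hi1, e_pow_mul_odd _ _ hi1]
  have hkk : K - 1 - (K - 1 - k) = k := by omega
  rw [hkk]
  have hs : Real.sqrt (2 ^ k) ≠ 0 := ne_of_gt (Real.sqrt_pos.mpr (by positivity))
  unfold haarFun
  split_ifs <;> field_simp <;> simp

lemma term_zero {K j : ℕ} (h : ¬(1 ≤ j ∧ j ≤ 2 ^ K - 1)) (x : ℝ) :
    coeff K j * haarSystem (sig K j) x = 0 := by
  rw [coeff, if_neg h, zero_mul]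

lemma pm_disj {K j : ℕ} {x : ℝ} (hp : pcond K j x) : ¬ mcond K j x := by
  intro hm
  exact absurd (hm.1.trans_lt hp.2) (lt_irrefl _)

lemma sum_term {K : ℕ} (x : ℝ) (s : Finset ℕ) (hs : ∀ j ∈ s, 1 ≤ j ∧ j ≤ 2 ^ K - 1) :
    ∑ j ∈ s, coeff K j * haarSystem (sig K j) x
      = ((s.filter (fun j => pcond K j x)).card : ℝ)
        - ((s.filter (fun j => mcond K j x)).card : ℝ) := by
  rw [← Finset.sum_boole, ← Finset.sum_boole, ← Finset.sum_sub_distrib]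
  apply Finset.sum_congr rfl
  intro j hj
  rw [term_eq (hs j hj).1 (hs j hj).2]
  by_cases hp : pcond K j x
  · rw [if_pos hp, if_pos hp, if_neg (pm_disj hp)]
    ring
  · rw [if_neg hp, if_neg hp]
    by_cases hm : mcond K j x
    · rw [if_pos hm, if_pos hm]
      ring
    · rw [if_neg hm, if_neg hm]
      ring

lemma card_alive {K : ℕ} {x : ℝ} (hx0 : 0 ≤ x) (hx1 : x < 1) :
    ((Finset.Icc 1 (2 ^ K - 1)).filter (fun j => pcond K j x ∨ mcond K j x)).card = K := by
  have himg : (Finset.Icc 1 (2 ^ K - 1)).filter (fun j => pcond K j x ∨ mcond K j x)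
      = (Finset.range K).image
          (fun k => 2 ^ (K - 1 - k) * (2 * (⌊(2:ℝ) ^ k * x⌋₊ + 1) - 1)) := by
    ext j
    simp only [Finset.mem_filter, Finset.mem_image, Finset.mem_range, Finset.mem_Icc]
    constructor
    · rintro ⟨⟨hj1, hj2⟩, halive⟩
      obtain ⟨k, i, hk, hi1, hi2, hphi, -⟩ := decomp hj1 hj2
      subst hphi
      simp only [pcond, mcond, kof_phi hk hi1, iof_phi hk hi1] at halive
      refine ⟨k, hk, ?_⟩
      have hp2 : (0:ℝ) < 2 ^ (k + 1) := by positivity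
      have hlo : (2 * (i:ℝ) - 2) / 2 ^ (k + 1) ≤ x := by
        rcases halive with h | h
        · exact h.1
        · exact le_trans (by gcongr <;> linarith) h.1
      have hhi : x < (2 * (i:ℝ)) / 2 ^ (k + 1) := by
        rcases halive with h | h
        · exact h.2.trans_le (by gcongr <;> linarith)
        · exact h.2
      have hfloor : ⌊(2:ℝ) ^ k * x⌋₊ = i - 1 := by
        have hpk : (0:ℝ) < 2 ^ k := by positivity
        have h2k : (2:ℝ) ^ (k+1) = 2 * 2 ^ k := by ring
        rw [div_le_iff₀ hp2] at hlo
        rw [lt_div_iff₀ hp2] at hhi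
        have hA : ((i:ℝ) - 1) ≤ 2 ^ k * x := by nlinarith
        have hB : 2 ^ k * x < (i:ℝ) := by nlinarith
        have hio : ((i - 1 : ℕ) : ℝ) = (i:ℝ) - 1 := by
          push_cast [hi1]
          ring
        rw [Nat.floor_eq_iff (by positivity)]
        constructor
        · rw [hio]; exact hA
        · rw [hio]; linarith
      rw [hfloor]
      congr 2
      omega
    · rintro ⟨k, hk, rfl⟩
      have hpk : (0:ℝ) < 2 ^ k := by positivity
      have hp2 : (0:ℝ) < 2 ^ (k + 1) := by positivity
      have h2k : (2:ℝ) ^ (k+1) = 2 * 2 ^ k := by ring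
      set iN := ⌊(2:ℝ) ^ k * x⌋₊ + 1 with hiN
      have hi1 : 1 ≤ iN := by omega
      have hi2 : iN ≤ 2 ^ k := by
        have : ⌊(2:ℝ) ^ k * x⌋₊ < 2 ^ k := by
          rw [Nat.floor_lt (by positivity)]
          push_cast
          nlinarith
        omega
      obtain ⟨hm1, hm2⟩ := phi_mem hk hi1 hi2
      refine ⟨⟨hm1, hm2⟩, ?_⟩
      simp only [pcond, mcond, kof_phi hk hi1, iof_phi hk hi1]
      have hfl : ((iN:ℝ) - 1) ≤ 2 ^ k * x := by
        have := Nat.floor_le (show (0:ℝ) ≤ 2 ^ k * x by positivity)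
        rw [hiN]
        push_cast
        linarith
      have hfh : 2 ^ k * x < (iN:ℝ) := by
        have := Nat.lt_floor_add_one ((2:ℝ) ^ k * x)
        rw [hiN]
        push_cast
        linarith
      have hlo : (2 * (iN:ℝ) - 2) / 2 ^ (k + 1) ≤ x := by
        rw [div_le_iff₀ hp2]
        nlinarith
      have hhi : x < (2 * (iN:ℝ)) / 2 ^ (k + 1) := by
        rw [lt_div_iff₀ hp2]
        nlinarith
      rcases lt_or_ge x ((2 * (iN:ℝ) - 1) / 2 ^ (k + 1)) with h | h
      · exact Or.inl ⟨hlo, h⟩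
      · exact Or.inr ⟨h, hhi⟩
  rw [himg, Finset.card_image_of_injOn, Finset.card_range]
  intro k hk k' hk' heq
  simp only [Finset.coe_range, Set.mem_Iio] at hk hk'
  have h1 : e (2 ^ (K - 1 - k) * (2 * (⌊(2:ℝ) ^ k * x⌋₊ + 1) - 1)) = K - 1 - k :=
    e_pow_mul_odd _ _ (by omega)
  have h2 : e (2 ^ (K - 1 - k') * (2 * (⌊(2:ℝ) ^ k' * x⌋₊ + 1) - 1)) = K - 1 - k' :=
    e_pow_mul_odd _ _ (by omega)
  dsimp only at heq
  rw [heq, h2] at h1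
  omega

noncomputable def Lcard (K : ℕ) (x : ℝ) : ℕ :=
  ((Finset.Icc 1 (2 ^ K - 1)).filter (fun j => mcond K j x)).card

lemma mcond_le_floor {K j : ℕ} {x : ℝ} (h1 : 1 ≤ j) (h2 : j ≤ 2 ^ K - 1)
    (hm : mcond K j x) : j ≤ ⌊(2:ℝ) ^ K * x⌋₊ := by
  have hmid := mid_eq (K := K) h1 h2
  have hx : (j:ℝ) / 2 ^ K ≤ x := hmid ▸ hm.1
  apply Nat.le_floor
  rw [div_le_iff₀ (by positivity : (0:ℝ) < 2 ^ K)] at hx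
  linarith

lemma floor_le_pred {K : ℕ} {x : ℝ} (hx0 : 0 ≤ x) (hx1 : x < 1) :
    ⌊(2:ℝ) ^ K * x⌋₊ ≤ 2 ^ K - 1 := by
  have h : ⌊(2:ℝ) ^ K * x⌋₊ < 2 ^ K := by
    rw [Nat.floor_lt (by positivity)]
    push_cast
    nlinarith [pow_pos (show (0:ℝ) < 2 by norm_num) K]
  omega

lemma prefix_sum {K : ℕ} {x : ℝ} (hx0 : 0 ≤ x) (hx1 : x < 1) :
    ∑ j ∈ Finset.Icc 1 ⌊(2:ℝ) ^ K * x⌋₊, coeff K j * haarSystem (sig K j) x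
      = -(Lcard K x : ℝ) := by
  set m' := ⌊(2:ℝ) ^ K * x⌋₊ with hm'
  have hmN : m' ≤ 2 ^ K - 1 := floor_le_pred hx0 hx1
  have hsub : ∀ j ∈ Finset.Icc 1 m', 1 ≤ j ∧ j ≤ 2 ^ K - 1 := by
    intro j hj
    rw [Finset.mem_Icc] at hj
    omega
  rw [sum_term x _ hsub]
  have hpe : (Finset.Icc 1 m').filter (fun j => pcond K j x) = ∅ := by
    rw [Finset.filter_eq_empty_iff]
    intro j hj hp
    rw [Finset.mem_Icc] at hj
    have hmid := mid_eq (K := K) hj.1 (by omega)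
    have hx : x < (j:ℝ) / 2 ^ K := hmid ▸ hp.2
    rw [lt_div_iff₀ (by positivity : (0:ℝ) < 2 ^ K)] at hx
    have hjf : (j:ℝ) ≤ 2 ^ K * x := by
      have h1 : ((m':ℕ):ℝ) ≤ 2 ^ K * x := by
        rw [hm']
        exact Nat.floor_le (by positivity)
      have h2 : (j:ℝ) ≤ (m':ℝ) := by exact_mod_cast hj.2
      linarith
    linarith
  have hme : (Finset.Icc 1 m').filter (fun j => mcond K j x)
      = (Finset.Icc 1 (2 ^ K - 1)).filter (fun j => mcond K j x) := by
    ext j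
    simp only [Finset.mem_filter, Finset.mem_Icc]
    constructor
    · rintro ⟨⟨a, b⟩, hm⟩
      exact ⟨⟨a, by omega⟩, hm⟩
    · rintro ⟨⟨a, b⟩, hm⟩
      exact ⟨⟨a, mcond_le_floor a b hm⟩, hm⟩
  rw [hpe, hme]
  simp [Lcard]

lemma pm_split {K : ℕ} {x : ℝ} (hx0 : 0 ≤ x) (hx1 : x < 1) :
    ((Finset.Icc 1 (2 ^ K - 1)).filter (fun j => pcond K j x)).card + Lcard K x = K := by
  have hsplit := card_alive (K := K) hx0 hx1
  rw [Finset.filter_or] at hsplit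
  have hdisj : Disjoint ((Finset.Icc 1 (2 ^ K - 1)).filter (fun j => pcond K j x))
      ((Finset.Icc 1 (2 ^ K - 1)).filter (fun j => mcond K j x)) := by
    rw [Finset.disjoint_left]
    intro j hj hj'
    exact pm_disj (Finset.mem_filter.mp hj).2 (Finset.mem_filter.mp hj').2
  have hunion := Finset.card_union_of_disjoint hdisj
  rw [hunion] at hsplit
  rw [Lcard]
  omega

lemma full_sum {K n : ℕ} (hn : 2 ^ K ≤ n) {x : ℝ} (hx0 : 0 ≤ x) (hx1 : x < 1) :
    ∑ j ∈ Finset.Icc 1 n, coeff K j * haarSystem (sig K j) x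
      = (K : ℝ) - 2 * (Lcard K x : ℝ) := by
  have hone : (1:ℕ) ≤ 2 ^ K := Nat.one_le_two_pow
  rw [← Finset.sum_subset (Finset.Icc_subset_Icc_right (by omega) :
      Finset.Icc 1 (2 ^ K - 1) ⊆ Finset.Icc 1 n)]
  · rw [sum_term x _ (fun j hj => by rw [Finset.mem_Icc] at hj; omega)]
    have hps := pm_split (K := K) hx0 hx1
    have hcast : (((Finset.Icc 1 (2 ^ K - 1)).filter (fun j => pcond K j x)).card : ℝ)
        + (Lcard K x : ℝ) = (K : ℝ) := by exact_mod_cast hps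
    simp only [Lcard] at hcast ⊢
    linarith [hcast]
  · intro j hj hnj
    apply term_zero
    rw [Finset.mem_Icc] at hj
    intro hcon
    exact hnj (Finset.mem_Icc.mpr ⟨hcon.1, hcon.2⟩)

lemma pointwise {K n : ℕ} (hK : 1 ≤ K) (hn : 2 ^ K ≤ n) {x : ℝ}
    (hx0 : 0 ≤ x) (hx1 : x < 1) :
    (K : ℝ) / 3 ≤
      ⨆ m : Fin n, |∑ k ∈ Finset.Icc 1 (m.1 + 1), coeff K k * haarSystem (sig K k) x| := by
  have hone : (1:ℕ) ≤ 2 ^ K := Nat.one_le_two_pow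
  have hn1 : 1 ≤ n := le_trans hone hn
  have hbdd : BddAbove (Set.range fun m : Fin n =>
      |∑ k ∈ Finset.Icc 1 (m.1 + 1), coeff K k * haarSystem (sig K k) x|) :=
    (Set.finite_range _).bddAbove
  rcases le_or_gt K (3 * Lcard K x) with h | h
  · -- prefix option
    have hL1 : 1 ≤ Lcard K x := by omega
    obtain ⟨j0, hj0⟩ := Finset.card_pos.mp (show 0 < Lcard K x from hL1)
    have hj0' := Finset.mem_filter.mp hj0
    have hj0m := Finset.mem_Icc.mp hj0'.1
    have hm1 : 1 ≤ ⌊(2:ℝ) ^ K * x⌋₊ :=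
      le_trans hj0m.1 (mcond_le_floor hj0m.1 hj0m.2 hj0'.2)
    have hmN : ⌊(2:ℝ) ^ K * x⌋₊ ≤ 2 ^ K - 1 := floor_le_pred hx0 hx1
    refine le_trans ?_ (le_ciSup hbdd ⟨⌊(2:ℝ) ^ K * x⌋₊ - 1, by omega⟩)
    have hidx : ⌊(2:ℝ) ^ K * x⌋₊ - 1 + 1 = ⌊(2:ℝ) ^ K * x⌋₊ := by omega
    simp only [hidx]
    rw [prefix_sum hx0 hx1, abs_neg, abs_of_nonneg (by positivity)]
    have hcast : (K:ℝ) ≤ 3 * (Lcard K x : ℝ) := by exact_mod_cast h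
    linarith
  · refine le_trans ?_ (le_ciSup hbdd ⟨n - 1, by omega⟩)
    have hidx : n - 1 + 1 = n := by omega
    simp only [hidx]
    rw [full_sum hn hx0 hx1]
    have hcast : 3 * (Lcard K x : ℝ) + 1 ≤ (K:ℝ) := by exact_mod_cast (by omega : 3 * Lcard K x + 1 ≤ K)
    rw [abs_of_nonneg (by linarith)]
    linarith

lemma sum_sq {K n : ℕ} (hK : 1 ≤ K) (hn : 2 ^ K ≤ n) :
    ∑ j ∈ Finset.Icc 1 n, (coeff K j) ^ 2 = (K : ℝ) := by
  have hone : (1:ℕ) ≤ 2 ^ K := Nat.one_le_two_pow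
  have hzero : ∀ j ∈ Finset.Icc 1 n, j ∉ Finset.Icc 1 (2 ^ K - 1) → (coeff K j) ^ 2 = 0 := by
    intro j hj hnj
    rw [Finset.mem_Icc] at hj
    have hne : ¬ (1 ≤ j ∧ j ≤ 2 ^ K - 1) := by
      intro hcon
      exact hnj (Finset.mem_Icc.mpr ⟨hcon.1, hcon.2⟩)
    rw [coeff, if_neg hne]
    ring
  rw [← Finset.sum_subset (Finset.Icc_subset_Icc_right (by omega) :
      Finset.Icc 1 (2 ^ K - 1) ⊆ Finset.Icc 1 n) hzero]
  have hbij : ∑ j ∈ Finset.Icc 1 (2 ^ K - 1), (coeff K j) ^ 2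
      = ∑ p ∈ (Finset.range K).sigma (fun k => Finset.Icc 1 (2 ^ k)), ((2:ℝ) ^ p.1)⁻¹ := by
    apply Finset.sum_nbij' (i := fun j => (⟨kof K j, iof j⟩ : (_ : ℕ) × ℕ))
      (j := fun p => 2 ^ (K - 1 - p.1) * (2 * p.2 - 1))
    · intro j hj
      rw [Finset.mem_Icc] at hj
      obtain ⟨k, i, hk, hi1, hi2, hphi, he⟩ := decomp hj.1 hj.2
      have hkof : kof K j = k := by rw [kof, he]; omega
      have hiof : iof j = i := by rw [hphi]; exact iof_phi hk hi1
      rw [Finset.mem_sigma, hkof, hiof]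
      exact ⟨Finset.mem_range.mpr hk, Finset.mem_Icc.mpr ⟨hi1, hi2⟩⟩
    · intro p hp
      rw [Finset.mem_sigma, Finset.mem_range, Finset.mem_Icc] at hp
      obtain ⟨hm1, hm2⟩ := phi_mem hp.1 hp.2.1 hp.2.2
      exact Finset.mem_Icc.mpr ⟨hm1, hm2⟩
    · intro j hj
      rw [Finset.mem_Icc] at hj
      obtain ⟨k, i, hk, hi1, hi2, hphi, he⟩ := decomp hj.1 hj.2
      have hkof : kof K j = k := by rw [kof, he]; omega
      have hiof : iof j = i := by rw [hphi]; exact iof_phi hk hi1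
      simp only [hkof, hiof]
      exact hphi.symm
    · intro p hp
      rw [Finset.mem_sigma, Finset.mem_range, Finset.mem_Icc] at hp
      have h1 : kof K (2 ^ (K - 1 - p.1) * (2 * p.2 - 1)) = p.1 := kof_phi hp.1 hp.2.1
      have h2 : iof (2 ^ (K - 1 - p.1) * (2 * p.2 - 1)) = p.2 := iof_phi hp.1 hp.2.1
      exact Sigma.ext h1 (by rw [h2])
    · intro j hj
      rw [Finset.mem_Icc] at hj
      rw [coeff, if_pos ⟨hj.1, hj.2⟩]
      have hy : (0:ℝ) ≤ 2 ^ (K - 1 - e j) := by positivity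
      rw [inv_pow, Real.sq_sqrt hy]
      rfl
  rw [hbij, Finset.sum_sigma]
  have hinner : ∀ k ∈ Finset.range K, ∑ i ∈ Finset.Icc 1 (2 ^ k), ((2:ℝ) ^ k)⁻¹ = 1 := by
    intro k _
    rw [Finset.sum_const, Nat.card_Icc]
    have h2 : 2 ^ k + 1 - 1 = 2 ^ k := by simp
    rw [h2, nsmul_eq_mul]
    push_cast
    field_simp
  rw [Finset.sum_congr rfl hinner, Finset.sum_const, Finset.card_range, nsmul_eq_mul, mul_one]

end NU

/-- **Nikishin–Ulyanov lower bound.** There is an absolute constant `c > 0` such that for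
every `n ≥ 2` there are coefficients `a_1, …, a_n`, not all zero, and a permutation `σ` of
`{1, …, n}` with `‖max_{1 ≤ m ≤ n} |∑_{k=1}^m a_k χ_{σ(k)}|‖₂ ≥
c √(log₂ n) (∑_{k=1}^n a_k²)^{1/2}`. -/
theorem nikishin_ulyanov_rearranged_haar_lower_bound :
    ∃ c : ℝ, 0 < c ∧ ∀ n : ℕ, 2 ≤ n →
      ∃ a : ℕ → ℝ, ∃ σ : ℕ → ℕ,
        Set.BijOn σ (Set.Icc 1 n) (Set.Icc 1 n) ∧
        (∃ k ∈ Finset.Icc 1 n, a k ≠ 0) ∧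
        ENNReal.ofReal (c * Real.sqrt (Real.logb 2 n) *
            Real.sqrt (∑ k ∈ Finset.Icc 1 n, a k ^ 2)) ≤
          eLpNorm
            (fun x => ⨆ m : Fin n, |∑ k ∈ Finset.Icc 1 (m.1 + 1), a k * haarSystem (σ k) x|)
            2 (volume.restrict (Set.Ico (0:ℝ) 1)) := by
  refine ⟨1/5, by norm_num, fun n hn => ?_⟩
  set K := Nat.log 2 n with hKdef
  have hK1 : 1 ≤ K := (Nat.le_log_iff_pow_le (by norm_num) (by omega)).mpr (by simpa using hn)
  have hNn : 2 ^ K ≤ n := Nat.pow_log_le_self 2 (by omega)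
  have hn2 : n < 2 ^ (K + 1) := Nat.lt_pow_succ_log_self (by norm_num) n
  have honeK : (1:ℕ) ≤ 2 ^ K := Nat.one_le_two_pow
  refine ⟨NU.coeff K, NU.sig K, NU.sig_bijOn hK1 hNn, ?_, ?_⟩
  · refine ⟨1, Finset.mem_Icc.mpr ⟨le_refl 1, by omega⟩, ?_⟩
    rw [NU.coeff, if_pos ⟨le_refl 1, by omega⟩]
    exact inv_ne_zero (ne_of_gt (Real.sqrt_pos.mpr (by positivity)))
  · rw [NU.sum_sq hK1 hNn]
    have hμuniv : (volume.restrict (Set.Ico (0:ℝ) 1)) Set.univ = 1 := by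
      rw [Measure.restrict_apply_univ, Real.volume_Ico]
      norm_num
    have hμ0 : volume.restrict (Set.Ico (0:ℝ) 1) ≠ 0 := by
      intro h
      rw [h] at hμuniv
      simp at hμuniv
    have hconst : eLpNorm (fun _ : ℝ => (K:ℝ)/3) 2 (volume.restrict (Set.Ico (0:ℝ) 1))
        = ENNReal.ofReal ((K:ℝ)/3) := by
      rw [eLpNorm_const _ (by norm_num) hμ0, hμuniv, ENNReal.one_rpow, mul_one,
        Real.enorm_eq_ofReal (by positivity : (0:ℝ) ≤ (K:ℝ)/3)]
    have hmono : eLpNorm (fun _ : ℝ => (K:ℝ)/3) 2 (volume.restrict (Set.Ico (0:ℝ) 1))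
        ≤ eLpNorm
            (fun x => ⨆ m : Fin n,
              |∑ k ∈ Finset.Icc 1 (m.1 + 1), NU.coeff K k * haarSystem (NU.sig K k) x|)
            2 (volume.restrict (Set.Ico (0:ℝ) 1)) := by
      apply eLpNorm_mono_ae
      rw [ae_restrict_iff' measurableSet_Ico]
      apply Filter.Eventually.of_forall
      intro x hx
      have hb := NU.pointwise hK1 hNn hx.1 hx.2
      rw [Real.norm_eq_abs, Real.norm_eq_abs, abs_of_nonneg (by positivity : (0:ℝ) ≤ (K:ℝ)/3),
        abs_of_nonneg (le_trans (by positivity) hb)]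
      exact hb
    refine le_trans ?_ hmono
    rw [hconst]
    apply ENNReal.ofReal_le_ofReal
    -- real inequality: 1/5 * √(logb 2 n) * √K ≤ K/3
    have hKR : (1:ℝ) ≤ (K:ℝ) := by exact_mod_cast hK1
    have hlogb : Real.logb 2 n ≤ (K:ℝ) + 1 := by
      have hcast : (n:ℝ) ≤ 2 ^ (K + 1) := by exact_mod_cast hn2.le
      have h1 : Real.logb 2 n ≤ Real.logb 2 (2 ^ (K + 1)) := by
        apply (Real.logb_le_logb (by norm_num) (by positivity) (by positivity)).mpr hcast
      have h2 : Real.logb 2 ((2:ℝ) ^ (K + 1)) = (K:ℝ) + 1 := by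
        rw [Real.logb_pow, Real.logb_self_eq_one (by norm_num)]
        push_cast
        ring
      linarith
    have hsq : Real.sqrt (Real.logb 2 n) ≤ Real.sqrt 2 * Real.sqrt (K:ℝ) := by
      rw [← Real.sqrt_mul (by norm_num) ((K:ℝ))]
      apply Real.sqrt_le_sqrt
      linarith
    have hs2 : Real.sqrt 2 ≤ 5/3 := by
      rw [show (5/3 : ℝ) = Real.sqrt ((5/3)^2) from (Real.sqrt_sq (by norm_num)).symm]
      apply Real.sqrt_le_sqrt
      norm_num
    have hsK : (0:ℝ) ≤ Real.sqrt (K:ℝ) := Real.sqrt_nonneg _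
    have hKK : Real.sqrt (K:ℝ) * Real.sqrt (K:ℝ) = (K:ℝ) := Real.mul_self_sqrt (by positivity)
    calc 1/5 * Real.sqrt (Real.logb 2 n) * Real.sqrt (K:ℝ)
        ≤ 1/5 * (Real.sqrt 2 * Real.sqrt (K:ℝ)) * Real.sqrt (K:ℝ) := by gcongr
      _ = 1/5 * Real.sqrt 2 * (K:ℝ) := by linear_combination (1/5 * Real.sqrt 2) * hKK
      _ ≤ (K:ℝ)/3 := by nlinarith [hs2, hKR]
end
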